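/- arXiv:2507.13327 — 10 statements merged into one kernel-verified Lean document; each statement's English description precedes it below -/
import Mathlib

section
/- Let q ≥ 2, n ≥ 1 and 1 ≤ k ≤ n, and let D be a subset of (ℤ/qℤ)^n. Then D averages every real-valued eigenvector of the graph Laplacian L of the Hamming graph H(n,q) with eigenvalue qk — that is, for every φ : (ℤ/qℤ)^n → ℝ with Lφ = qk·φ one has q^n · ∑_{x∈D} φ(x) = |D| · ∑_{x∈(ℤ/qℤ)^n} φ(x) — if and only if ∑_{x∈D} χ_y(x) = 0 for every y ∈ (ℤ/qℤ)^n of Hamming weight exactly k. -/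
set_option linter.unusedSectionVars false
set_option linter.unusedVariables false


open Finset Matrix

/-- The Hamming graph `H(n,q)`: vertices are `(ℤ/qℤ)^n`, with an edge between
vertices at Hamming distance exactly `1` (i.e. differing in exactly one coordinate). -/
def hammingGraph (q n : ℕ) [NeZero q] : SimpleGraph (Fin n → ZMod q) where
  Adj x z := hammingDist x z = 1
  symm := ⟨fun x z h => Eq.trans (hammingDist_comm z x) h⟩
  loopless := ⟨fun x h => by simp [hammingDist_self] at h⟩

instance (q n : ℕ) [NeZero q] : DecidableRel (hammingGraph q n).Adj :=
  fun x z => inferInstanceAs (Decidable (hammingDist x z = 1))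



lemma hammingDist_update {q n : ℕ} [NeZero q] (x : Fin n → ZMod q) (i : Fin n)
    {a : ZMod q} (ha : a ≠ x i) : hammingDist x (Function.update x i a) = 1 := by
  have hfil : ({j | x j ≠ Function.update x i a j} : Finset (Fin n)) = {i} := by
    ext j
    simp only [mem_filter, mem_univ, true_and, mem_singleton]
    constructor
    · intro hj
      by_contra hne
      rw [Function.update_of_ne hne] at hj
      exact hj rfl
    · rintro rfl
      rw [Function.update_self]
      exact fun h => ha h.symm
  rw [hammingDist, hfil, Finset.card_singleton]

/-- Parametrization of neighbor sums in the Hamming graph. -/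
lemma sum_neighbors {q n : ℕ} [NeZero q] (x : Fin n → ZMod q) (f : (Fin n → ZMod q) → ℂ) :
    ∑ z ∈ (hammingGraph q n).neighborFinset x, f z
      = ∑ p ∈ (univ : Finset (Fin n × ZMod q)).filter (fun p => p.2 ≠ x p.1),
          f (Function.update x p.1 p.2) := by
  refine (Finset.sum_bij (fun p _ => Function.update x p.1 p.2) ?_ ?_ ?_ ?_).symm
  · intro p hp
    simp only [mem_filter, mem_univ, true_and] at hp
    rw [SimpleGraph.mem_neighborFinset]
    exact hammingDist_update x p.1 hp
  · intro p1 h1 p2 h2 heq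
    simp only [mem_filter, mem_univ, true_and] at h1 h2
    obtain ⟨i1, a1⟩ := p1
    obtain ⟨i2, a2⟩ := p2
    simp only at h1 h2 heq ⊢
    by_cases hii : i1 = i2
    · subst hii
      have := congrFun heq i1
      rw [Function.update_self, Function.update_self] at this
      exact Prod.ext rfl this
    · exfalso
      have := congrFun heq i1
      rw [Function.update_self, Function.update_of_ne hii] at this
      exact h1 this
  · intro z hz
    rw [SimpleGraph.mem_neighborFinset] at hz
    have hz1 : ({j | x j ≠ z j} : Finset (Fin n)).card = 1 := hz
    obtain ⟨i, hi⟩ := Finset.card_eq_one.mp hz1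
    have hix : x i ≠ z i := by
      have : i ∈ ({j | x j ≠ z j} : Finset (Fin n)) := hi ▸ Finset.mem_singleton_self i
      simpa using this
    refine ⟨(i, z i), ?_, ?_⟩
    · simp only [mem_filter, mem_univ, true_and]
      exact fun h => hix h.symm
    · funext j
      show Function.update x i (z i) j = z j
      by_cases hj : j = i
      · subst hj; rw [Function.update_self]
      · rw [Function.update_of_ne hj]
        by_contra hne
        have : j ∈ ({j | x j ≠ z j} : Finset (Fin n)) := by simpa using hne
        rw [hi, Finset.mem_singleton] at this
        exact hj this
  · intro p hp; rfl


section
variable {q : ℕ} [NeZero q] {ω : ℂ} (hω : IsPrimitiveRoot ω q)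
include hω

lemma pow_mod_q (m : ℕ) : ω ^ (m % q) = ω ^ m := by
  conv_rhs => rw [← Nat.mod_add_div m q]
  rw [pow_add, pow_mul, hω.pow_eq_one, one_pow, mul_one]

lemma pow_val_add (a b : ZMod q) : ω ^ (a + b).val = ω ^ a.val * ω ^ b.val := by
  rw [ZMod.val_add, pow_mod_q hω, pow_add]

lemma pow_val_ne_one {a : ZMod q} (ha : a ≠ 0) : ω ^ a.val ≠ 1 := by
  intro h
  rw [hω.pow_eq_one_iff_dvd] at h
  rcases Nat.eq_zero_of_dvd_of_lt h (ZMod.val_lt a) with h0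
  exact ha (by rwa [ZMod.val_eq_zero] at h0)

lemma sum_pow_val_mul {c : ZMod q} (hc : c ≠ 0) :
    ∑ t : ZMod q, ω ^ (c * t).val = 0 := by
  have h1 : ∀ t : ZMod q, ω ^ (c * t).val = (ω ^ c.val) ^ t.val := by
    intro t
    rw [ZMod.val_mul, pow_mod_q hω, pow_mul]
  simp_rw [h1]
  have h2 : ∑ t : ZMod q, (ω ^ c.val) ^ t.val = ∑ j ∈ range q, (ω ^ c.val) ^ j := by
    refine Finset.sum_nbij' (fun t => t.val) (fun j => (j : ZMod q)) ?_ ?_ ?_ ?_ ?_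
    · intro t _; simpa using ZMod.val_lt t
    · intro j _; simp
    · intro t _; simp [ZMod.natCast_val, ZMod.cast_id]
    · intro j hj; simp at hj; simp [ZMod.val_natCast_of_lt hj]
    · intro t _; rfl
  rw [h2, geom_sum_eq (pow_val_ne_one hω hc)]
  have : (ω ^ c.val) ^ q = 1 := by
    rw [← pow_mul, mul_comm, pow_mul, hω.pow_eq_one, one_pow]
  rw [this, sub_self, zero_div]

/-- `ec` of a finite sum is the product of `ec`s. -/
lemma pow_val_sum {ι : Type*} (s : Finset ι) (f : ι → ZMod q) :
    ω ^ (∑ i ∈ s, f i).val = ∏ i ∈ s, ω ^ (f i).val := by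
  induction s using Finset.cons_induction with
  | empty => simp [ZMod.val_zero]
  | cons a s ha ih => rw [Finset.sum_cons, pow_val_add hω, ih, Finset.prod_cons]

variable {n : ℕ}

/-- Vanishing of nontrivial character sums over `(ZMod q)^n`. -/
lemma sum_char_eq_zero {u : Fin n → ZMod q} (hu : u ≠ 0) :
    ∑ x : Fin n → ZMod q, ω ^ (∑ i, u i * x i).val = 0 := by
  obtain ⟨i, hi⟩ := Function.ne_iff.mp hu
  have hi : u i ≠ 0 := hi
  set v : Fin n → ZMod q := fun j => if j = i then 1 else 0 with hv
  set S := ∑ x : Fin n → ZMod q, ω ^ (∑ j, u j * x j).val with hS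
  have shift : S = ∑ x : Fin n → ZMod q, ω ^ (∑ j, u j * (x j + v j)).val := by
    exact (Fintype.sum_equiv (Equiv.addRight v) _ _ (fun x => rfl)).symm
  have key : ∀ x : Fin n → ZMod q,
      ω ^ (∑ j, u j * (x j + v j)).val
        = ω ^ (u i).val * ω ^ (∑ j, u j * x j).val := by
    intro x
    have h1 : ∀ j, u j * (x j + v j)
        = u j * x j + (if j = i then u i else 0) := by
      intro j
      by_cases h : j = i
      · subst h; simp [hv, mul_add]
      · simp [hv, h]
    rw [show (∑ j, u j * (x j + v j)) = (∑ j, u j * x j) + u i by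
      simp_rw [h1]; rw [Finset.sum_add_distrib, Finset.sum_ite_eq' univ i]; simp]
    rw [pow_val_add hω, mul_comm]
  simp_rw [key, ← Finset.mul_sum, ← hS] at shift
  have hz : (1 - ω ^ (u i).val) * S = 0 := by
    rw [sub_mul, one_mul]
    nth_rewrite 1 [shift]
    ring
  rcases mul_eq_zero.mp hz with h | h
  · exact absurd (sub_eq_zero.mp h).symm (pow_val_ne_one hω hi)
  · exact h

/-- Fourier inversion at a point. -/
lemma fourier_inversion (φ : (Fin n → ZMod q) → ℂ) (x : Fin n → ZMod q) :
    ∑ y : Fin n → ZMod q, ω ^ (∑ i, y i * x i).val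
        * (∑ z : Fin n → ZMod q, φ z * ω ^ (∑ i, (-y) i * z i).val)
      = (q : ℂ) ^ n * φ x := by
  have comb : ∀ y z : Fin n → ZMod q,
      ω ^ (∑ i, y i * x i).val * ω ^ (∑ i, (-y) i * z i).val
        = ω ^ (∑ i, (x i - z i) * y i).val := by
    intro y z
    calc ω ^ (∑ i, y i * x i).val * ω ^ (∑ i, (-y) i * z i).val
        = ω ^ ((∑ i, y i * x i) + ∑ i, (-y) i * z i).val := (pow_val_add hω _ _).symm
      _ = ω ^ (∑ i, (x i - z i) * y i).val := by
          have hsum : ((∑ i, y i * x i) + ∑ i, (-y) i * z i) = ∑ i, (x i - z i) * y i := by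
            rw [← Finset.sum_add_distrib]
            refine Finset.sum_congr rfl fun i _ => ?_
            simp only [Pi.neg_apply]
            ring
          rw [hsum]
  simp_rw [Finset.mul_sum]
  rw [Finset.sum_comm]
  have inner : ∀ z : Fin n → ZMod q,
      (∑ y : Fin n → ZMod q, ω ^ (∑ i, y i * x i).val * (φ z * ω ^ (∑ i, (-y) i * z i).val))
        = φ z * (if z = x then (q : ℂ) ^ n else 0) := by
    intro z
    have : ∀ y : Fin n → ZMod q,
        ω ^ (∑ i, y i * x i).val * (φ z * ω ^ (∑ i, (-y) i * z i).val)
          = φ z * ω ^ (∑ i, (x i - z i) * y i).val := by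
      intro y
      rw [mul_left_comm, comb y z]
    simp_rw [this, ← Finset.mul_sum]
    congr 1
    by_cases hzx : z = x
    · subst hzx
      simp only [sub_self, zero_mul, Finset.sum_const_zero, if_pos rfl]
      have : ((0 : ZMod q)).val = 0 := ZMod.val_zero
      rw [this, pow_zero]
      simp [Finset.card_univ, ZMod.card]
    · rw [if_neg hzx]
      refine sum_char_eq_zero hω ?_
      intro h
      apply hzx
      funext i
      have := congrFun h i
      simpa [sub_eq_zero, eq_comm] using this
  simp_rw [inner, mul_ite, mul_zero]
  rw [Finset.sum_ite_eq' univ x fun z => φ z * (q:ℂ)^n]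
  simp [mul_comm]

set_option maxHeartbeats 800000 in
lemma lap_chi (y x : Fin n → ZMod q) :
    ((hammingGraph q n).lapMatrix ℂ *ᵥ fun z => ω ^ (∑ i, y i * z i).val) x
      = ((q * hammingNorm y : ℕ) : ℂ) * ω ^ (∑ i, y i * x i).val := by
  rw [SimpleGraph.lapMatrix_mulVec_apply]
  rw [show ((hammingGraph q n).degree x : ℂ) * ω ^ (∑ i, y i * x i).val
      = ∑ _z ∈ (hammingGraph q n).neighborFinset x, ω ^ (∑ i, y i * x i).val by
    rw [Finset.sum_const, SimpleGraph.degree, nsmul_eq_mul]]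
  rw [← Finset.sum_sub_distrib, sum_neighbors, Finset.sum_filter, Fintype.sum_prod_type]
  have inner : ∀ i : Fin n, (∑ a : ZMod q, if a ≠ x i then
      (ω ^ (∑ j, y j * x j).val - ω ^ (∑ j, y j * Function.update x i a j).val) else 0)
      = (if y i ≠ 0 then (q : ℂ) else 0) * ω ^ (∑ j, y j * x j).val := by
    intro i
    have hupd : ∀ a : ZMod q, ω ^ (∑ j, y j * Function.update x i a j).val
        = ω ^ (∑ j, y j * x j).val * ω ^ (y i * (a - x i)).val := by
      intro a
      have hsum : (∑ j, y j * Function.update x i a j)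
          = (∑ j, y j * x j) + y i * (a - x i) := by
        have h1 : ∀ j, y j * Function.update x i a j
            = y j * x j + (if j = i then y i * (a - x i) else 0) := by
          intro j
          by_cases h : j = i
          · subst h; rw [Function.update_self, if_pos rfl]; ring
          · rw [Function.update_of_ne h, if_neg h, add_zero]
        simp_rw [h1]
        rw [Finset.sum_add_distrib, Finset.sum_ite_eq' univ i]
        simp
      rw [hsum, pow_val_add hω]
    have reindex : (∑ a : ZMod q, if a ≠ x i then
        (ω ^ (∑ j, y j * x j).val - ω ^ (∑ j, y j * Function.update x i a j).val) else 0)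
        = ∑ t : ZMod q, if t ≠ 0 then
            (ω ^ (∑ j, y j * x j).val - ω ^ (∑ j, y j * x j).val * ω ^ (y i * t).val) else 0 := by
      simp_rw [hupd]
      refine Fintype.sum_equiv (Equiv.subRight (x i)) _ _ fun a => ?_
      by_cases ha : a = x i
      · simp [ha]
      · rw [if_pos ha]
        simp only [Equiv.subRight_apply]
        rw [if_pos (sub_ne_zero.mpr ha)]
    rw [reindex]
    by_cases hyi : y i = 0
    · simp [hyi, ZMod.val_zero]
    · have hterm : ∀ t : ZMod q, (if t ≠ 0 then
          (ω ^ (∑ j, y j * x j).val - ω ^ (∑ j, y j * x j).val * ω ^ (y i * t).val) else 0)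
          = ω ^ (∑ j, y j * x j).val - ω ^ (∑ j, y j * x j).val * ω ^ (y i * t).val := by
        intro t
        by_cases ht : t = 0
        · simp [ht, ZMod.val_zero]
        · rw [if_pos ht]
      simp_rw [hterm]
      rw [Finset.sum_sub_distrib, Finset.sum_const, ← Finset.mul_sum,
        sum_pow_val_mul hω hyi, mul_zero, sub_zero, Finset.card_univ, ZMod.card,
        if_pos hyi, nsmul_eq_mul]
  simp_rw [inner]
  rw [← Finset.sum_mul]
  congr 1
  rw [← Finset.sum_filter, Finset.sum_const, hammingNorm, Nat.cast_mul, nsmul_eq_mul, mul_comm]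

end

lemma lapMatrix_entry_cast {V : Type*} [Fintype V] [DecidableEq V] (G : SimpleGraph V)
    [DecidableRel G.Adj] (a b : V) :
    G.lapMatrix ℂ a b = ((G.lapMatrix ℝ a b : ℝ) : ℂ) := by
  simp [SimpleGraph.lapMatrix, SimpleGraph.degMatrix, SimpleGraph.adjMatrix,
    Matrix.sub_apply, Matrix.diagonal, Matrix.of_apply, apply_ite ((↑·) : ℝ → ℂ)]

lemma mulVec_complexify {V : Type*} [Fintype V] [DecidableEq V] (G : SimpleGraph V)
    [DecidableRel G.Adj] (φ : V → ℝ) (a : V) :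
    (G.lapMatrix ℂ *ᵥ fun z => ((φ z : ℝ) : ℂ)) a = (((G.lapMatrix ℝ *ᵥ φ) a : ℝ) : ℂ) := by
  simp only [Matrix.mulVec, dotProduct]
  push_cast
  exact Finset.sum_congr rfl fun b _ => by rw [lapMatrix_entry_cast]

lemma mulVec_re {V : Type*} [Fintype V] [DecidableEq V] (G : SimpleGraph V)
    [DecidableRel G.Adj] (f : V → ℂ) (a : V) :
    (G.lapMatrix ℝ *ᵥ fun z => (f z).re) a = ((G.lapMatrix ℂ *ᵥ f) a).re := by
  simp only [Matrix.mulVec, dotProduct, Complex.re_sum]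
  refine Finset.sum_congr rfl fun b _ => ?_
  rw [lapMatrix_entry_cast, Complex.re_ofReal_mul]

lemma mulVec_im {V : Type*} [Fintype V] [DecidableEq V] (G : SimpleGraph V)
    [DecidableRel G.Adj] (f : V → ℂ) (a : V) :
    (G.lapMatrix ℝ *ᵥ fun z => (f z).im) a = ((G.lapMatrix ℂ *ᵥ f) a).im := by
  simp only [Matrix.mulVec, dotProduct, Complex.im_sum]
  refine Finset.sum_congr rfl fun b _ => ?_
  rw [lapMatrix_entry_cast, Complex.im_ofReal_mul]

lemma hammingNorm_neg' {q n : ℕ} [NeZero q] (y : Fin n → ZMod q) :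
    hammingNorm (-y) = hammingNorm y := by
  simp [hammingNorm, Pi.neg_apply, neg_eq_zero]


/-- A subset `D ⊆ (ℤ/qℤ)^n` averages every real eigenvector of the graph Laplacian of
the Hamming graph `H(n,q)` with eigenvalue `q·k` if and only if
`∑_{x ∈ D} χ_y(x) = 0` for every `y` of Hamming weight exactly `k`, where
`χ_y(x) = ω^{y·x}` for a fixed primitive `q`-th root of unity `ω`. -/
theorem hamming_design_real_eigvecs_iff_chars
    (q n k : ℕ) [NeZero q] (hq : 2 ≤ q) (hn : 1 ≤ n) (hk1 : 1 ≤ k) (hkn : k ≤ n)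
    (ω : ℂ) (hω : IsPrimitiveRoot ω q) (D : Finset (Fin n → ZMod q)) :
    (∀ φ : (Fin n → ZMod q) → ℝ,
        (hammingGraph q n).lapMatrix ℝ *ᵥ φ = (((q * k : ℕ) : ℝ)) • φ →
        (q : ℝ) ^ n * ∑ x ∈ D, φ x = (D.card : ℝ) * ∑ x, φ x) ↔
      (∀ y : Fin n → ZMod q, hammingNorm y = k →
        ∑ x ∈ D, ω ^ (∑ i, y i * x i).val = 0) := by
  classical
  have hqR : ((q : ℝ) ^ n) ≠ 0 := by
    have : (0:ℝ) < q := by exact_mod_cast Nat.lt_of_lt_of_le Nat.zero_lt_two hq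
    positivity
  have hqC : ((q : ℂ) ^ n) ≠ 0 := by
    have : (q : ℂ) ≠ 0 := by
      exact_mod_cast Nat.cast_ne_zero.mpr (by omega : q ≠ 0)
    exact pow_ne_zero _ this
  constructor
  · -- averaging ⟹ character sums vanish
    intro h y hy
    have hy0 : y ≠ 0 := by
      intro h0
      rw [h0, hammingNorm_zero] at hy
      omega
    set χ : (Fin n → ZMod q) → ℂ := fun x => ω ^ (∑ i, y i * x i).val with hχ
    have hlap : ∀ a, ((hammingGraph q n).lapMatrix ℂ *ᵥ χ) a = ((q * k : ℕ) : ℂ) * χ a := by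
      intro a
      rw [hχ]
      rw [lap_chi hω y a, hy]
    have hRe : (hammingGraph q n).lapMatrix ℝ *ᵥ (fun x => (χ x).re)
        = ((q * k : ℕ) : ℝ) • (fun x => (χ x).re) := by
      funext a
      rw [mulVec_re, hlap a, Pi.smul_apply, smul_eq_mul,
        show ((q * k : ℕ) : ℂ) = (((q * k : ℕ) : ℝ) : ℂ) by push_cast; ring,
        Complex.re_ofReal_mul]
    have hIm : (hammingGraph q n).lapMatrix ℝ *ᵥ (fun x => (χ x).im)
        = ((q * k : ℕ) : ℝ) • (fun x => (χ x).im) := by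
      funext a
      rw [mulVec_im, hlap a, Pi.smul_apply, smul_eq_mul,
        show ((q * k : ℕ) : ℂ) = (((q * k : ℕ) : ℝ) : ℂ) by push_cast; ring,
        Complex.im_ofReal_mul]
    have h1 := h _ hRe
    have h2 := h _ hIm
    have hall : ∑ x, χ x = 0 := sum_char_eq_zero hω hy0
    have hallre : ∑ x, (χ x).re = 0 := by rw [← Complex.re_sum, hall, Complex.zero_re]
    have hallim : ∑ x, (χ x).im = 0 := by rw [← Complex.im_sum, hall, Complex.zero_im]
    rw [hallre, mul_zero] at h1
    rw [hallim, mul_zero] at h2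
    have hDre : ∑ x ∈ D, (χ x).re = 0 := by
      exact (mul_eq_zero.mp h1).resolve_left hqR
    have hDim : ∑ x ∈ D, (χ x).im = 0 := by
      exact (mul_eq_zero.mp h2).resolve_left hqR
    have : ∑ x ∈ D, χ x = 0 := by
      apply Complex.ext
      · rw [Complex.re_sum, Complex.zero_re]; exact hDre
      · rw [Complex.im_sum, Complex.zero_im]; exact hDim
    exact this
  · -- character sums vanish ⟹ averaging
    intro h φ hφ
    set φc : (Fin n → ZMod q) → ℂ := fun x => ((φ x : ℝ) : ℂ) with hφc
    have hlapφ : ∀ a, ((hammingGraph q n).lapMatrix ℂ *ᵥ φc) a = ((q * k : ℕ) : ℂ) * φc a := by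
      intro a
      rw [hφc, mulVec_complexify, hφ]
      simp only [Pi.smul_apply, smul_eq_mul]
      push_cast
      ring
    -- total sum of φ is zero
    have htot : ∑ x, φ x = 0 := by
      have hrow : ∀ z, ∑ x, (hammingGraph q n).lapMatrix ℝ x z = 0 := by
        intro z
        have h0 := congrFun ((hammingGraph q n).lapMatrix_mulVec_const_eq_zero (R := ℝ)) z
        simp only [Matrix.mulVec, dotProduct, mul_one, Pi.zero_apply] at h0
        calc ∑ x, (hammingGraph q n).lapMatrix ℝ x z
            = ∑ x, (hammingGraph q n).lapMatrix ℝ z x := by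
              refine Finset.sum_congr rfl fun x _ => ?_
              exact ((hammingGraph q n).isSymm_lapMatrix (R := ℝ)).apply z x
          _ = 0 := h0
      have hsum : ∑ a, ((hammingGraph q n).lapMatrix ℝ *ᵥ φ) a = 0 := by
        simp only [Matrix.mulVec, dotProduct]
        rw [Finset.sum_comm]
        rw [Finset.sum_congr rfl fun z _ => by rw [← Finset.sum_mul, hrow z, zero_mul]]
        exact Finset.sum_const_zero
      rw [hφ] at hsum
      simp only [Pi.smul_apply, smul_eq_mul, ← Finset.mul_sum] at hsum
      have hqk : ((q * k : ℕ) : ℝ) ≠ 0 := by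
        have : q * k ≠ 0 := by positivity
        exact_mod_cast this
      exact (mul_eq_zero.mp hsum).resolve_left hqk
    -- Fourier coefficients at weight ≠ k vanish
    have hhat : ∀ y : Fin n → ZMod q, hammingNorm y ≠ k →
        ∑ z, φc z * ω ^ (∑ i, (-y) i * z i).val = 0 := by
      intro y hyk
      set ψ : (Fin n → ZMod q) → ℂ := fun z => ω ^ (∑ i, (-y) i * z i).val with hψ
      have hlapψ : ∀ a, ((hammingGraph q n).lapMatrix ℂ *ᵥ ψ) a
          = ((q * hammingNorm y : ℕ) : ℂ) * ψ a := by
        intro a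
        rw [hψ]
        rw [lap_chi hω (-y) a, hammingNorm_neg']
      have hsymm : ∑ z, ((hammingGraph q n).lapMatrix ℂ *ᵥ φc) z * ψ z
          = ∑ z, φc z * ((hammingGraph q n).lapMatrix ℂ *ᵥ ψ) z := by
        simp only [Matrix.mulVec, dotProduct, Finset.sum_mul, Finset.mul_sum]
        rw [Finset.sum_comm]
        refine Finset.sum_congr rfl fun a _ => Finset.sum_congr rfl fun b _ => ?_
        rw [((hammingGraph q n).isSymm_lapMatrix (R := ℂ)).apply a b]
        ring
      simp_rw [hlapφ, hlapψ] at hsymm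
      have hfac : (((q * k : ℕ) : ℂ) - ((q * hammingNorm y : ℕ) : ℂ))
          * (∑ z, φc z * ψ z) = 0 := by
        rw [sub_mul, Finset.mul_sum, Finset.mul_sum]
        rw [sub_eq_zero]
        calc ∑ z, ((q * k : ℕ) : ℂ) * (φc z * ψ z)
            = ∑ z, ((q * k : ℕ) : ℂ) * φc z * ψ z := by
              refine Finset.sum_congr rfl fun z _ => by ring
          _ = ∑ z, φc z * (((q * hammingNorm y : ℕ) : ℂ) * ψ z) := hsymm
          _ = ∑ z, ((q * hammingNorm y : ℕ) : ℂ) * (φc z * ψ z) := by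
              refine Finset.sum_congr rfl fun z _ => by ring
      have hne : (((q * k : ℕ) : ℂ) - ((q * hammingNorm y : ℕ) : ℂ)) ≠ 0 := by
        rw [sub_ne_zero]
        intro hcontra
        have : q * k = q * hammingNorm y := by exact_mod_cast hcontra
        have hq0 : q ≠ 0 := by omega
        exact hyk ((Nat.eq_of_mul_eq_mul_left (by omega) this).symm)
      exact (mul_eq_zero.mp hfac).resolve_left hne
    -- sum over D vanishes
    have hD : ∑ x ∈ D, φc x = 0 := by
      have hkey : (q : ℂ) ^ n * ∑ x ∈ D, φc x = 0 := by
        rw [Finset.mul_sum]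
        calc ∑ x ∈ D, (q : ℂ) ^ n * φc x
            = ∑ x ∈ D, ∑ y : Fin n → ZMod q, ω ^ (∑ i, y i * x i).val
                * (∑ z, φc z * ω ^ (∑ i, (-y) i * z i).val) := by
              refine Finset.sum_congr rfl fun x _ => (fourier_inversion hω φc x).symm
          _ = ∑ y : Fin n → ZMod q, (∑ z, φc z * ω ^ (∑ i, (-y) i * z i).val)
                * ∑ x ∈ D, ω ^ (∑ i, y i * x i).val := by
              rw [Finset.sum_comm]
              refine Finset.sum_congr rfl fun y _ => ?_
              rw [Finset.mul_sum]
              refine Finset.sum_congr rfl fun x _ => by ring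
          _ = 0 := by
              refine Finset.sum_eq_zero fun y _ => ?_
              by_cases hyk : hammingNorm y = k
              · rw [h y hyk, mul_zero]
              · rw [hhat y hyk, zero_mul]
      exact (mul_eq_zero.mp hkey).resolve_left hqC
    have hDre : ∑ x ∈ D, φ x = 0 := by
      have := congrArg Complex.re hD
      rw [Complex.re_sum, Complex.zero_re] at this
      simpa [hφc] using this
    rw [htot, hDre, mul_zero, mul_zero]
end

section
/- Let q ≥ 2 and 1 ≤ t ≤ n. If D ⊆ (ℤ/qℤ)^n satisfies ∑_{x∈D} χ_y(x) = 0 for every y ∈ (ℤ/qℤ)^n with 1 ≤ |y| ≤ t, then q^t divides |D|; in particular, if D is nonempty then |D| ≥ q^t. -/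
open Finset Matrix

/-- If `D ⊆ (ℤ/qℤ)^n` is a `Φ_{[t]}`-design of the Hamming graph `H(n,q)`, i.e.
`∑_{x∈D} χ_y(x) = 0` for every `y` with `1 ≤ |y| ≤ t`, then `q^t` divides `|D|`;
in particular if `D` is nonempty then `|D| ≥ q^t`. -/
theorem design_card_dvd
    (q n t : ℕ) [NeZero q] (hq : 2 ≤ q) (ht1 : 1 ≤ t) (htn : t ≤ n)
    (ω : ℂ) (hω : IsPrimitiveRoot ω q) (D : Finset (Fin n → ZMod q))
    (hD : ∀ y : Fin n → ZMod q, 1 ≤ hammingNorm y → hammingNorm y ≤ t →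
        ∑ x ∈ D, ω ^ (∑ i, y i * x i).val = 0) :
    q ^ t ∣ D.card ∧ (D.Nonempty → q ^ t ≤ D.card) := by
  have hωq : ω ^ q = 1 := hω.pow_eq_one
  -- character basic facts
  have chi_mod : ∀ m : ℕ, ω ^ (m % q) = ω ^ m := by
    intro m
    conv_rhs => rw [← Nat.mod_add_div m q]
    rw [pow_add, pow_mul, hωq, one_pow, mul_one]
  have chi_add : ∀ u v : ZMod q, ω ^ (u + v).val = ω ^ u.val * ω ^ v.val := by
    intro u v
    rw [ZMod.val_add, chi_mod, pow_add]
  have chi_sum : ∀ (s : Finset (Fin t)) (f : Fin t → ZMod q),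
      ω ^ (∑ j ∈ s, f j).val = ∏ j ∈ s, ω ^ (f j).val := by
    intro s f
    induction s using Finset.induction with
    | empty => simp
    | insert _ _ h ih => rw [Finset.sum_insert h, Finset.prod_insert h, chi_add, ih]
  -- the basic character orthogonality sum
  have char_sum : ∀ c : ZMod q,
      (∑ u : ZMod q, ω ^ (u * c).val) = if c = 0 then (q : ℂ) else 0 := by
    intro c
    by_cases hc : c = 0
    · simp [hc, Finset.card_univ, ZMod.card]
    · rw [if_neg hc]
      have h1 : ∀ u : ZMod q, ω ^ (u * c).val = (ω ^ c.val) ^ u.val := by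
        intro u
        rw [ZMod.val_mul, chi_mod, pow_mul']
      simp_rw [h1]
      have h2 : (∑ u : ZMod q, (ω ^ c.val) ^ u.val)
          = ∑ k ∈ Finset.range q, (ω ^ c.val) ^ k := by
        refine (Finset.sum_bij (fun (k : ℕ) (hk : k ∈ Finset.range q) => (k : ZMod q))
          (fun k hk => Finset.mem_univ _) ?_ ?_ ?_).symm
        · intro k hk l hl hkl
          have := congrArg ZMod.val hkl
          rwa [ZMod.val_cast_of_lt (Finset.mem_range.mp hk),
            ZMod.val_cast_of_lt (Finset.mem_range.mp hl)] at this
        · intro u _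
          exact ⟨u.val, Finset.mem_range.mpr u.val_lt, ZMod.natCast_rightInverse u⟩
        · intro k hk
          rw [ZMod.val_cast_of_lt (Finset.mem_range.mp hk)]
      rw [h2]
      have hζ : ω ^ c.val ≠ 1 := by
        refine hω.pow_ne_one_of_pos_of_lt ?_ c.val_lt
        exact (Nat.pos_of_ne_zero fun h => hc ((ZMod.val_eq_zero c).mp h)).ne'
      have h3 : (∑ k ∈ Finset.range q, (ω ^ c.val) ^ k) * (ω ^ c.val - 1)
          = (ω ^ c.val) ^ q - 1 := geom_sum_mul _ _
      have h4 : (ω ^ c.val) ^ q = 1 := by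
        rw [← pow_mul, mul_comm, pow_mul, hωq, one_pow]
      rw [h4, sub_self] at h3
      exact (mul_eq_zero.mp h3).resolve_right (sub_ne_zero.mpr hζ)
  -- the embedding of the first t coordinates
  set e : Fin t → Fin n := Fin.castLE htn with he
  -- extension of b to a vector supported in the first t coordinates
  set Y : (Fin t → ZMod q) → (Fin n → ZMod q) :=
    fun b i => if h : (i : ℕ) < t then b ⟨i, h⟩ else 0 with hY
  have hYe : ∀ b j, Y b (e j) = b j := by
    intro b j
    simp only [hY, he, Fin.castLE]
    rw [dif_pos j.isLt]
  have hfilter : (Finset.univ.filter fun i : Fin n => (i : ℕ) < t)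
      = Finset.univ.map (Fin.castLEEmb htn) := by
    ext i
    simp only [Finset.mem_filter, Finset.mem_univ, true_and, Finset.mem_map,
      Fin.coe_castLEEmb]
    constructor
    · intro h
      exact ⟨⟨i, h⟩, rfl⟩
    · rintro ⟨j, rfl⟩
      exact j.isLt
  have hYsum : ∀ (b : Fin t → ZMod q) (x : Fin n → ZMod q),
      ∑ i, Y b i * x i = ∑ j, b j * x (e j) := by
    intro b x
    have h1 : ∑ i, Y b i * x i
        = ∑ i ∈ Finset.univ.filter (fun i : Fin n => (i : ℕ) < t), Y b i * x i := by
      refine (Finset.sum_filter_of_ne ?_).symm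
      intro i _ hne
      by_contra hlt
      apply hne
      simp only [hY]
      rw [dif_neg hlt, zero_mul]
    rw [h1, hfilter, Finset.sum_map]
    refine Finset.sum_congr rfl fun j _ => ?_
    rw [show (Fin.castLEEmb htn) j = e j from rfl, hYe]
  have hYnorm_le : ∀ b : Fin t → ZMod q, hammingNorm (Y b) ≤ t := by
    intro b
    have hsub : (Finset.univ.filter fun i : Fin n => Y b i ≠ 0)
        ⊆ Finset.univ.filter fun i : Fin n => (i : ℕ) < t := by
      intro i hi
      simp only [Finset.mem_filter, Finset.mem_univ, true_and] at hi ⊢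
      by_contra hlt
      apply hi
      simp only [hY]
      rw [dif_neg hlt]
    have := Finset.card_le_card hsub
    rw [hfilter, Finset.card_map, Finset.card_univ, Fintype.card_fin] at this
    exact this
  have hYnorm_ge : ∀ b : Fin t → ZMod q, b ≠ 0 → 1 ≤ hammingNorm (Y b) := by
    intro b hb
    rw [Nat.one_le_iff_ne_zero, hammingNorm_ne_zero_iff]
    intro hY0
    apply hb
    funext j
    have := congrFun hY0 (e j)
    rwa [hYe] at this
  -- the key double counting identity
  have key : ∀ a : Fin n → ZMod q,
      (q : ℂ) ^ t * ((D.filter fun x => ∀ j : Fin t, x (e j) = a (e j)).card : ℂ)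
        = (D.card : ℂ) := by
    intro a
    have hterm : ∀ b : Fin t → ZMod q,
        (∑ x ∈ D, ω ^ ((∑ j, b j * (x (e j) - a (e j))).val))
          = if b = 0 then (D.card : ℂ) else 0 := by
      intro b
      by_cases hb : b = 0
      · simp [hb]
      · rw [if_neg hb]
        have hsplit : ∀ x : Fin n → ZMod q,
            (∑ j, b j * (x (e j) - a (e j)))
              = (∑ j, b j * x (e j)) + (∑ j, b j * (-(a (e j)))) := by
          intro x
          rw [← Finset.sum_add_distrib]
          refine Finset.sum_congr rfl fun j _ => ?_
          ring
        have : (∑ x ∈ D, ω ^ ((∑ j, b j * (x (e j) - a (e j))).val))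
            = (∑ x ∈ D, ω ^ ((∑ j, b j * x (e j)).val))
              * ω ^ ((∑ j, b j * (-(a (e j)))).val) := by
          rw [Finset.sum_mul]
          refine Finset.sum_congr rfl fun x _ => ?_
          rw [hsplit x, chi_add]
        rw [this]
        have hzero : (∑ x ∈ D, ω ^ ((∑ j, b j * x (e j)).val)) = 0 := by
          have := hD (Y b) (hYnorm_ge b hb) (hYnorm_le b)
          simp_rw [hYsum b] at this
          exact this
        rw [hzero, zero_mul]
    have T1 : (∑ b : Fin t → ZMod q, ∑ x ∈ D,
        ω ^ ((∑ j, b j * (x (e j) - a (e j))).val)) = (D.card : ℂ) := by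
      simp_rw [hterm]
      simp
    have T2 : (∑ b : Fin t → ZMod q, ∑ x ∈ D,
        ω ^ ((∑ j, b j * (x (e j) - a (e j))).val))
          = (q : ℂ) ^ t * ((D.filter fun x => ∀ j : Fin t, x (e j) = a (e j)).card : ℂ) := by
      rw [Finset.sum_comm]
      have hx : ∀ x : Fin n → ZMod q,
          (∑ b : Fin t → ZMod q, ω ^ ((∑ j, b j * (x (e j) - a (e j))).val))
            = if (∀ j : Fin t, x (e j) = a (e j)) then (q : ℂ) ^ t else 0 := by
        intro x
        have h1 : (∑ b : Fin t → ZMod q, ω ^ ((∑ j, b j * (x (e j) - a (e j))).val))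
            = ∑ b ∈ Fintype.piFinset (fun _ : Fin t => (Finset.univ : Finset (ZMod q))),
                ∏ j, ω ^ ((b j * (x (e j) - a (e j))).val) := by
          rw [Fintype.piFinset_univ]
          refine Finset.sum_congr rfl fun b _ => ?_
          exact chi_sum Finset.univ fun j => b j * (x (e j) - a (e j))
        rw [h1, Finset.sum_prod_piFinset Finset.univ
          (fun j u => ω ^ ((u * (x (e j) - a (e j))).val))]
        simp_rw [char_sum]
        by_cases hall : ∀ j : Fin t, x (e j) = a (e j)
        · rw [if_pos hall]
          have : ∀ j : Fin t, x (e j) - a (e j) = 0 := fun j => sub_eq_zero.mpr (hall j)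
          simp [this]
        · rw [if_neg hall]
          push_neg at hall
          obtain ⟨j, hj⟩ := hall
          refine Finset.prod_eq_zero (Finset.mem_univ j) ?_
          rw [if_neg (fun h => hj (sub_eq_zero.mp h))]
      simp_rw [hx]
      rw [← Finset.sum_filter, Finset.sum_const, nsmul_eq_mul, mul_comm]
    rw [← T2, T1]
  have hnat : ∀ a : Fin n → ZMod q,
      q ^ t * (D.filter fun x => ∀ j : Fin t, x (e j) = a (e j)).card = D.card := by
    intro a
    have := key a
    exact_mod_cast this
  constructor
  · exact ⟨_, (hnat 0).symm⟩
  · rintro ⟨x0, hx0⟩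
    have hmem : x0 ∈ D.filter fun x => ∀ j : Fin t, x (e j) = x0 (e j) :=
      Finset.mem_filter.mpr ⟨hx0, fun j => rfl⟩
    have hpos : 1 ≤ (D.filter fun x => ∀ j : Fin t, x (e j) = x0 (e j)).card :=
      Finset.card_pos.mpr ⟨x0, hmem⟩
    calc q ^ t = q ^ t * 1 := (mul_one _).symm
      _ ≤ q ^ t * (D.filter fun x => ∀ j : Fin t, x (e j) = x0 (e j)).card :=
          Nat.mul_le_mul_left _ hpos
      _ = D.card := hnat x0
end

section
/- Let q ≥ 2, 1 ≤ t ≤ n, and D ⊆ (ℤ/qℤ)^n. For a t-element set I of coordinates and a ∈ (ℤ/qℤ)^I, let f_{D,I}(a) denote the number of x ∈ D whose restriction to I equals a. Then ∑_{x∈D} χ_y(x) = 0 for every y ∈ (ℤ/qℤ)^n with 1 ≤ |y| ≤ t if and only if for every such I, every nonzero b ∈ (ℤ/qℤ)^I, and every c ∈ ℤ/qℤ for which the hyperplane H = {a ∈ (ℤ/qℤ)^I : ∑_{i∈I} b_i a_i = c} is nonempty, one has q^t · ∑_{a∈H} f_{D,I}(a) = |H| · |D| (i.e., the average of f_{D,I}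 over H equals |D|/q^t). -/
open Finset Matrix

section Aux

variable {q : ℕ} [NeZero q] {ω : ℂ}

private lemma e_val_add (hω : IsPrimitiveRoot ω q) (z w : ZMod q) :
    ω ^ (z + w).val = ω ^ z.val * ω ^ w.val := by
  rw [← pow_add, ZMod.val_add, ← pow_eq_pow_mod _ hω.pow_eq_one]

private lemma e_val_sum (hω : IsPrimitiveRoot ω q) {ι : Type*} (s : Finset ι) (g : ι → ZMod q) :
    ω ^ (∑ i ∈ s, g i).val = ∏ i ∈ s, ω ^ (g i).val := by
  classical
  induction s using Finset.cons_induction with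
  | empty => simp
  | cons i s hi ih => rw [Finset.sum_cons, Finset.prod_cons, e_val_add hω, ih]

/-- Orthogonality: the character sum over `ZMod q` of `k ↦ ω^{(k z).val}`. -/
private lemma sum_e_val (hω : IsPrimitiveRoot ω q) (z : ZMod q) :
    ∑ k : ZMod q, ω ^ (k * z).val = if z = 0 then (q : ℂ) else 0 := by
  have hq1 : ω ^ q = 1 := hω.pow_eq_one
  have key : ∀ k : ZMod q, ω ^ (k * z).val = (ω ^ z.val) ^ k.val := by
    intro k
    rw [ZMod.val_mul, ← pow_eq_pow_mod _ hq1, ← pow_mul, mul_comm]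
  simp_rw [key]
  have hbij : ∑ k : ZMod q, (ω ^ z.val) ^ k.val
      = ∑ j ∈ Finset.range q, (ω ^ z.val) ^ j := by
    refine Finset.sum_nbij' (fun k => k.val) (fun j => (j : ZMod q)) ?_ ?_ ?_ ?_ ?_
    · intro k _; exact Finset.mem_range.2 (ZMod.val_lt k)
    · intro j _; exact Finset.mem_univ _
    · intro k _; exact ZMod.natCast_zmod_val k
    · intro j hj; exact ZMod.val_natCast_of_lt (Finset.mem_range.1 hj)
    · intro k _; rfl
  rw [hbij]
  by_cases hz : z = 0
  · simp [hz]
  · rw [if_neg hz]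
    have hzval : 0 < z.val := ZMod.val_pos.2 hz
    have hne1 : ω ^ z.val ≠ 1 := hω.pow_ne_one_of_pos_of_lt hzval.ne' (ZMod.val_lt z)
    rw [geom_sum_eq hne1, ← pow_mul, mul_comm, pow_mul, hq1, one_pow, sub_self, zero_div]

/-- Full orthogonality over product spaces. -/
private lemma sum_e_dot (hω : IsPrimitiveRoot ω q) {ι : Type*} [Fintype ι] [DecidableEq ι]
    (v : ι → ZMod q) :
    ∑ a : ι → ZMod q, ω ^ (∑ i, v i * a i).val =
      if v = 0 then (q : ℂ) ^ Fintype.card ι else 0 := by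
  have h1 : ∀ a : ι → ZMod q, ω ^ (∑ i, v i * a i).val = ∏ i, ω ^ (v i * a i).val :=
    fun a => e_val_sum hω _ _
  simp_rw [h1]
  have hps := Finset.sum_prod_piFinset (Finset.univ : Finset (ZMod q))
    (fun (i : ι) (j : ZMod q) => ω ^ (v i * j).val)
  rw [Fintype.piFinset_univ] at hps
  rw [hps]
  have hcomm : ∀ (i : ι) (j : ZMod q), v i * j = j * v i := fun i j => mul_comm _ _
  simp_rw [hcomm, sum_e_val hω]
  by_cases hv : v = 0
  · subst hv
    simp [Finset.prod_const, Finset.card_univ]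
  · rw [if_neg hv]
    obtain ⟨i, hi⟩ := Function.ne_iff.1 hv
    have hi' : v i ≠ 0 := by simpa using hi
    exact Finset.prod_eq_zero (Finset.mem_univ i) (if_neg hi')

/-- Summing a function of the restriction fiberwise. -/
private lemma sum_fiber {n : ℕ} (I : Finset (Fin n)) (D : Finset (Fin n → ZMod q))
    (G : (↥I → ZMod q) → ℂ) :
    ∑ a : ↥I → ZMod q, ((D.filter fun x => ∀ i : ↥I, x i.1 = a i).card : ℂ) * G a =
      ∑ x ∈ D, G (fun i => x i.1) := by
  classical
  have hfilt : ∀ a : ↥I → ZMod q, (D.filter fun x => ∀ i : ↥I, x i.1 = a i)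
      = (D.filter fun x => (fun i : ↥I => x i.1) = a) := by
    intro a
    apply Finset.filter_congr
    intro x _
    simp [funext_iff]
  simp_rw [hfilt]
  rw [← Finset.sum_fiberwise' D (fun x => fun i : ↥I => x i.1) G]
  refine Finset.sum_congr rfl fun a _ => ?_
  rw [Finset.sum_const, nsmul_eq_mul]

/-- If `y` vanishes outside `I`, the dot product over `Fin n` localizes to `I`. -/
private lemma dot_restrict {n : ℕ} (I : Finset (Fin n)) (y : Fin n → ZMod q)
    (hy : ∀ j ∉ I, y j = 0) (x : Fin n → ZMod q) :
    ∑ i : ↥I, y i.1 * x i.1 = ∑ j, y j * x j := by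
  classical
  rw [Finset.sum_coe_sort I (fun j => y j * x j)]
  refine Finset.sum_subset (Finset.subset_univ I) ?_
  intro j _ hj
  rw [hy j hj, zero_mul]

end Aux

/-- `D ⊆ (ℤ/qℤ)^n` is a `Φ_{[t]}`-design of the Hamming graph `H(n,q)` (it averages all
characters `χ_y` with `1 ≤ |y| ≤ t`) if and only if for every `t`-element set `I` of
coordinates, the counting function `f_{D,I}` has average `|D|/q^t` over every nonempty
hyperplane `{a ∈ (ℤ/qℤ)^I : b·a = c}` (for nonzero `b`). -/
theorem design_iff_hyperplane_averages
    (q n t : ℕ) [NeZero q] (hq : 2 ≤ q) (ht1 : 1 ≤ t) (htn : t ≤ n)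
    (ω : ℂ) (hω : IsPrimitiveRoot ω q) (D : Finset (Fin n → ZMod q)) :
    (∀ y : Fin n → ZMod q, 1 ≤ hammingNorm y → hammingNorm y ≤ t →
        ∑ x ∈ D, ω ^ (∑ i, y i * x i).val = 0) ↔
      (∀ I : Finset (Fin n), I.card = t →
        ∀ b : ↥I → ZMod q, b ≠ 0 → ∀ c : ZMod q,
          ∀ H : Finset (↥I → ZMod q),
            H = Finset.univ.filter (fun a : ↥I → ZMod q => ∑ i, b i * a i = c) →
            H.Nonempty →
            q ^ t * ∑ a ∈ H, (D.filter fun x => ∀ i : ↥I, x i.1 = a i).card =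
              H.card * D.card) := by
  classical
  have hq0 : (q : ℂ) ≠ 0 := Nat.cast_ne_zero.2 (NeZero.ne q)
  constructor
  · -- forward direction
    intro hdes I hIcard b hb c H hH _
    -- notation
    set f : (↥I → ZMod q) → ℕ := fun a => (D.filter fun x => ∀ i : ↥I, x i.1 = a i).card with hf
    -- key: value of the twisted fiber sums
    have hA : ∀ k : ZMod q,
        ∑ a : ↥I → ZMod q, (f a : ℂ) * ω ^ (∑ i, (k * b i) * a i).val =
          if (fun i => k * b i) = 0 then (D.card : ℂ) else 0 := by
      intro k
      by_cases hkb : (fun i : ↥I => k * b i) = 0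
      · rw [if_pos hkb]
        have : ∀ a : ↥I → ZMod q, (∑ i, (k * b i) * a i) = 0 := by
          intro a
          refine Finset.sum_eq_zero fun i _ => ?_
          rw [show k * b i = 0 from congrFun hkb i, zero_mul]
        simp_rw [this]
        rw [show ((0 : ZMod q)).val = 0 from ZMod.val_zero, pow_zero]
        calc ∑ a : ↥I → ZMod q, (f a : ℂ) * 1 = ∑ _x ∈ D, (1 : ℂ) :=
              sum_fiber I D (fun _ => 1)
          _ = (D.card : ℂ) := by simp
      · rw [if_neg hkb]
        rw [sum_fiber I D (fun a => ω ^ (∑ i, (k * b i) * a i).val)]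
        -- extend k • b to a vector y on Fin n
        set y : Fin n → ZMod q := fun j => if h : j ∈ I then k * b ⟨j, h⟩ else 0 with hy
        have hyI : ∀ j ∉ I, y j = 0 := fun j hj => dif_neg hj
        have hyi : ∀ i : ↥I, y i.1 = k * b i := by
          intro i
          simp only [hy, dif_pos i.2]
        have hdot : ∀ x : Fin n → ZMod q,
            ∑ i : ↥I, (k * b i) * x i.1 = ∑ j, y j * x j := by
          intro x
          rw [← dot_restrict I y hyI x]
          exact Finset.sum_congr rfl fun i _ => by rw [hyi i]
        simp_rw [hdot]
        -- hammingNorm bounds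
        have hsupp : ({j | y j ≠ 0} : Finset (Fin n)) ⊆ I := by
          intro j hj
          by_contra hjI
          exact (Finset.mem_filter.1 hj).2 (hyI j hjI)
        have hle : hammingNorm y ≤ t := by
          rw [← hIcard]
          exact Finset.card_le_card hsupp
        have hge : 1 ≤ hammingNorm y := by
          obtain ⟨i, hi⟩ := Function.ne_iff.1 hkb
          refine Nat.one_le_iff_ne_zero.2 ?_
          rw [← Nat.pos_iff_ne_zero]
          refine Finset.card_pos.2 ⟨i.1, ?_⟩
          simp only [Finset.mem_filter, Finset.mem_univ, true_and]
          rw [hyi i]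
          exact hi
        exact hdes y hge hle
    have hB : ∀ k : ZMod q,
        ∑ a : ↥I → ZMod q, ω ^ (∑ i, (k * b i) * a i).val =
          if (fun i => k * b i) = 0 then (q : ℂ) ^ t else 0 := by
      intro k
      rw [sum_e_dot hω (fun i : ↥I => k * b i)]
      rw [Fintype.card_coe, hIcard]
    -- indicator expansion
    have hind : ∀ (g : (↥I → ZMod q) → ℂ),
        (q : ℂ) * ∑ a ∈ H, g a =
          ∑ k : ZMod q, (∑ a : ↥I → ZMod q,
            ω ^ (∑ i, (k * b i) * a i).val * g a) * ω ^ (k * (-c)).val := by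
      intro g
      have step1 : (q : ℂ) * ∑ a ∈ H, g a =
          ∑ a : ↥I → ZMod q, (if (∑ i, b i * a i) - c = 0 then (q : ℂ) else 0) * g a := by
        rw [hH, Finset.sum_filter, Finset.mul_sum]
        refine Finset.sum_congr rfl fun a _ => ?_
        by_cases hc : ∑ i, b i * a i = c
        · rw [if_pos hc, if_pos (by rw [hc, sub_self])]
        · rw [if_neg hc, if_neg (fun h => hc (sub_eq_zero.1 h)), mul_zero, zero_mul]
      rw [step1]
      have step2 : ∀ a : ↥I → ZMod q,
          (if (∑ i, b i * a i) - c = 0 then (q : ℂ) else 0) =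
            ∑ k : ZMod q, ω ^ (∑ i, (k * b i) * a i).val * ω ^ (k * (-c)).val := by
        intro a
        rw [← sum_e_val hω ((∑ i, b i * a i) - c)]
        refine Finset.sum_congr rfl fun k _ => ?_
        rw [← e_val_add hω]
        congr 1
        have hms : ∑ i : ↥I, (k * b i) * a i = k * ∑ i, b i * a i := by
          rw [Finset.mul_sum]
          exact Finset.sum_congr rfl fun i _ => by ring
        rw [hms]
        ring
      simp_rw [step2]
      calc ∑ x : ↥I → ZMod q,
            (∑ k : ZMod q, ω ^ (∑ i, (k * b i) * x i).val * ω ^ (k * (-c)).val) * g x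
          = ∑ x : ↥I → ZMod q, ∑ k : ZMod q,
              ω ^ (∑ i, (k * b i) * x i).val * g x * ω ^ (k * (-c)).val := by
            refine Finset.sum_congr rfl fun x _ => ?_
            rw [Finset.sum_mul]
            exact Finset.sum_congr rfl fun k _ => by ring
        _ = ∑ k : ZMod q, ∑ x : ↥I → ZMod q,
              ω ^ (∑ i, (k * b i) * x i).val * g x * ω ^ (k * (-c)).val :=
            Finset.sum_comm
        _ = ∑ k : ZMod q, (∑ a : ↥I → ZMod q,
              ω ^ (∑ i, (k * b i) * a i).val * g a) * ω ^ (k * (-c)).val := by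
            refine Finset.sum_congr rfl fun k _ => ?_
            rw [Finset.sum_mul]
    -- put it together
    have key : (q : ℂ) * ((q : ℂ) ^ t * ∑ a ∈ H, (f a : ℂ)) =
        (q : ℂ) * ((H.card : ℂ) * (D.card : ℂ)) := by
      have e1 : (q : ℂ) ^ t * ((q : ℂ) * ∑ a ∈ H, (f a : ℂ)) =
          (D.card : ℂ) * ((q : ℂ) * ∑ a ∈ H, (1 : ℂ)) := by
        rw [hind (fun a => (f a : ℂ)), hind (fun _ => (1 : ℂ))]
        rw [Finset.mul_sum, Finset.mul_sum]
        refine Finset.sum_congr rfl fun k _ => ?_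
        have hA' : (∑ a : ↥I → ZMod q, ω ^ (∑ i, (k * b i) * a i).val * (f a : ℂ))
            = if (fun i : ↥I => k * b i) = 0 then (D.card : ℂ) else 0 := by
          rw [← hA k]
          exact Finset.sum_congr rfl fun a _ => mul_comm _ _
        have hB' : (∑ a : ↥I → ZMod q, ω ^ (∑ i, (k * b i) * a i).val * (1 : ℂ))
            = if (fun i : ↥I => k * b i) = 0 then (q : ℂ) ^ t else 0 := by
          simp_rw [mul_one]
          exact hB k
        rw [hA', hB']
        by_cases hkb : (fun i : ↥I => k * b i) = 0
        · rw [if_pos hkb, if_pos hkb]; ring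
        · rw [if_neg hkb, if_neg hkb]; ring
      have hHcard : ∑ a ∈ H, (1 : ℂ) = (H.card : ℂ) := by
        rw [Finset.sum_const, nsmul_eq_mul, mul_one]
      rw [hHcard] at e1
      calc (q : ℂ) * ((q : ℂ) ^ t * ∑ a ∈ H, (f a : ℂ))
          = (q : ℂ) ^ t * ((q : ℂ) * ∑ a ∈ H, (f a : ℂ)) := by ring
        _ = (D.card : ℂ) * ((q : ℂ) * (H.card : ℂ)) := e1
        _ = (q : ℂ) * ((H.card : ℂ) * (D.card : ℂ)) := by ring
    have key2 : (q : ℂ) ^ t * ∑ a ∈ H, (f a : ℂ) = (H.card : ℂ) * (D.card : ℂ) :=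
      mul_left_cancel₀ hq0 key
    have : ((q ^ t * ∑ a ∈ H, f a : ℕ) : ℂ) = ((H.card * D.card : ℕ) : ℂ) := by
      push_cast
      exact key2
    exact_mod_cast this
  · -- backward direction
    intro havg y hy1 hyt
    -- choose a superset I of the support of y with |I| = t
    have hsupp_card : ({j | y j ≠ 0} : Finset (Fin n)).card = hammingNorm y := rfl
    obtain ⟨I, hsI, hIcard⟩ := Finset.exists_superset_card_eq
      (s := ({j | y j ≠ 0} : Finset (Fin n))) (hsupp_card ▸ hyt)
      (by simpa using htn)
    set b : ↥I → ZMod q := fun i => y i.1 with hb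
    have hyI : ∀ j ∉ I, y j = 0 := by
      intro j hj
      by_contra hyj
      exact hj (hsI (by simpa using hyj))
    have hbne : b ≠ 0 := by
      obtain ⟨j, hj⟩ : ∃ j, y j ≠ 0 := by
        by_contra hall
        push_neg at hall
        have : hammingNorm y = 0 := by
          simp [hammingNorm, hall]
        omega
      have hjI : j ∈ I := hsI (by simpa using hj)
      intro h0
      exact hj (by simpa using congrFun h0 ⟨j, hjI⟩)
    set f : (↥I → ZMod q) → ℕ := fun a => (D.filter fun x => ∀ i : ↥I, x i.1 = a i).card with hf
    -- the averaging hypothesis holds for all c (empty hyperplanes trivially)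
    have hall : ∀ c : ZMod q,
        (q : ℕ) ^ t * ∑ a ∈ (Finset.univ.filter fun a : ↥I → ZMod q => ∑ i, b i * a i = c), f a
          = (Finset.univ.filter fun a : ↥I → ZMod q => ∑ i, b i * a i = c).card * D.card := by
      intro c
      set Hc := Finset.univ.filter fun a : ↥I → ZMod q => ∑ i, b i * a i = c with hHc
      rcases Finset.eq_empty_or_nonempty Hc with he | hne
      · rw [he]; simp
      · exact havg I hIcard b hbne c Hc hHc hne
    -- rewrite the character sum via the fibers
    have hdot : ∀ x : Fin n → ZMod q, ∑ i : ↥I, b i * x i.1 = ∑ j, y j * x j :=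
      fun x => dot_restrict I y hyI x
    have hS : ∑ x ∈ D, ω ^ (∑ i, y i * x i).val =
        ∑ a : ↥I → ZMod q, (f a : ℂ) * ω ^ (∑ i, b i * a i).val := by
      rw [sum_fiber I D (fun a => ω ^ (∑ i, b i * a i).val)]
      refine Finset.sum_congr rfl fun x _ => ?_
      rw [hdot x]
    -- group by hyperplanes
    have hgroup : ∀ (g : (↥I → ZMod q) → ℂ),
        ∑ a : ↥I → ZMod q, g a * ω ^ (∑ i, b i * a i).val =
          ∑ c : ZMod q, (∑ a ∈ (Finset.univ.filter
            fun a : ↥I → ZMod q => ∑ i, b i * a i = c), g a) * ω ^ c.val := by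
      intro g
      rw [← Finset.sum_fiberwise Finset.univ (fun a : ↥I → ZMod q => ∑ i, b i * a i)
        (fun a => g a * ω ^ (∑ i, b i * a i).val)]
      refine Finset.sum_congr rfl fun c _ => ?_
      rw [Finset.sum_mul]
      refine Finset.sum_congr rfl fun a ha => ?_
      rw [(Finset.mem_filter.1 ha).2]
    have main : (q : ℂ) ^ t * ∑ x ∈ D, ω ^ (∑ i, y i * x i).val = 0 := by
      rw [hS, Finset.mul_sum]
      have : ∀ a : ↥I → ZMod q, (q : ℂ) ^ t * ((f a : ℂ) * ω ^ (∑ i, b i * a i).val)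
          = ((q ^ t * f a : ℕ) : ℂ) * ω ^ (∑ i, b i * a i).val := by
        intro a; push_cast; ring
      simp_rw [this]
      rw [hgroup (fun a => ((q ^ t * f a : ℕ) : ℂ))]
      have hc : ∀ c : ZMod q,
          (∑ a ∈ (Finset.univ.filter fun a : ↥I → ZMod q => ∑ i, b i * a i = c),
              ((q ^ t * f a : ℕ) : ℂ)) =
            (D.card : ℂ) * ∑ a ∈ (Finset.univ.filter
              fun a : ↥I → ZMod q => ∑ i, b i * a i = c), (1 : ℂ) := by
        intro c
        have h1 : (∑ a ∈ (Finset.univ.filter fun a : ↥I → ZMod q => ∑ i, b i * a i = c),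
            q ^ t * f a) = (Finset.univ.filter
              fun a : ↥I → ZMod q => ∑ i, b i * a i = c).card * D.card := by
          rw [← Finset.mul_sum]
          exact hall c
        calc (∑ a ∈ (Finset.univ.filter fun a : ↥I → ZMod q => ∑ i, b i * a i = c),
              ((q ^ t * f a : ℕ) : ℂ))
            = (((∑ a ∈ (Finset.univ.filter fun a : ↥I → ZMod q => ∑ i, b i * a i = c),
                q ^ t * f a) : ℕ) : ℂ) := (Nat.cast_sum _ _).symm
          _ = (D.card : ℂ) * ∑ a ∈ (Finset.univ.filter
                fun a : ↥I → ZMod q => ∑ i, b i * a i = c), (1 : ℂ) := by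
              rw [h1, Finset.sum_const, nsmul_eq_mul, mul_one]
              push_cast
              ring
      simp_rw [hc]
      have : ∀ c : ZMod q, (D.card : ℂ) * (∑ a ∈ (Finset.univ.filter
            fun a : ↥I → ZMod q => ∑ i, b i * a i = c), (1 : ℂ)) * ω ^ c.val
          = (D.card : ℂ) * ((∑ a ∈ (Finset.univ.filter
            fun a : ↥I → ZMod q => ∑ i, b i * a i = c), (1 : ℂ)) * ω ^ c.val) := by
        intro c; ring
      simp_rw [this]
      rw [← Finset.mul_sum]
      rw [← hgroup (fun _ => (1 : ℂ))]
      simp_rw [one_mul]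
      rw [sum_e_dot hω b, if_neg hbne, mul_zero]
    have hqt : (q : ℂ) ^ t ≠ 0 := pow_ne_zero _ hq0
    exact (mul_eq_zero.1 main).resolve_left hqt
end

section
/- Let q ≥ 2, t ≥ 1, and f : (ℤ/qℤ)^t → ℝ. Then there exists a constant C ∈ ℝ such that for every nonzero b ∈ (ℤ/qℤ)^t and every c ∈ ℤ/qℤ for which the hyperplane H = {a ∈ (ℤ/qℤ)^t : b·a = c} is nonempty one has ∑_{a∈H} f(a) = C · |H| (i.e., f has average C over every nonempty hyperplane), if and only if f is a constant function. -/
open Finset Matrix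

/-- A function `f : (ℤ/qℤ)^t → ℝ` has the same average `C` over every nonempty
hyperplane `{a : b·a = c}` (for nonzero `b ∈ (ℤ/qℤ)^t` and `c ∈ ℤ/qℤ`) if and only if
`f` is a constant function. -/
theorem constant_hyperplane_average_iff_constant
    (q t : ℕ) [NeZero q] (hq : 2 ≤ q) (ht : 1 ≤ t) (f : (Fin t → ZMod q) → ℝ) :
    (∃ C : ℝ, ∀ b : Fin t → ZMod q, b ≠ 0 → ∀ c : ZMod q,
        ∀ H : Finset (Fin t → ZMod q),
          H = Finset.univ.filter (fun a => ∑ i, b i * a i = c) →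
          H.Nonempty → ∑ a ∈ H, f a = C * H.card) ↔
      (∃ C : ℝ, ∀ a, f a = C) := by
  haveI : Fact (1 < q) := ⟨hq⟩
  classical
  constructor
  · rintro ⟨C, hC⟩
    refine ⟨C, ?_⟩
    -- the complexified, recentred function
    set g : (Fin t → ZMod q) → ℂ := fun a => (f a : ℂ) - (C : ℂ) with hg
    -- fiber sums of `g` vanish for every nonzero `b`
    have key : ∀ b : Fin t → ZMod q, b ≠ 0 → ∀ c : ZMod q,
        ∑ a ∈ univ.filter (fun a => ∑ i, b i * a i = c), g a = 0 := by
      intro b hb c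
      set H := univ.filter (fun a : Fin t → ZMod q => ∑ i, b i * a i = c) with hH
      rcases H.eq_empty_or_nonempty with h | h
      · simp [h]
      · have hsum := hC b hb c H hH h
        have : ∑ a ∈ H, g a = ((∑ a ∈ H, f a : ℝ) : ℂ) - (H.card : ℂ) * C := by
          rw [Finset.sum_sub_distrib]
          push_cast
          simp [mul_comm]
        rw [this, hsum]
        push_cast
        ring
    -- the total sum of `g` vanishes
    have total : ∑ a : Fin t → ZMod q, g a = 0 := by
      set b₀ : Fin t → ZMod q := fun i => if i = ⟨0, ht⟩ then 1 else 0 with hb₀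
      have hb0 : b₀ ≠ 0 := by
        intro h
        have h1 := congrFun h ⟨0, ht⟩
        simp [hb₀] at h1
      calc ∑ a, g a
          = ∑ c : ZMod q, ∑ a ∈ univ.filter (fun a => ∑ i, b₀ i * a i = c), g a :=
            (Finset.sum_fiberwise _ _ _).symm
        _ = 0 := by simp [key b₀ hb0]
    -- the standard additive character
    set ψ : AddChar (ZMod q) ℂ := ZMod.stdAddChar with hψ
    have hpsum : ∀ (s : Finset (Fin t)) (h : Fin t → ZMod q),
        ψ (∑ i ∈ s, h i) = ∏ i ∈ s, ψ (h i) := by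
      intro s h
      induction s using Finset.cons_induction with
      | empty => simp
      | cons i s hi ih => rw [Finset.sum_cons, Finset.prod_cons, AddChar.map_add_eq_mul, ih]
    -- all Fourier coefficients vanish
    have Tzero : ∀ b : Fin t → ZMod q, ∑ a, g a * ψ (∑ i, b i * a i) = 0 := by
      intro b
      by_cases hb : b = 0
      · subst hb
        simpa using total
      · calc ∑ a, g a * ψ (∑ i, b i * a i)
            = ∑ c : ZMod q, ∑ a ∈ univ.filter (fun a => ∑ i, b i * a i = c),
                g a * ψ (∑ i, b i * a i) := (Finset.sum_fiberwise _ _ _).symm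
          _ = ∑ c : ZMod q, ψ c * ∑ a ∈ univ.filter (fun a => ∑ i, b i * a i = c), g a := by
              refine Finset.sum_congr rfl fun c _ => ?_
              rw [Finset.mul_sum]
              refine Finset.sum_congr rfl fun a ha => ?_
              rw [(Finset.mem_filter.1 ha).2]
              ring
          _ = 0 := by simp [key b hb]
    -- character orthogonality
    have h1 : ∀ v : ZMod q, ∑ s : ZMod q, ψ (s * v) = if v = 0 then (q : ℂ) else 0 := by
      intro v
      split_ifs with h
      · simp [h]
      · have := AddChar.sum_eq_zero_of_ne_one (ZMod.isPrimitive_stdAddChar q h)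
        simpa [AddChar.mulShift_apply, mul_comm] using this
    -- Fourier inversion at a point x
    intro x
    have E : ∑ b : Fin t → ZMod q, (∑ a, g a * ψ (∑ i, b i * a i)) * ψ (-(∑ i, b i * x i)) = 0 := by
      simp [Tzero]
    have E2 : ∑ b : Fin t → ZMod q, (∑ a, g a * ψ (∑ i, b i * a i)) * ψ (-(∑ i, b i * x i))
        = g x * (q : ℂ) ^ t := by
      have hprod : ∀ a : Fin t → ZMod q,
          (∏ i, if a i - x i = 0 then (q : ℂ) else 0) = if a = x then (q : ℂ) ^ t else 0 := by
        intro a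
        by_cases h : a = x
        · subst h; simp
        · rw [if_neg h]
          obtain ⟨i, hi⟩ : ∃ i, a i ≠ x i := Function.ne_iff.1 h
          exact Finset.prod_eq_zero (mem_univ i) (by simp [sub_eq_zero, hi])
      calc ∑ b : Fin t → ZMod q, (∑ a, g a * ψ (∑ i, b i * a i)) * ψ (-(∑ i, b i * x i))
          = ∑ b : Fin t → ZMod q, ∑ a, g a * ∏ i, ψ (b i * (a i - x i)) := by
            refine Finset.sum_congr rfl fun b _ => ?_
            rw [Finset.sum_mul]
            refine Finset.sum_congr rfl fun a _ => ?_
            rw [mul_assoc, ← AddChar.map_add_eq_mul, ← hpsum univ (fun i => b i * (a i - x i))]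
            congr 2
            rw [← Finset.sum_neg_distrib, ← Finset.sum_add_distrib]
            exact Finset.sum_congr rfl fun i _ => by ring
        _ = ∑ a, g a * ∑ b : Fin t → ZMod q, ∏ i, ψ (b i * (a i - x i)) := by
            rw [Finset.sum_comm]
            exact Finset.sum_congr rfl fun a _ => by rw [Finset.mul_sum]
        _ = ∑ a, g a * ∏ i, ∑ s : ZMod q, ψ (s * (a i - x i)) := by
            refine Finset.sum_congr rfl fun a _ => ?_
            rw [Fintype.prod_sum]
        _ = ∑ a, g a * if a = x then (q : ℂ) ^ t else 0 := by
            refine Finset.sum_congr rfl fun a _ => ?_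
            rw [← hprod a]
            congr 1
            exact Finset.prod_congr rfl fun i _ => h1 (a i - x i)
        _ = g x * (q : ℂ) ^ t := by
            simp [mul_ite, Finset.sum_ite_eq' univ x]
    rw [E2] at E
    have hq0 : ((q : ℂ) ^ t) ≠ 0 := pow_ne_zero _ (Nat.cast_ne_zero.2 (NeZero.ne q))
    have : g x = 0 := by
      rcases mul_eq_zero.1 E with h | h
      · exact h
      · exact absurd h hq0
    have : (f x : ℂ) = (C : ℂ) := by
      have := sub_eq_zero.1 this
      simpa [hg] using this
    exact_mod_cast this
  · rintro ⟨C, hC⟩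
    refine ⟨C, fun b hb c H hH hne => ?_⟩
    simp [hC, Finset.sum_const, nsmul_eq_mul, mul_comm]
end

section
/- Let n ≥ 1 and let D be a nonempty subset of (ℤ/2ℤ)^n such that ∑_{x∈D} (−1)^{y·x} = 0 for every y ∈ (ℤ/2ℤ)^n with 1 ≤ |y| ≤ 2. Then |D| > n. -/
open Finset Matrix

/-- If `D ⊆ (ℤ/2ℤ)^n` is a nonempty `Φ_{[2]}`-design of the hypercube graph `H(n,2)`,
i.e. `∑_{x∈D} (−1)^{y·x} = 0` for every `y` with `1 ≤ |y| ≤ 2`, then `|D| > n`. -/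
theorem phi2_design_card_gt
    (n : ℕ) (hn : 1 ≤ n) (D : Finset (Fin n → ZMod 2)) (hne : D.Nonempty)
    (hD : ∀ y : Fin n → ZMod 2, 1 ≤ hammingNorm y → hammingNorm y ≤ 2 →
        ∑ x ∈ D, (-1 : ℝ) ^ (∑ i, (y i).val * (x i).val) = 0) :
    n < D.card := by
  classical
  have hv1 : ((1 : ZMod 2)).val = 1 := rfl
  let f : Fin (n+1) → EuclideanSpace ℝ {x // x ∈ D} := fun i =>
    Fin.cases (WithLp.toLp 2 (fun _ => 1))
      (fun k => WithLp.toLp 2 (fun x => (-1 : ℝ) ^ ((x : Fin n → ZMod 2) k).val)) i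
  have hsingle : ∀ (k : Fin n) (x : Fin n → ZMod 2),
      ∑ i, (((Pi.single k (1 : ZMod 2) : Fin n → ZMod 2)) i).val * (x i).val = (x k).val := by
    intro k x
    rw [Finset.sum_eq_single k]
    · simp [hv1]
    · intro b _ hb; simp [Pi.single_eq_of_ne hb]
    · simp
  have hnorm1 : ∀ k : Fin n, hammingNorm (Pi.single k (1 : ZMod 2) : Fin n → ZMod 2) = 1 := by
    intro k
    have : ({i | (Pi.single k (1 : ZMod 2) : Fin n → ZMod 2) i ≠ 0} : Finset (Fin n)) = {k} := by
      ext i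
      by_cases h : i = k <;> simp [h, Pi.single_eq_of_ne]
    simp [hammingNorm, this]
  have hsum1 : ∀ k : Fin n, ∑ x ∈ D, (-1 : ℝ) ^ ((x k).val) = 0 := by
    intro k
    have := hD (Pi.single k (1 : ZMod 2) : Fin n → ZMod 2) (by rw [hnorm1]) (by rw [hnorm1]; norm_num)
    simpa [hsingle] using this
  have hpair : ∀ (k l : Fin n), k ≠ l →
      ∑ x ∈ D, (-1 : ℝ) ^ ((x k).val) * (-1 : ℝ) ^ ((x l).val) = 0 := by
    intro k l hkl
    set y : Fin n → ZMod 2 := (Pi.single k (1:ZMod 2)) + (Pi.single l (1:ZMod 2)) with hy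
    have hyapp : ∀ i, y i = (if i = k then 1 else 0) + (if i = l then 1 else 0) := by
      intro i; simp [hy, Pi.single_apply]
    have hyval : ∀ i, y i ≠ 0 ↔ (i = k ∨ i = l) := by
      intro i
      rcases eq_or_ne i k with rfl | hik
      · simp [hyapp, hkl]
      rcases eq_or_ne i l with rfl | hil
      · simp [hyapp, hik]
      · simp [hyapp, hik, hil]
    have hnorm : hammingNorm y = 2 := by
      have : ({i | y i ≠ 0} : Finset (Fin n)) = {k, l} := by
        ext i; simp [hyval i]
      rw [hammingNorm, this, Finset.card_insert_of_notMem (by simp [hkl]),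
        Finset.card_singleton]
    have hyk : y k = 1 := by simp [hyapp, hkl]
    have hyl : y l = 1 := by simp [hyapp, Ne.symm hkl]
    have hexp : ∀ x : Fin n → ZMod 2,
        ∑ i, (y i).val * (x i).val = (x k).val + (x l).val := by
      intro x
      rw [Finset.sum_eq_add_of_mem k l (Finset.mem_univ _) (Finset.mem_univ _) hkl ?_]
      · rw [hyk, hyl, hv1, one_mul, one_mul]
      · intro i _ hi
        have hzi : y i = 0 := by
          by_contra h
          rcases (hyval i).1 h with rfl | rfl
          · exact hi.1 rfl
          · exact hi.2 rfl
        rw [hzi]; simp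
    have h0 := hD y (by rw [hnorm]; norm_num) (by rw [hnorm])
    calc ∑ x ∈ D, (-1 : ℝ) ^ ((x k).val) * (-1 : ℝ) ^ ((x l).val)
        = ∑ x ∈ D, (-1 : ℝ) ^ (∑ i, (y i).val * (x i).val) := by
          refine Finset.sum_congr rfl fun x _ => ?_
          rw [hexp x, pow_add]
      _ = 0 := h0
  have hinner : ∀ i j : Fin (n+1), i ≠ j → inner ℝ (f i) (f j) = (0 : ℝ) := by
    intro i j hij
    induction i using Fin.cases with
    | zero =>
      induction j using Fin.cases with
      | zero => exact absurd rfl hij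
      | succ l =>
        simp only [f, PiLp.inner_apply, Fin.cases_zero, Fin.cases_succ, PiLp.toLp_apply,
          RCLike.inner_apply, conj_trivial, mul_one]
        rw [Finset.sum_coe_sort D (fun x => (-1 : ℝ) ^ ((x l).val))]
        exact hsum1 l
    | succ k =>
      induction j using Fin.cases with
      | zero =>
        simp only [f, PiLp.inner_apply, Fin.cases_zero, Fin.cases_succ, PiLp.toLp_apply,
          RCLike.inner_apply, conj_trivial, one_mul]
        rw [Finset.sum_coe_sort D (fun x => (-1 : ℝ) ^ ((x k).val))]
        exact hsum1 k
      | succ l =>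
        have hkl : k ≠ l := fun h => hij (by rw [h])
        simp only [f, PiLp.inner_apply, Fin.cases_succ, PiLp.toLp_apply, RCLike.inner_apply, conj_trivial]
        rw [Finset.sum_coe_sort D
          (fun x => (-1 : ℝ) ^ ((x l).val) * (-1 : ℝ) ^ ((x k).val))]
        exact hpair l k (Ne.symm hkl)
  have hnz : ∀ i : Fin (n+1), f i ≠ 0 := by
    intro i h
    obtain ⟨x, hx⟩ := hne
    have hfx := congrArg (fun v => v ⟨x, hx⟩) h
    induction i using Fin.cases with
    | zero => simpa [f] using hfx
    | succ k =>
      simp only [f, Fin.cases_succ, PiLp.toLp_apply, PiLp.zero_apply] at hfx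
      exact pow_ne_zero _ (by norm_num : (-1:ℝ) ≠ 0) hfx
  have hli : LinearIndependent ℝ f :=
    linearIndependent_of_ne_zero_of_inner_eq_zero hnz hinner
  have hcard := hli.fintype_card_le_finrank
  simp [finrank_euclideanSpace, Fintype.card_coe] at hcard
  omega
end

section
/- Let ℓ ≥ 1 and n = 4ℓ − 1. There exists a subset D ⊆ (ℤ/2ℤ)^n with |D| = 4ℓ satisfying ∑_{x∈D} (−1)^{y·x} = 0 for every y ∈ (ℤ/2ℤ)^n with 1 ≤ |y| ≤ 2, if and only if there exists a 4ℓ × 4ℓ Hadamard matrix, i.e. a matrix H with all entries in {+1, −1} satisfying H · Hᵀ = 4ℓ · I. -/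
open Finset Matrix

lemma aux_transpose_orth {N : ℕ} (A : Matrix (Fin N) (Fin N) ℝ) {c : ℝ} (hc : c ≠ 0)
    (h : A * Aᵀ = c • 1) : Aᵀ * A = c • 1 := by
  have h1 : A * (c⁻¹ • Aᵀ) = 1 := by
    rw [Matrix.mul_smul, h, smul_smul, inv_mul_cancel₀ hc, one_smul]
  have h2 : (c⁻¹ • Aᵀ) * A = 1 := mul_eq_one_comm.mp h1
  have h3 : c⁻¹ • (Aᵀ * A) = 1 := by rw [← Matrix.smul_mul]; exact h2
  calc Aᵀ * A = c • (c⁻¹ • (Aᵀ * A)) := by rw [smul_smul, mul_inv_cancel₀ hc, one_smul]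
    _ = c • 1 := by rw [h3]

lemma aux_zmod2_val {a : ZMod 2} (h : a ≠ 0) : a.val = 1 := by revert h; revert a; decide

lemma aux_zmod2_val0 : ((0 : ZMod 2)).val = 0 := rfl
lemma aux_zmod2_val1 : ((1 : ZMod 2)).val = 1 := rfl

lemma aux_neg_one_pow (v : ℕ) : (-1 : ℝ) ^ v = 1 ∨ (-1 : ℝ) ^ v = -1 := by
  rcases Nat.even_or_odd v with h | h
  · exact Or.inl h.neg_one_pow
  · exact Or.inr h.neg_one_pow

/-- For `n = 4ℓ − 1`, a `Φ_{[2]}`-design of the hypercube graph `H(n,2)` of size `4ℓ`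
exists if and only if there exists a `4ℓ × 4ℓ` Hadamard matrix. -/
theorem phi2_design_iff_hadamard (ℓ : ℕ) (hl : 1 ≤ ℓ) :
    (∃ D : Finset (Fin (4 * ℓ - 1) → ZMod 2), D.card = 4 * ℓ ∧
        ∀ y : Fin (4 * ℓ - 1) → ZMod 2, 1 ≤ hammingNorm y → hammingNorm y ≤ 2 →
          ∑ x ∈ D, (-1 : ℝ) ^ (∑ i, (y i).val * (x i).val) = 0) ↔
      (∃ H : Matrix (Fin (4 * ℓ)) (Fin (4 * ℓ)) ℝ,
        (∀ i j, H i j = 1 ∨ H i j = -1) ∧ H * Hᵀ = (4 * ℓ : ℝ) • 1) := by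
  have hn : 4 * ℓ - 1 + 1 = 4 * ℓ := by omega
  have hlR : (0 : ℝ) < (ℓ : ℝ) := by exact_mod_cast hl
  have hne : (4 * ℓ : ℝ) ≠ 0 := by positivity
  set e : Fin (4 * ℓ) ≃ Option (Fin (4 * ℓ - 1)) :=
    (finCongr hn.symm).trans (finSuccEquiv (4 * ℓ - 1)) with he
  constructor
  · rintro ⟨D, hcard, hdes⟩
    set f : Fin (4 * ℓ) ≃ {x // x ∈ D} := ((D.equivFin).trans (finCongr hcard)).symm with hf
    set N : Matrix (Option (Fin (4 * ℓ - 1))) (Fin (4 * ℓ)) ℝ :=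
      fun o j => Option.elim o 1 (fun k => (-1 : ℝ) ^ (((f j : Fin (4 * ℓ - 1) → ZMod 2)) k).val)
      with hN
    have hsum : ∀ G : (Fin (4 * ℓ - 1) → ZMod 2) → ℝ,
        ∑ j : Fin (4 * ℓ), G (f j) = ∑ x ∈ D, G x := by
      intro G
      rw [← Finset.sum_coe_sort D G]
      exact Equiv.sum_comp f (fun x => G (x : Fin (4 * ℓ - 1) → ZMod 2))
    -- single-coordinate sums vanish
    have h1 : ∀ k, ∑ x ∈ D, (-1 : ℝ) ^ ((x k).val) = 0 := by
      intro k
      have hy := hdes (fun i => if i = k then 1 else 0) ?_ ?_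
      · rw [← hy]
        apply Finset.sum_congr rfl
        intro x _
        congr 1
        have : ∀ i, ((if i = k then (1 : ZMod 2) else 0)).val * (x i).val
            = if i = k then (x i).val else 0 := by
          intro i; by_cases h : i = k <;> simp [h, aux_zmod2_val1]
        simp_rw [this]
        simp
      all_goals {
        have hfilt : (Finset.univ.filter fun i => (if i = k then (1:ZMod 2) else 0) ≠ 0) = {k} := by
          ext i
          simp only [Finset.mem_filter, Finset.mem_univ, true_and, ne_eq, Finset.mem_singleton]
          constructor
          · intro h0; by_contra hcon; rw [if_neg hcon] at h0; exact h0 rfl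
          · intro h0; rw [if_pos h0]; exact one_ne_zero
        have hh : hammingNorm (fun i => if i = k then (1:ZMod 2) else 0)
            = (Finset.univ.filter fun i => (if i = k then (1:ZMod 2) else 0) ≠ 0).card := rfl
        rw [hh, hfilt, Finset.card_singleton]
        try norm_num }
    -- two-coordinate sums vanish
    have h2 : ∀ k k', k ≠ k' → ∑ x ∈ D, (-1 : ℝ) ^ ((x k).val + (x k').val) = 0 := by
      intro k k' hkk
      have hy := hdes (fun i => if i = k ∨ i = k' then 1 else 0) ?_ ?_
      · rw [← hy]
        apply Finset.sum_congr rfl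
        intro x _
        congr 1
        have h1' : ∀ i, ((if i = k ∨ i = k' then (1 : ZMod 2) else 0)).val * (x i).val
            = if i ∈ ({k, k'} : Finset _) then (x i).val else 0 := by
          intro i
          by_cases h : i = k ∨ i = k' <;>
            simp [h, aux_zmod2_val1, Finset.mem_insert, Finset.mem_singleton]
        simp_rw [h1']
        rw [Finset.sum_ite_mem, Finset.univ_inter, Finset.sum_pair hkk]
      all_goals {
        have hfilt : (Finset.univ.filter fun i => (if i = k ∨ i = k' then (1:ZMod 2) else 0) ≠ 0)
            = {k, k'} := by
          ext i
          simp only [Finset.mem_filter, Finset.mem_univ, true_and, ne_eq, Finset.mem_insert,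
            Finset.mem_singleton]
          constructor
          · intro h0; by_contra hcon; push_neg at hcon
            rw [if_neg (by tauto : ¬(i = k ∨ i = k'))] at h0; exact h0 rfl
          · intro h0; rw [if_pos h0]; exact one_ne_zero
        have hh : hammingNorm (fun i => if i = k ∨ i = k' then (1:ZMod 2) else 0)
            = (Finset.univ.filter fun i => (if i = k ∨ i = k' then (1:ZMod 2) else 0) ≠ 0).card := rfl
        rw [hh, hfilt, Finset.card_pair hkk]
        try norm_num }
    have hNN : N * Nᵀ = (4 * ℓ : ℝ) • (1 : Matrix (Option (Fin (4 * ℓ - 1))) _ ℝ) := by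
      ext a b
      rw [Matrix.mul_apply]
      simp only [Matrix.transpose_apply]
      match a, b with
      | none, none =>
        simp [hN, Matrix.smul_apply, Matrix.one_apply]
      | none, some k =>
        have : ∑ j : Fin (4 * ℓ), N none j * N (some k) j
            = ∑ x ∈ D, (-1 : ℝ) ^ ((x k).val) := by
          rw [← hsum (fun x => (-1 : ℝ) ^ ((x k).val))]
          apply Finset.sum_congr rfl
          intro j _; simp [hN]
        rw [this, h1 k]
        simp [Matrix.smul_apply, Matrix.one_apply]
      | some k, none =>
        have : ∑ j : Fin (4 * ℓ), N (some k) j * N none j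
            = ∑ x ∈ D, (-1 : ℝ) ^ ((x k).val) := by
          rw [← hsum (fun x => (-1 : ℝ) ^ ((x k).val))]
          apply Finset.sum_congr rfl
          intro j _; simp [hN]
        rw [this, h1 k]
        simp [Matrix.smul_apply, Matrix.one_apply]
      | some k, some k' =>
        by_cases hkk : k = k'
        · subst hkk
          have : ∀ j : Fin (4 * ℓ), N (some k) j * N (some k) j = 1 := by
            intro j
            rcases aux_neg_one_pow (((f j : Fin (4 * ℓ - 1) → ZMod 2)) k).val with h | h <;>
              simp [hN, h]
          simp_rw [this]
          simp [Matrix.smul_apply, Matrix.one_apply]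
        · have : ∑ j : Fin (4 * ℓ), N (some k) j * N (some k') j
              = ∑ x ∈ D, (-1 : ℝ) ^ ((x k).val + (x k').val) := by
            rw [← hsum (fun x => (-1 : ℝ) ^ ((x k).val + (x k').val))]
            apply Finset.sum_congr rfl
            intro j _; simp [hN, pow_add]
          rw [this, h2 k k' hkk]
          simp [Matrix.smul_apply, Matrix.one_apply, hkk]
    refine ⟨N.submatrix e id, ?_, ?_⟩
    · intro i j
      rcases heo : e i with _ | k
      · left; rw [Matrix.submatrix_apply, heo]; simp [hN]
      · rw [Matrix.submatrix_apply, heo]; simp only [hN, Option.elim_some, id_eq]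
        exact aux_neg_one_pow _
    · have ht : (N.submatrix e id)ᵀ = Nᵀ.submatrix id e := by
        ext i j; simp [Matrix.submatrix_apply]
      rw [ht]
      have : N.submatrix ⇑e id * Nᵀ.submatrix id ⇑e
          = N.submatrix ⇑e ⇑(Equiv.refl (Fin (4 * ℓ))) * Nᵀ.submatrix ⇑(Equiv.refl (Fin (4 * ℓ))) ⇑e := by
        rfl
      have hsub : ((4 * ℓ : ℝ) • (1 : Matrix (Option (Fin (4 * ℓ - 1))) _ ℝ)).submatrix ⇑e ⇑e
          = (4 * ℓ : ℝ) • (1 : Matrix (Fin (4 * ℓ)) _ ℝ) := by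
        ext i j
        simp [Matrix.submatrix_apply, Matrix.smul_apply, Matrix.one_apply,
          Equiv.apply_eq_iff_eq]
      rw [this, Matrix.submatrix_mul_equiv, hNN, hsub]
  · rintro ⟨H, hent, horth⟩
    set c₀ : Fin (4 * ℓ) := e.symm none with hc0
    set H' : Matrix (Fin (4 * ℓ)) (Fin (4 * ℓ)) ℝ := fun i j => H i c₀ * H i j with hH'
    have hent' : ∀ i j, H' i j = 1 ∨ H' i j = -1 := by
      intro i j
      rcases hent i c₀ with h1 | h1 <;> rcases hent i j with h2 | h2 <;>
        simp [hH', h1, h2]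
    have hc₀1 : ∀ i, H' i c₀ = 1 := by
      intro i; rcases hent i c₀ with h | h <;> simp [hH', h]
    have horth' : H' * H'ᵀ = (4 * ℓ : ℝ) • (1 : Matrix (Fin (4 * ℓ)) _ ℝ) := by
      ext i i'
      rw [Matrix.mul_apply]
      simp only [Matrix.transpose_apply]
      have key : ∑ j, H' i j * H' i' j = (H i c₀ * H i' c₀) * ∑ j, H i j * H i' j := by
        rw [Finset.mul_sum]
        apply Finset.sum_congr rfl
        intro j _; simp [hH']; ring
      rw [key]
      have horthe : ∑ j, H i j * H i' j = ((4 * ℓ : ℝ) • (1 : Matrix (Fin (4 * ℓ)) _ ℝ)) i i' := by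
        rw [← horth, Matrix.mul_apply]
        simp [Matrix.transpose_apply]
      rw [horthe]
      by_cases hii : i = i'
      · subst hii
        rcases hent i c₀ with h | h <;> simp [h, Matrix.smul_apply, Matrix.one_apply]
      · simp [Matrix.smul_apply, Matrix.one_apply, hii]
    have hcol := aux_transpose_orth H' hne horth'
    have hcol' : ∀ a b, a ≠ b → ∑ i, H' i a * H' i b = 0 := by
      intro a b hab
      have := congrFun (congrFun hcol a) b
      rw [Matrix.mul_apply] at this
      simpa [Matrix.transpose_apply, Matrix.one_apply, hab, Matrix.smul_apply] using this
    set g : Fin (4 * ℓ) → (Fin (4 * ℓ - 1) → ZMod 2) :=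
      fun i k => if H' i (e.symm (some k)) = 1 then 0 else 1 with hg'
    have hg : ∀ i k, (-1 : ℝ) ^ ((g i k).val) = H' i (e.symm (some k)) := by
      intro i k
      rcases hent' i (e.symm (some k)) with h | h
      · simp [hg', h]
      · simp only [hg', h]
        rw [if_neg (by norm_num : ¬(-1 : ℝ) = 1), aux_zmod2_val1, pow_one]
    have ginj : Function.Injective g := by
      intro i i' hgi
      by_contra hii
      have hrows : ∀ j, H' i j = H' i' j := by
        intro j
        rcases heo : e j with _ | k
        · have hj : j = c₀ := by
            rw [hc0, ← heo, Equiv.symm_apply_apply]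
          rw [hj, hc₀1, hc₀1]
        · have hj : j = e.symm (some k) := by rw [← heo, Equiv.symm_apply_apply]
          rw [hj, ← hg, ← hg, hgi]
      have e1 : ∑ j, H' i j * H' i' j = (4 * ℓ : ℝ) := by
        have : ∀ j : Fin (4 * ℓ), H' i j * H' i' j = 1 := by
          intro j
          rw [← hrows j]
          rcases hent' i j with h | h <;> rw [h] <;> norm_num
        simp_rw [this]
        simp
      have e2 : ∑ j, H' i j * H' i' j = 0 := by
        have := congrFun (congrFun horth' i) i'
        rw [Matrix.mul_apply] at this
        simpa [Matrix.transpose_apply, Matrix.one_apply, hii, Matrix.smul_apply] using this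
      rw [e1] at e2
      exact hne e2
    refine ⟨Finset.image g Finset.univ, ?_, ?_⟩
    · rw [Finset.card_image_of_injective _ ginj, Finset.card_univ, Fintype.card_fin]
    · intro y h1y h2y
      rw [Finset.sum_image (fun a _ b _ h => ginj h)]
      set s := Finset.univ.filter (fun k => y k ≠ 0) with hs
      have hsc : s.card = hammingNorm y := rfl
      have hexp : ∀ i, ∑ k, (y k).val * (g i k).val = ∑ k ∈ s, (g i k).val := by
        intro i
        rw [hs, Finset.sum_filter]
        apply Finset.sum_congr rfl
        intro k _
        by_cases hy : y k = 0
        · simp [hy, aux_zmod2_val0]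
        · simp [hy, aux_zmod2_val hy]
      have hprod : ∀ i, (-1 : ℝ) ^ (∑ k, (y k).val * (g i k).val)
          = ∏ k ∈ s, (-1 : ℝ) ^ ((g i k).val) := by
        intro i
        rw [hexp i, Finset.prod_pow_eq_pow_sum]
      simp_rw [hprod]
      have hcase : s.card = 1 ∨ s.card = 2 := by
        rw [hsc]; omega
      rcases hcase with hc | hc
      · obtain ⟨k, hk⟩ := Finset.card_eq_one.mp hc
        rw [hk]
        simp_rw [Finset.prod_singleton, hg]
        have hne2 : c₀ ≠ e.symm (some k) := fun hcc =>
          (Option.some_ne_none k) (e.symm.injective hcc).symm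
        have h0 := hcol' c₀ (e.symm (some k)) hne2
        simp_rw [hc₀1, one_mul] at h0
        exact h0
      · obtain ⟨k, k', hkk, hk⟩ := Finset.card_eq_two.mp hc
        rw [hk]
        simp_rw [Finset.prod_pair hkk, hg]
        apply hcol'
        intro hcc
        exact hkk (Option.some_injective _ (e.symm.injective hcc))
end

section
/- Fix q ≥ 2 and n ≥ 1. For i ∈ {1,…,n} and a ∈ ℤ/qℤ, let D_{i,a} = {x ∈ (ℤ/qℤ)^n : x_i = a}. Call D ⊆ (ℤ/qℤ)^n a reverse design if ∑_{x∈D} χ_y(x) = 0 for every y ∈ (ℤ/qℤ)^n with Hamming weight |y| ≥ 2. Then: (i) every D_{i,a} is a reverse design; (ii) every D_{i,a} is a minimal reverse design, i.e. the only nonempty reverse design contained in D_{i,a} is D_{i,a} itself; (iii) every reverse design is a union of sets of the form D_{i,a}. -/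
open Finset Matrix Function

/-- A reverse design of the Hamming graph `H(n,q)`: a subset averaging every Laplacian
eigenvector `χ_y` with Hamming weight `|y| ≥ 2` (all but the first two eigenspaces in
reverse Laplacian order). -/
def HammingRevDesign (q n : ℕ) [NeZero q] (ω : ℂ) (D : Finset (Fin n → ZMod q)) : Prop :=
  ∀ y : Fin n → ZMod q, 2 ≤ hammingNorm y →
    ∑ x ∈ D, ω ^ (∑ i, y i * x i).val = 0

/-- The set `D_{i,a}` of vectors whose `i`-th coordinate equals `a`. -/
def hammingSlab (q n : ℕ) [NeZero q] (i : Fin n) (a : ZMod q) : Finset (Fin n → ZMod q) :=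
  Finset.univ.filter fun x => x i = a

section Aux

variable {q n : ℕ} [NeZero q] {ω : ℂ}

lemma aux_pow_mod (hω : IsPrimitiveRoot ω q) (m : ℕ) : ω ^ (m % q) = ω ^ m := by
  conv_rhs => rw [← Nat.div_add_mod m q, pow_add, pow_mul, hω.pow_eq_one, one_pow, one_mul]

/-- `ω ^ (a+b).val = ω ^ a.val * ω ^ b.val` when `ω` is a primitive `q`-th root. -/
lemma aux_e_add (hω : IsPrimitiveRoot ω q) (a b : ZMod q) :
    ω ^ (a + b).val = ω ^ a.val * ω ^ b.val := by
  rw [ZMod.val_add, aux_pow_mod hω, pow_add]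

lemma aux_e_eq_one (hω : IsPrimitiveRoot ω q) {a : ZMod q} :
    ω ^ a.val = 1 ↔ a = 0 := by
  rw [hω.pow_eq_one_iff_dvd]
  constructor
  · intro h
    exact (ZMod.val_eq_zero a).mp (Nat.eq_zero_of_dvd_of_lt h (ZMod.val_lt a))
  · rintro rfl; simp

lemma aux_e_ne_zero (hω : IsPrimitiveRoot ω q) (a : ZMod q) : ω ^ a.val ≠ 0 := by
  intro h
  rcases pow_eq_zero_iff'.mp h with ⟨h0, -⟩
  have := hω.pow_eq_one
  rw [h0, zero_pow (NeZero.ne q)] at this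
  exact zero_ne_one this

end Aux

section Shift

variable {q n : ℕ} [NeZero q]

lemma aux_dot_update (y x : Fin n → ZMod q) (j : Fin n) (v : ZMod q) :
    ∑ i, y i * (Function.update x j v) i = (∑ i ∈ univ.erase j, y i * x i) + y j * v := by
  rw [← Finset.sum_erase_add _ _ (mem_univ j), Function.update_self]
  congr 1
  exact Finset.sum_congr rfl fun i hi => by
    rw [Function.update_of_ne (Finset.mem_erase.mp hi).1]

lemma aux_dot_split (y x : Fin n → ZMod q) (j : Fin n) :
    ∑ i, y i * x i = (∑ i ∈ univ.erase j, y i * x i) + y j * x j := by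
  have := aux_dot_update y x j (x j)
  rwa [Function.update_eq_self] at this

lemma aux_dot_update_zero {y : Fin n → ZMod q} {j : Fin n} (hyj : y j = 0)
    (x : Fin n → ZMod q) (v : ZMod q) :
    ∑ i, y i * (Function.update x j v) i = ∑ i, y i * x i := by
  rw [aux_dot_update, aux_dot_split y x j, hyj, zero_mul, zero_mul]

/-- Shifting coordinate `j` by `s`, as an equivalence. -/
def shiftEquiv (j : Fin n) (s : ZMod q) : (Fin n → ZMod q) ≃ (Fin n → ZMod q) where
  toFun x := Function.update x j (x j + s)
  invFun x := Function.update x j (x j - s)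
  left_inv x := by
    simp [Function.update_idem, Function.update_self]
  right_inv x := by
    simp [Function.update_idem, Function.update_self]

lemma aux_dot_shift (y x : Fin n → ZMod q) (j : Fin n) (s : ZMod q) :
    ∑ i, y i * (shiftEquiv j s x) i = (∑ i, y i * x i) + y j * s := by
  show ∑ i, y i * (Function.update x j (x j + s)) i = _
  rw [aux_dot_update, aux_dot_split y x j, mul_add, add_assoc]

end Shift

section Vanish

variable {q n : ℕ} [NeZero q] {ω : ℂ}

/-- Shift trick: a character sum over a shift-invariant set with a nontrivial
frequency at the shifted coordinate vanishes. -/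
lemma aux_sum_shift_zero (hω : IsPrimitiveRoot ω q) (S : Finset (Fin n → ZMod q))
    (y : Fin n → ZMod q) (j : Fin n) (hyj : y j ≠ 0)
    (hS : ∀ x, x ∈ S ↔ shiftEquiv j (1 : ZMod q) x ∈ S) :
    ∑ x ∈ S, ω ^ (∑ i, y i * x i).val = 0 := by
  set T := ∑ x ∈ S, ω ^ (∑ i, y i * x i).val with hT
  have key : T = ω ^ (y j).val * T := by
    calc T = ∑ x ∈ S, ω ^ (∑ i, y i * (shiftEquiv j (1 : ZMod q) x) i).val :=
            (Finset.sum_equiv (shiftEquiv j (1 : ZMod q)) (fun x => hS x)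
              (fun x _ => rfl)).symm
      _ = ∑ x ∈ S, ω ^ (y j).val * ω ^ (∑ i, y i * x i).val := by
            refine Finset.sum_congr rfl fun x _ => ?_
            rw [aux_dot_shift, mul_one, aux_e_add hω, mul_comm]
      _ = ω ^ (y j).val * T := by rw [hT, Finset.mul_sum]
  have h1 : (1 - ω ^ (y j).val) * T = 0 := by ring_nf; linear_combination key
  rcases mul_eq_zero.mp h1 with h | h
  · exact absurd (by linear_combination -h : ω ^ (y j).val = 1)
      (fun hh => hyj ((aux_e_eq_one hω).mp hh))
  · exact h

/-- A slab is a reverse design. -/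
lemma aux_slab_design (hω : IsPrimitiveRoot ω q) (i : Fin n) (a : ZMod q) :
    ∀ y : Fin n → ZMod q, 2 ≤ hammingNorm y →
      ∑ x ∈ Finset.univ.filter (fun x : Fin n → ZMod q => x i = a), ω ^ (∑ k, y k * x k).val = 0 := by
  intro y hy
  obtain ⟨u, hu, v, hv, huv⟩ := Finset.one_lt_card.mp (lt_of_lt_of_le one_lt_two hy)
  simp only [Finset.mem_filter, Finset.mem_univ, true_and] at hu hv
  have hj : ∃ j, j ≠ i ∧ y j ≠ 0 := by
    by_cases h : u = i
    · exact ⟨v, fun hvi => huv (h.trans hvi.symm), hv⟩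
    · exact ⟨u, h, hu⟩
  obtain ⟨j, hji, hyj⟩ := hj
  refine aux_sum_shift_zero hω _ y j hyj fun x => ?_
  simp only [Finset.mem_filter, Finset.mem_univ, true_and]
  show x i = a ↔ Function.update x j (x j + 1) i = a
  rw [Function.update_of_ne (Ne.symm hji)]

/-- Full-space character sum orthogonality. -/
lemma aux_full_sum (hω : IsPrimitiveRoot ω q) (w : Fin n → ZMod q) :
    ∑ x : Fin n → ZMod q, ω ^ (∑ i, w i * x i).val
      = if w = 0 then ((q : ℂ)) ^ n else 0 := by
  by_cases hw : w = 0
  · subst hw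
    simp only [if_pos rfl]
    have : ∀ x : Fin n → ZMod q, (∑ i, (0 : ZMod q) * x i) = 0 := by intro x; simp
    calc ∑ x : Fin n → ZMod q, ω ^ ((∑ i, (0 : Fin n → ZMod q) i * x i)).val
        = ∑ _x : Fin n → ZMod q, (1 : ℂ) := by
          refine Finset.sum_congr rfl fun x _ => ?_
          show ω ^ ((∑ i, (0 : ZMod q) * x i)).val = 1
          rw [this x]; simp
      _ = ((q : ℂ)) ^ n := by
          rw [Finset.sum_const, Finset.card_univ]
          simp [ZMod.card]
  · rw [if_neg hw]
    have : ∃ j, w j ≠ 0 := by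
      by_contra h
      push_neg at h
      exact hw (funext fun j => h j)
    obtain ⟨j, hwj⟩ := this
    exact aux_sum_shift_zero hω Finset.univ w j hwj (fun x => by simp)

end Vanish

section Inversion

variable {q n : ℕ} [NeZero q] {ω : ℂ}

lemma aux_e_mul_inv (hω : IsPrimitiveRoot ω q) (y z x : Fin n → ZMod q) :
    (ω ^ (∑ i, y i * z i).val) * (ω ^ (∑ i, y i * x i).val)⁻¹
      = ω ^ (∑ i, y i * (z i - x i)).val := by
  have hsplit : (∑ i, y i * z i) = (∑ i, y i * (z i - x i)) + ∑ i, y i * x i := by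
    rw [← Finset.sum_add_distrib]
    exact Finset.sum_congr rfl fun i _ => by ring
  rw [hsplit, aux_e_add hω]
  field_simp [aux_e_ne_zero hω]

/-- Fourier inversion: recovering the indicator of `D` from its character sums. -/
lemma aux_inversion (hω : IsPrimitiveRoot ω q) (D : Finset (Fin n → ZMod q))
    (x : Fin n → ZMod q) :
    ∑ y : Fin n → ZMod q,
        (∑ z ∈ D, ω ^ (∑ i, y i * z i).val) * (ω ^ (∑ i, y i * x i).val)⁻¹
      = ((q : ℂ)) ^ n * (if x ∈ D then 1 else 0) := by
  calc ∑ y : Fin n → ZMod q,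
          (∑ z ∈ D, ω ^ (∑ i, y i * z i).val) * (ω ^ (∑ i, y i * x i).val)⁻¹
      = ∑ y : Fin n → ZMod q, ∑ z ∈ D, ω ^ (∑ i, y i * (z i - x i)).val := by
        refine Finset.sum_congr rfl fun y _ => ?_
        rw [Finset.sum_mul]
        exact Finset.sum_congr rfl fun z _ => aux_e_mul_inv hω y z x
    _ = ∑ z ∈ D, ∑ y : Fin n → ZMod q, ω ^ (∑ i, y i * (z i - x i)).val :=
        Finset.sum_comm
    _ = ∑ z ∈ D, (if (fun i => z i - x i) = 0 then ((q : ℂ)) ^ n else 0) := by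
        refine Finset.sum_congr rfl fun z _ => ?_
        have := aux_full_sum hω (fun i => z i - x i)
        rw [← this]
        refine Finset.sum_congr rfl fun y _ => ?_
        congr 1
        congr 1
        exact Finset.sum_congr rfl fun i _ => by ring
    _ = ∑ z ∈ D, (if z = x then ((q : ℂ)) ^ n else 0) := by
        refine Finset.sum_congr rfl fun z _ => ?_
        have hc : ((fun i => z i - x i) = 0) ↔ z = x := by
          constructor
          · intro h
            funext i
            have := congrFun h i
            simpa [sub_eq_zero] using this
          · rintro rfl; funext i; simp
        rw [if_congr hc rfl rfl]
    _ = ((q : ℂ)) ^ n * (if x ∈ D then 1 else 0) := by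
        rw [Finset.sum_ite_eq' D x (fun _ => ((q : ℂ)) ^ n)]
        by_cases h : x ∈ D <;> simp [h]

end Inversion

section SecondDiff

variable {q n : ℕ} [NeZero q] {ω : ℂ}

/-- Second differences of the indicator of a reverse design vanish. -/
lemma aux_second_diff (hω : IsPrimitiveRoot ω q) {D : Finset (Fin n → ZMod q)}
    (hD : HammingRevDesign q n ω D) (x : Fin n → ZMod q) {j k : Fin n} (hjk : j ≠ k)
    (b c : ZMod q) :
    ((if x ∈ D then (1:ℂ) else 0) +
      (if Function.update (Function.update x j b) k c ∈ D then (1:ℂ) else 0)) =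
    ((if Function.update x j b ∈ D then (1:ℂ) else 0) +
      (if Function.update x k c ∈ D then (1:ℂ) else 0)) := by
  set x1 := Function.update x j b with hx1
  set x2 := Function.update x k c with hx2
  set x3 := Function.update (Function.update x j b) k c with hx3
  have key : ∑ y : Fin n → ZMod q, (∑ z ∈ D, ω ^ (∑ i, y i * z i).val) *
      ((ω ^ (∑ i, y i * x i).val)⁻¹ + (ω ^ (∑ i, y i * x3 i).val)⁻¹
        - (ω ^ (∑ i, y i * x1 i).val)⁻¹ - (ω ^ (∑ i, y i * x2 i).val)⁻¹) = 0 := by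
    refine Finset.sum_eq_zero fun y _ => ?_
    by_cases hy : 2 ≤ hammingNorm y
    · rw [hD y hy, zero_mul]
    · have hcase : y j = 0 ∨ y k = 0 := by
        by_contra h
        push_neg at h
        apply hy
        have hsub : ({j, k} : Finset (Fin n)) ⊆ Finset.univ.filter (fun i => y i ≠ 0) := by
          intro i hi
          simp only [Finset.mem_insert, Finset.mem_singleton] at hi
          rcases hi with rfl | rfl <;>
            simp only [Finset.mem_filter, Finset.mem_univ, true_and] <;>
            [exact h.1; exact h.2]
        calc 2 = ({j, k} : Finset (Fin n)).card := (Finset.card_pair hjk).symm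
          _ ≤ (Finset.univ.filter (fun i => y i ≠ 0)).card := Finset.card_le_card hsub
          _ = hammingNorm y := rfl
      rcases hcase with h0 | h0
      · have e1 : (∑ i, y i * x1 i) = ∑ i, y i * x i := aux_dot_update_zero h0 x b
        have e3 : (∑ i, y i * x3 i) = ∑ i, y i * x2 i := by
          rw [hx3, Function.update_comm hjk, hx2]
          exact aux_dot_update_zero h0 _ b
        rw [e1, e3]
        ring
      · have e2 : (∑ i, y i * x2 i) = ∑ i, y i * x i := aux_dot_update_zero h0 x c
        have e3 : (∑ i, y i * x3 i) = ∑ i, y i * x1 i := aux_dot_update_zero h0 _ c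
        rw [e2, e3]
        ring
  have expand : ((q : ℂ)) ^ n * ((if x ∈ D then (1:ℂ) else 0) + (if x3 ∈ D then (1:ℂ) else 0)
      - (if x1 ∈ D then (1:ℂ) else 0) - (if x2 ∈ D then (1:ℂ) else 0)) = 0 := by
    have i0 := aux_inversion hω D x
    have i1 := aux_inversion hω D x1
    have i2 := aux_inversion hω D x2
    have i3 := aux_inversion hω D x3
    have hsum : ∑ y : Fin n → ZMod q, (∑ z ∈ D, ω ^ (∑ i, y i * z i).val) *
        ((ω ^ (∑ i, y i * x i).val)⁻¹ + (ω ^ (∑ i, y i * x3 i).val)⁻¹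
          - (ω ^ (∑ i, y i * x1 i).val)⁻¹ - (ω ^ (∑ i, y i * x2 i).val)⁻¹)
        = ((q : ℂ)) ^ n * ((if x ∈ D then (1:ℂ) else 0) + (if x3 ∈ D then (1:ℂ) else 0)
          - (if x1 ∈ D then (1:ℂ) else 0) - (if x2 ∈ D then (1:ℂ) else 0)) := by
      simp only [mul_add, mul_sub, Finset.sum_add_distrib, Finset.sum_sub_distrib]
      rw [i0, i1, i2, i3]
    rw [← hsum, key]
  have hq0 : ((q : ℂ)) ^ n ≠ 0 := pow_ne_zero n (Nat.cast_ne_zero.mpr (NeZero.ne q))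
  have := (mul_eq_zero.mp expand).resolve_left hq0
  linear_combination this

/-- If `z`, `update z j b`, `update z k c` are all in a reverse design (with `j ≠ k`),
then so is the double update. -/
lemma aux_closure (hω : IsPrimitiveRoot ω q) {D : Finset (Fin n → ZMod q)}
    (hD : HammingRevDesign q n ω D) {x : Fin n → ZMod q} {j k : Fin n} (hjk : j ≠ k)
    {b c : ZMod q} (h0 : x ∈ D) (h1 : Function.update x j b ∈ D)
    (h2 : Function.update x k c ∈ D) :
    Function.update (Function.update x j b) k c ∈ D := by
  have := aux_second_diff hω hD x hjk b c
  rw [if_pos h0, if_pos h1, if_pos h2] at this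
  by_contra h3
  rw [if_neg h3] at this
  norm_num at this

/-- A point of a reverse design cannot have "exits" in two different directions. -/
lemma aux_no_two_exits (hω : IsPrimitiveRoot ω q) {D : Finset (Fin n → ZMod q)}
    (hD : HammingRevDesign q n ω D) {x : Fin n → ZMod q} {j k : Fin n} (hjk : j ≠ k)
    {b c : ZMod q} (h0 : x ∈ D) (h1 : Function.update x j b ∉ D)
    (h2 : Function.update x k c ∉ D) : False := by
  have := aux_second_diff hω hD x hjk b c
  rw [if_pos h0, if_neg h1, if_neg h2] at this
  by_cases h3 : Function.update (Function.update x j b) k c ∈ D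
  · rw [if_pos h3] at this; norm_num at this
  · rw [if_neg h3] at this; norm_num at this

end SecondDiff

section Main

variable {q n : ℕ} [NeZero q] {ω : ℂ}

/-- Auxiliary predicate: `z` is in `D` and every single-coordinate change of `z`
away from coordinate `j` stays in `D`. -/
def auxP (D : Finset (Fin n → ZMod q)) (j : Fin n) (z : Fin n → ZMod q) : Prop :=
  z ∈ D ∧ ∀ k, k ≠ j → ∀ c, Function.update z k c ∈ D

lemma aux_preserve (hω : IsPrimitiveRoot ω q) {D : Finset (Fin n → ZMod q)}
    (hD : HammingRevDesign q n ω D) {j : Fin n} {z : Fin n → ZMod q}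
    (hP : auxP D j z) {k : Fin n} (hk : k ≠ j) (c : ZMod q) :
    auxP D j (Function.update z k c) := by
  refine ⟨hP.2 k hk c, ?_⟩
  intro k' hk' c'
  by_cases hkk : k' = k
  · subst hkk
    rw [Function.update_idem]
    exact hP.2 k' hk' c'
  · exact aux_closure hω hD (fun h => hkk h.symm) hP.1 (hP.2 k hk c) (hP.2 k' hk' c')

lemma aux_reach (hω : IsPrimitiveRoot ω q) {D : Finset (Fin n → ZMod q)}
    (hD : HammingRevDesign q n ω D) {j : Fin n} {x : Fin n → ZMod q}
    (hP : auxP D j x) :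
    ∀ m : ℕ, ∀ z : Fin n → ZMod q,
      (Finset.univ.filter fun k => z k ≠ x k).card ≤ m → z j = x j → auxP D j z := by
  intro m
  induction m with
  | zero =>
    intro z hc hzj
    have hz : z = x := by
      funext k
      by_contra hk
      have : k ∈ Finset.univ.filter fun k => z k ≠ x k := by simp [hk]
      rw [Finset.card_eq_zero.mp (Nat.le_zero.mp hc)] at this
      exact absurd this (Finset.notMem_empty k)
    exact hz ▸ hP
  | succ m ih =>
    intro z hc hzj
    by_cases hzx : z = x
    · exact hzx ▸ hP
    have hex : ∃ k, z k ≠ x k := by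
      by_contra h
      push_neg at h
      exact hzx (funext h)
    obtain ⟨k, hk⟩ := hex
    have hkj : k ≠ j := fun h => hk (h ▸ hzj)
    set z' := Function.update z k (x k) with hz'
    have hz'j : z' j = x j := by
      rw [hz', Function.update_of_ne (fun h => hkj h.symm)]
      exact hzj
    have hsub : (Finset.univ.filter fun i => z' i ≠ x i)
        ⊆ (Finset.univ.filter fun i => z i ≠ x i).erase k := by
      intro i hi
      simp only [Finset.mem_filter, Finset.mem_univ, true_and] at hi
      have hik : i ≠ k := by
        intro h
        subst h
        rw [hz', Function.update_self] at hi
        exact hi rfl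
      rw [Finset.mem_erase]
      refine ⟨hik, ?_⟩
      simp only [Finset.mem_filter, Finset.mem_univ, true_and]
      rwa [hz', Function.update_of_ne hik] at hi
    have hcard : (Finset.univ.filter fun i => z' i ≠ x i).card ≤ m := by
      refine le_trans (Finset.card_le_card hsub) ?_
      rw [Finset.card_erase_of_mem (by simp [hk])]
      exact Nat.sub_le_sub_right hc 1
    have hPz' := ih z' hcard hz'j
    have hzz : z = Function.update z' k (z k) := by
      funext i
      by_cases h : i = k
      · subst h
        rw [Function.update_self]
      · rw [Function.update_of_ne h, hz', Function.update_of_ne h]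
    rw [hzz]
    exact aux_preserve hω hD hPz' hkj (z k)

lemma aux_main (hω : IsPrimitiveRoot ω q) (hn : 1 ≤ n) {D : Finset (Fin n → ZMod q)}
    (hD : HammingRevDesign q n ω D) {x : Fin n → ZMod q} (hx : x ∈ D) :
    ∃ j : Fin n, x ∈ hammingSlab q n j (x j) ∧ hammingSlab q n j (x j) ⊆ D := by
  have hPex : ∃ j, auxP D j x := by
    by_cases h : ∃ j b, Function.update x j b ∉ D
    · obtain ⟨j, b, hjb⟩ := h
      refine ⟨j, hx, fun k hk c => ?_⟩
      by_contra hc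
      exact aux_no_two_exits hω hD (fun h' => hk h'.symm) hx hjb hc
    · push_neg at h
      exact ⟨⟨0, hn⟩, hx, fun k _ c => h k c⟩
  obtain ⟨j, hP⟩ := hPex
  refine ⟨j, by simp [hammingSlab], ?_⟩
  intro z hz
  have hzj : z j = x j := by
    simpa [hammingSlab] using hz
  exact (aux_reach hω hD hP (Finset.univ.filter fun k => z k ≠ x k).card z le_rfl hzj).1

end Main

/-- The sets `D_{i,a} = {x : x_i = a}` are reverse designs of `H(n,q)`; each is a
minimal reverse design; and every reverse design is a union of sets of this form. -/
theorem hammingSlab_minimal_reverse_designs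
    (q n : ℕ) [NeZero q] (hq : 2 ≤ q) (hn : 1 ≤ n)
    (ω : ℂ) (hω : IsPrimitiveRoot ω q) :
    (∀ (i : Fin n) (a : ZMod q), HammingRevDesign q n ω (hammingSlab q n i a)) ∧
    (∀ (i : Fin n) (a : ZMod q), ∀ D' ⊆ hammingSlab q n i a,
        HammingRevDesign q n ω D' → D'.Nonempty → D' = hammingSlab q n i a) ∧
    (∀ D : Finset (Fin n → ZMod q), HammingRevDesign q n ω D →
        ∀ x ∈ D, ∃ (i : Fin n) (a : ZMod q),
          x ∈ hammingSlab q n i a ∧ hammingSlab q n i a ⊆ D) := by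
  haveI : Fact (1 < q) := ⟨hq⟩
  refine ⟨?_, ?_, ?_⟩
  · intro i a y hy
    exact aux_slab_design hω i a y hy
  · intro i a D' hsub hD' hne
    obtain ⟨x, hx⟩ := hne
    obtain ⟨j, hxj, hslab⟩ := aux_main hω hn hD' hx
    have hji : j = i := by
      by_contra hji
      set w : Fin n → ZMod q := Function.update (fun _ => x j) i (a + 1) with hw
      have hwj : w ∈ hammingSlab q n j (x j) := by
        simp only [hammingSlab, Finset.mem_filter, Finset.mem_univ, true_and]
        rw [hw, Function.update_of_ne hji]
      have hwi : w i = a := by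
        have := hsub (hslab hwj)
        simpa [hammingSlab] using this
      rw [hw, Function.update_self] at hwi
      have : (1 : ZMod q) = 0 := by linear_combination hwi
      exact one_ne_zero this
    subst hji
    have hxa : x j = a := by
      have := hsub hx
      simpa [hammingSlab] using this
    refine Finset.Subset.antisymm hsub ?_
    rw [← hxa]
    exact hslab
  · intro D hD x hx
    obtain ⟨j, h1, h2⟩ := aux_main hω hn hD hx
    exact ⟨j, x j, h1, h2⟩
end

section
/- Let G be a finite simple d-regular graph (d ≥ 1) on vertex set V with adjacency matrix A, and let D ⊆ V be nonempty. Suppose that for every real μ ≠ 0 and every x : V → ℝ with A x = μ x and ∑_{v∈V} x(v) = 0, one has ∑_{v∈D} x(v) = 0. Then m = d·|D|/|V| is a positive integer and every vertex of G is adjacent to exactly m vertices of D; in particular every vertex of G has a neighbor in D, so the 1-neighborhood of D is all of V. -/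
open Finset Matrix

open RealInnerProductSpace

/-- If `G` is a `d`-regular graph and the nonempty set `D` averages every eigenvector
of the adjacency matrix with nonzero eigenvalue that is orthogonal to the all-ones
vector (i.e. `D` is an extremal design in random walk order), then
`m = d·|D|/|V|` is a positive integer and every vertex of `G` is adjacent to exactly
`m` vertices of `D`; in particular the 1-neighborhood of `D` is all of `V`. -/
theorem extremal_random_walk_design_neighbors
    {V : Type*} [Fintype V] [DecidableEq V] (G : SimpleGraph V) [DecidableRel G.Adj]
    (d : ℕ) (hd : 1 ≤ d) (hreg : G.IsRegularOfDegree d)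
    (D : Finset V) (hne : D.Nonempty)
    (hD : ∀ μ : ℝ, μ ≠ 0 → ∀ x : V → ℝ, G.adjMatrix ℝ *ᵥ x = μ • x →
        ∑ v, x v = 0 → ∑ v ∈ D, x v = 0) :
    ∃ m : ℕ, 0 < m ∧ m * Fintype.card V = d * D.card ∧
      (∀ v : V, (D.filter fun w => G.Adj v w).card = m) ∧
      (∀ v : V, ∃ w ∈ D, G.Adj v w) := by
  classical
  have hV : Nonempty V := ⟨hne.choose⟩
  have hn0 : 0 < Fintype.card V := Fintype.card_pos
  have hnR : (Fintype.card V : ℝ) ≠ 0 := Nat.cast_ne_zero.mpr hn0.ne'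
  set c : ℝ := (D.card : ℝ) / (Fintype.card V) with hc
  set A : Matrix V V ℝ := G.adjMatrix ℝ with hAdef
  set T : EuclideanSpace ℝ V →ₗ[ℝ] EuclideanSpace ℝ V := Matrix.toEuclideanLin A with hTdef
  have hTapp : ∀ (x : EuclideanSpace ℝ V) (v : V), T x v = (A *ᵥ fun u => x u) v :=
    fun x v => rfl
  have hherm : A.IsHermitian := by
    ext i j
    simp [hAdef, Matrix.conjTranspose_apply, SimpleGraph.adj_comm]
  have hsym : T.IsSymmetric := Matrix.isHermitian_iff_isSymmetric.mp hherm
  set z : EuclideanSpace ℝ V := WithLp.toLp 2 (fun v => (if v ∈ D then (1 : ℝ) else 0) - c) with hzdef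
  -- z is orthogonal to every eigenvector with nonzero eigenvalue
  have hortho : ∀ (μ : ℝ), μ ≠ 0 → ∀ x : EuclideanSpace ℝ V,
      T x = μ • x → ⟪z, x⟫ = 0 := by
    intro μ hμ x hx
    set x' : V → ℝ := fun v => x v with hx'def
    have hmul : A *ᵥ x' = μ • x' := by
      funext v
      have h := congrArg (fun y : EuclideanSpace ℝ V => y v) hx
      simpa [hTapp] using h
    set s : ℝ := ∑ v, x' v with hsdef
    have hA1 : (fun _ : V => (1 : ℝ)) ᵥ* A = fun _ => (d : ℝ) := by
      funext v
      rw [hAdef, SimpleGraph.adjMatrix_vecMul_apply, Finset.sum_const,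
        G.card_neighborFinset_eq_degree, hreg v]
      simp
    have hds : (d : ℝ) * s = μ * s := by
      have h1 := Matrix.dotProduct_mulVec (fun _ : V => (1 : ℝ)) A x'
      rw [hmul, hA1] at h1
      simp only [dotProduct, Pi.smul_apply, smul_eq_mul, one_mul] at h1
      rw [← Finset.mul_sum, ← Finset.mul_sum] at h1
      exact h1.symm
    set y : V → ℝ := fun v => x' v - s / (Fintype.card V) with hydef
    have hy : A *ᵥ y = μ • y := by
      have : y = x' - Function.const V (s / Fintype.card V) := rfl
      funext v
      rw [this, Matrix.mulVec_sub]
      have h2 : (A *ᵥ Function.const V (s / Fintype.card V)) v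
          = d * (s / Fintype.card V) := by
        rw [hAdef]; exact SimpleGraph.adjMatrix_mulVec_const_apply_of_regular hreg
      simp only [Pi.sub_apply, h2, hmul, Pi.smul_apply, smul_eq_mul, Function.const_apply]
      have : (d : ℝ) * (s / Fintype.card V) = μ * (s / Fintype.card V) := by
        rw [← mul_div_assoc, ← mul_div_assoc, hds]
      rw [this]; ring
    have hysum : ∑ v, y v = 0 := by
      simp only [hydef, Finset.sum_sub_distrib, Finset.sum_const, Finset.card_univ,
        nsmul_eq_mul]
      rw [mul_div_cancel₀ _ hnR]
      simp [hsdef]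
    have hDy := hD μ hμ y hy hysum
    have hDx : ∑ v ∈ D, x' v = c * s := by
      have : ∑ v ∈ D, y v = (∑ v ∈ D, x' v) - D.card * (s / Fintype.card V) := by
        simp [hydef, Finset.sum_sub_distrib]
      rw [this] at hDy
      have : (D.card : ℝ) * (s / Fintype.card V) = c * s := by
        rw [hc]; ring
      linarith [hDy, this]
    have hinner : ⟪z, x⟫ = (∑ v ∈ D, x' v) - c * s := by
      rw [PiLp.inner_apply]
      simp only [RCLike.inner_apply, starRingEnd_apply, star_trivial]
      have : ∀ v, z v * x v = (if v ∈ D then x' v else 0) - c * x' v := by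
        intro v
        by_cases h : v ∈ D <;> simp [hzdef, h, hx'def, sub_mul]
      rw [Finset.sum_congr rfl fun v _ => mul_comm (x v) (z v)]
      rw [Finset.sum_congr rfl fun v _ => this v, Finset.sum_sub_distrib,
        Finset.sum_ite_mem, Finset.univ_inter, ← Finset.mul_sum, ← hsdef]
    rw [hinner, hDx, sub_self]
  -- spectral decomposition: T z = 0
  have hsup : (⨆ μ : ℝ, Module.End.eigenspace T μ) = ⊤ :=
    Submodule.orthogonal_eq_bot_iff.mp hsym.orthogonalComplement_iSup_eigenspaces_eq_bot
  have key : ∀ w : EuclideanSpace ℝ V, ⟪z, T w⟫ = 0 := by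
    intro w
    have hw : w ∈ ⨆ μ : ℝ, Module.End.eigenspace T μ := hsup ▸ Submodule.mem_top
    refine Submodule.iSup_induction (motive := fun u => ⟪z, T u⟫ = 0) _ hw ?_ ?_ ?_
    · intro μ u hu
      rw [Module.End.mem_eigenspace_iff] at hu
      rcases eq_or_ne μ 0 with h | h
      · rw [hu, h]; simp
      · rw [hu, real_inner_smul_right, hortho μ h u hu, mul_zero]
    · simp
    · intro a b ha hb
      rw [map_add, inner_add_right, ha, hb, add_zero]
  have hTz : T z = 0 := by
    have h0 : ⟪T z, T z⟫ = 0 := by rw [hsym z (T z)]; exact key (T z)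
    exact inner_self_eq_zero.mp h0
  -- translate back: every vertex has exactly d*c neighbors in D
  have hcount : ∀ v : V, ((D.filter fun w => G.Adj v w).card : ℝ) = d * c := by
    intro v
    have h0 : T z v = 0 := by rw [hTz]; rfl
    rw [hTapp] at h0
    rw [hAdef, SimpleGraph.adjMatrix_mulVec_apply] at h0
    have hfe : (G.neighborFinset v).filter (fun u => u ∈ D)
        = D.filter (fun w => G.Adj v w) := by
      ext u; simp [SimpleGraph.mem_neighborFinset, and_comm]
    have hsum : ∑ u ∈ G.neighborFinset v, z u
        = ((D.filter fun w => G.Adj v w).card : ℝ) - d * c := by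
      have : ∀ u, z u = (if u ∈ D then (1 : ℝ) else 0) - c := fun u => rfl
      rw [Finset.sum_congr rfl fun u _ => this u, Finset.sum_sub_distrib,
        Finset.sum_boole, hfe, Finset.sum_const, G.card_neighborFinset_eq_degree, hreg v,
        nsmul_eq_mul]
    rw [hsum] at h0
    linarith
  obtain ⟨w0, hw0⟩ := hne
  set m : ℕ := (D.filter fun w => G.Adj w0 w).card with hmdef
  have hall : ∀ v : V, (D.filter fun w => G.Adj v w).card = m := fun v => by
    exact_mod_cast (hcount v).trans (hcount w0).symm
  have hmn : m * Fintype.card V = d * D.card := by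
    have h : (m : ℝ) * Fintype.card V = (d : ℝ) * D.card := by
      rw [hcount w0, hc]; field_simp
    exact_mod_cast h
  have hmpos : 0 < m := by
    have hdD : 0 < d * D.card := Nat.mul_pos hd (Finset.card_pos.mpr ⟨w0, hw0⟩)
    rw [← hmn] at hdD
    exact Nat.pos_of_ne_zero fun h => by simp [h] at hdD
  refine ⟨m, hmpos, hmn, hall, fun v => ?_⟩
  obtain ⟨w, hw⟩ := Finset.card_pos.mp (by rw [hall v]; exact hmpos)
  exact ⟨w, (Finset.mem_filter.mp hw).1, (Finset.mem_filter.mp hw).2⟩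
end

section
/- Let n ≥ 2 be even and let D ⊆ (ℤ/2ℤ)^n be nonempty with ∑_{x∈D} (−1)^{y·x} = 0 for every y ∈ (ℤ/2ℤ)^n whose Hamming weight |y| satisfies |y| ≠ 0 and |y| ≠ n/2. Then 2^n divides n·|D|; consequently, if n = 2^t · b with b odd, then |D| ≥ 2^{n−t}. -/
open Finset Matrix

/-- The sign character of `ZMod 2`. -/
noncomputable def hcChi (z : ZMod 2) : ℝ := (-1) ^ z.val

lemma hcChi_add (a b : ZMod 2) : hcChi (a + b) = hcChi a * hcChi b := by
  unfold hcChi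
  rw [ZMod.val_add, ← neg_one_pow_eq_pow_mod_two, pow_add]

lemma hcChi_natCast (k : ℕ) : hcChi (k : ZMod 2) = (-1 : ℝ) ^ k := by
  unfold hcChi
  rw [ZMod.val_natCast, ← neg_one_pow_eq_pow_mod_two]

lemma hcChi_zero : hcChi 0 = 1 := by
  simpa using hcChi_natCast 0

lemma hcChi_one : hcChi 1 = -1 := by
  simpa using hcChi_natCast 1

/-- The summand in the design condition equals the character. -/
lemma hc_pow_eq_chi {n : ℕ} (y x : Fin n → ZMod 2) :
    (-1 : ℝ) ^ (∑ i, (y i).val * (x i).val) = hcChi (∑ i, y i * x i) := by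
  rw [← hcChi_natCast]
  congr 1
  push_cast [ZMod.natCast_val, ZMod.cast_id]
  rfl

/-- Orthogonality of characters on the hypercube. -/
lemma hc_orth (n : ℕ) (z : Fin n → ZMod 2) :
    ∑ y : Fin n → ZMod 2, hcChi (∑ j, y j * z j)
      = if z = 0 then (2 : ℝ) ^ n else 0 := by
  classical
  by_cases hz : z = 0
  · subst hz
    simp [hcChi_zero, Finset.card_univ]
  · simp only [if_neg hz]
    obtain ⟨i, hi⟩ : ∃ i, z i ≠ 0 := by
      by_contra h
      push_neg at h
      exact hz (funext h)
    have hzi : z i = 1 := by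
      have : ∀ a : ZMod 2, a ≠ 0 → a = 1 := by decide
      exact this _ hi
    set δ : Fin n → ZMod 2 := Function.update (0 : Fin n → ZMod 2) i 1 with hδ
    have key : ∀ y : Fin n → ZMod 2,
        hcChi (∑ j, (δ + y) j * z j) = - hcChi (∑ j, y j * z j) := by
      intro y
      have hsum : ∑ j, (δ + y) j * z j = 1 + ∑ j, y j * z j := by
        have : ∑ j, (δ + y) j * z j = ∑ j, (δ j * z j + y j * z j) := by
          apply Finset.sum_congr rfl
          intro j _
          simp [add_mul]
        rw [this, Finset.sum_add_distrib]
        congr 1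
        have : ∀ j, δ j * z j = if j = i then z i else 0 := by
          intro j
          by_cases hji : j = i
          · subst hji; simp [hδ]
          · simp [hδ, Function.update_apply, hji]
        rw [Finset.sum_congr rfl (fun j _ => this j), Finset.sum_ite_eq' Finset.univ i]
        simp [hzi]
      rw [hsum, hcChi_add, hcChi_one]
      ring
    have hbij : ∑ y : Fin n → ZMod 2, hcChi (∑ j, y j * z j)
        = ∑ y : Fin n → ZMod 2, hcChi (∑ j, (δ + y) j * z j) := by
      exact (Fintype.sum_equiv (Equiv.addLeft δ) _ _ (fun y => rfl)).symm
    have h2 : ∑ y : Fin n → ZMod 2, hcChi (∑ j, y j * z j)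
        = - ∑ y : Fin n → ZMod 2, hcChi (∑ j, y j * z j) := by
      calc ∑ y : Fin n → ZMod 2, hcChi (∑ j, y j * z j)
          = ∑ y : Fin n → ZMod 2, hcChi (∑ j, (δ + y) j * z j) := hbij
        _ = ∑ y : Fin n → ZMod 2, - hcChi (∑ j, y j * z j) :=
            Finset.sum_congr rfl (fun y _ => key y)
        _ = - ∑ y : Fin n → ZMod 2, hcChi (∑ j, y j * z j) := by
            rw [Finset.sum_neg_distrib]
    linarith

lemma hc_coeff {n : ℕ} (y : Fin n → ZMod 2) :
    ∑ i, hcChi (y i) = (n : ℝ) - 2 * hammingNorm y := by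
  classical
  have : ∀ i, hcChi (y i) = 1 - 2 * (if y i ≠ 0 then (1 : ℝ) else 0) := by
    intro i
    by_cases h : y i = 0
    · simp [h, hcChi_zero]
    · have : ∀ a : ZMod 2, a ≠ 0 → a = 1 := by decide
      rw [this _ h, hcChi_one]
      simp [h]
      ring
  rw [Finset.sum_congr rfl (fun i _ => this i), Finset.sum_sub_distrib]
  simp only [Finset.sum_const, Finset.card_univ, Fintype.card_fin, nsmul_eq_mul, mul_one,
    ← Finset.mul_sum]
  congr 2
  rw [Finset.sum_boole]
  rfl

/-- For even `n`, if `D ⊆ (ℤ/2ℤ)^n` is a nonempty extremal design of the hypercube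
`H(n,2)` in random walk order — it averages every eigenvector `χ_y` with
`|y| ≠ 0` and `|y| ≠ n/2` — then `2^n` divides `n·|D|`; consequently if `n = 2^t·b`
with `b` odd then `|D| ≥ 2^{n−t}`. -/
theorem hypercube_extremal_random_walk_design_bound
    (n : ℕ) (hn : 2 ≤ n) (heven : Even n)
    (D : Finset (Fin n → ZMod 2)) (hne : D.Nonempty)
    (hD : ∀ y : Fin n → ZMod 2, hammingNorm y ≠ 0 → hammingNorm y ≠ n / 2 →
        ∑ x ∈ D, (-1 : ℝ) ^ (∑ i, (y i).val * (x i).val) = 0) :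
    2 ^ n ∣ n * D.card ∧
      ∀ t b : ℕ, Odd b → n = 2 ^ t * b → 2 ^ (n - t) ≤ D.card := by
  classical
  -- the design condition in character form
  have hD' : ∀ y : Fin n → ZMod 2, hammingNorm y ≠ 0 → hammingNorm y ≠ n / 2 →
      ∑ x ∈ D, hcChi (∑ i, y i * x i) = 0 := by
    intro y h1 h2
    rw [← Finset.sum_congr rfl (fun x _ => hc_pow_eq_chi y x)]
    exact hD y h1 h2
  set δ : Fin n → (Fin n → ZMod 2) :=
    fun i => Function.update (0 : Fin n → ZMod 2) i 1 with hδ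
  set N := (Finset.univ.filter fun i : Fin n => δ i ∈ D).card with hN
  have key : n * D.card = 2 ^ n * N := by
    have hA : ∑ y : Fin n → ZMod 2,
        ((n : ℝ) - 2 * hammingNorm y) * ∑ x ∈ D, hcChi (∑ i, y i * x i)
          = n * D.card := by
      rw [Finset.sum_eq_single (0 : Fin n → ZMod 2)]
      · simp [hcChi_zero, hammingNorm]
      · intro y _ hy
        by_cases h2 : hammingNorm y = n / 2
        · have hcoef : (n : ℝ) - 2 * hammingNorm y = 0 := by
            have h3 : 2 * (n / 2) = n := Nat.two_mul_div_two_of_even heven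
            have h4 : ((2 * (n / 2) : ℕ) : ℝ) = (n : ℝ) := by rw [h3]
            push_cast at h4
            rw [h2]
            linarith
          rw [hcoef, zero_mul]
        · have h1 : hammingNorm y ≠ 0 := by
            simp [hammingNorm_eq_zero, hy]
          rw [hD' y h1 h2, mul_zero]
      · intro h
        exact absurd (Finset.mem_univ _) h
    have hB : ∑ y : Fin n → ZMod 2,
        ((n : ℝ) - 2 * hammingNorm y) * ∑ x ∈ D, hcChi (∑ i, y i * x i)
          = 2 ^ n * N := by
      have step1 : ∀ y : Fin n → ZMod 2,
          ((n : ℝ) - 2 * hammingNorm y) * ∑ x ∈ D, hcChi (∑ i, y i * x i)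
            = ∑ i, ∑ x ∈ D, hcChi (y i) * hcChi (∑ j, y j * x j) := by
        intro y
        rw [← hc_coeff y, Finset.sum_mul]
        congr 1
        ext i
        rw [Finset.mul_sum]
      rw [Finset.sum_congr rfl (fun y _ => step1 y), Finset.sum_comm]
      have step2 : ∀ i : Fin n,
          ∑ y : Fin n → ZMod 2, ∑ x ∈ D, hcChi (y i) * hcChi (∑ j, y j * x j)
            = if δ i ∈ D then (2 : ℝ) ^ n else 0 := by
        intro i
        rw [Finset.sum_comm]
        have inner : ∀ x : Fin n → ZMod 2,
            ∑ y : Fin n → ZMod 2, hcChi (y i) * hcChi (∑ j, y j * x j)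
              = if x = δ i then (2 : ℝ) ^ n else 0 := by
          intro x
          have hy : ∀ y : Fin n → ZMod 2,
              hcChi (y i) * hcChi (∑ j, y j * x j)
                = hcChi (∑ j, y j * (x + δ i) j) := by
            intro y
            rw [← hcChi_add]
            congr 1
            have : ∑ j, y j * (x + δ i) j = ∑ j, (y j * x j + y j * (δ i) j) := by
              apply Finset.sum_congr rfl
              intro j _
              simp [mul_add]
            rw [this, Finset.sum_add_distrib]
            rw [add_comm]
            congr 1
            have : ∀ j, y j * (δ i) j = if j = i then y i else 0 := by
              intro j
              by_cases hji : j = i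
              · subst hji; simp [hδ]
              · simp [hδ, Function.update_apply, hji]
            rw [Finset.sum_congr rfl (fun j _ => this j), Finset.sum_ite_eq' Finset.univ i]
            simp
          rw [Finset.sum_congr rfl (fun y _ => hy y), hc_orth]
          have : x + δ i = 0 ↔ x = δ i := by
            constructor
            · intro h
              funext j
              have := congrFun h j
              have h2 : ∀ a b : ZMod 2, a + b = 0 → a = b := by decide
              exact h2 _ _ this
            · intro h
              subst h
              funext j
              have h2 : ∀ a : ZMod 2, a + a = 0 := by decide
              exact h2 _
          simp only [this]
        rw [Finset.sum_congr rfl (fun x _ => inner x), Finset.sum_ite_eq']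
      rw [Finset.sum_congr rfl (fun i _ => step2 i), Finset.sum_ite, Finset.sum_const,
        Finset.sum_const_zero, add_zero, nsmul_eq_mul, hN]
      ring
    have := hA.symm.trans hB
    exact_mod_cast this
  refine ⟨⟨N, key⟩, ?_⟩
  intro t b hb hnb
  have htn : t ≤ n := by
    have h1 : 2 ^ t ≤ n := by
      rw [hnb]
      exact Nat.le_mul_of_pos_right _ hb.pos
    calc t ≤ 2 ^ t := Nat.le_of_lt (Nat.lt_two_pow_self (n := t))
      _ ≤ n := h1
  have hdvd : 2 ^ (n - t) ∣ b * D.card := by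
    have h1 : 2 ^ t * 2 ^ (n - t) ∣ 2 ^ t * (b * D.card) := by
      rw [← pow_add, Nat.add_sub_cancel' htn, ← mul_assoc, ← hnb]
      exact ⟨N, key⟩
    exact (mul_dvd_mul_iff_left (by positivity : (2:ℕ) ^ t ≠ 0)).mp h1
  have hcop : Nat.Coprime (2 ^ (n - t)) b :=
    Nat.Coprime.pow_left _ (Nat.coprime_two_left.mpr hb)
  have hdvd2 : 2 ^ (n - t) ∣ D.card := (Nat.Coprime.dvd_of_dvd_mul_left hcop) hdvd
  exact Nat.le_of_dvd (Finset.card_pos.mpr hne) hdvd2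
end

section
/- Let 1 ≤ t ≤ k and 2k ≤ n. A subset D of the k-element subsets of {1,…,n} is a combinatorial t-design — i.e., there exists λ such that every t-element subset of {1,…,n} is contained in exactly λ members of D — if and only if ∑_{S∈D} φ(S) = 0 for every eigenvector φ of the graph Laplacian of the Johnson graph J(n,k) whose eigenvalue μ satisfies 0 < μ ≤ t(n+1−t). -/
open Finset Matrix

/-- The Johnson graph `J(n,k)`: vertices are the `k`-element subsets of `{1,…,n}`,
two distinct vertices adjacent exactly when their intersection has `k−1` elements. -/
def johnsonGraph (n k : ℕ) : SimpleGraph {S : Finset (Fin n) // S.card = k} where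
  Adj S T := S ≠ T ∧ (S.1 ∩ T.1).card = k - 1
  symm := ⟨fun S T h => ⟨Ne.symm h.1, by rw [Finset.inter_comm]; exact h.2⟩⟩
  loopless := ⟨fun S h => h.1 rfl⟩

instance (n k : ℕ) : DecidableRel (johnsonGraph n k).Adj :=
  fun S T => inferInstanceAs (Decidable (S ≠ T ∧ (S.1 ∩ T.1).card = k - 1))

namespace JG
variable {n : ℕ}

variable {n : ℕ}

abbrev W (n : ℕ) := Finset (Fin n) → ℝ

def Up (n : ℕ) (x : W n) : W n := fun S => ∑ z ∈ S, x (S.erase z)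

def Down (n : ℕ) (x : W n) : W n := fun T => ∑ y ∈ Tᶜ, x (insert y T)

def Supp (j : ℕ) (x : W n) : Prop := ∀ T, T.card ≠ j → x T = 0

lemma up_zero : Up n (fun _ => 0) = fun _ => 0 := by
  funext S; simp [Up]

lemma down_zero : Down n (fun _ => 0) = fun _ => 0 := by
  funext S; simp [Down]

lemma up_pow_zero (a : ℕ) : (Up n)^[a] (fun _ => 0) = fun _ => 0 := by
  induction a with
  | zero => rfl
  | succ a ih => rw [Function.iterate_succ_apply, up_zero, ih]

lemma supp_up {j : ℕ} {x : W n} (h : Supp j x) : Supp (j+1) (Up n x) := by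
  intro T hT
  refine Finset.sum_eq_zero fun z hz => h _ ?_
  rw [Finset.card_erase_of_mem hz]
  intro hc
  apply hT
  have : 1 ≤ T.card := Finset.card_pos.2 ⟨z, hz⟩
  omega

lemma supp_down {j : ℕ} {x : W n} (h : Supp (j+1) x) : Supp j (Down n x) := by
  intro T hT
  refine Finset.sum_eq_zero fun y hy => h _ ?_
  rw [Finset.card_insert_of_notMem (Finset.mem_compl.1 hy)]
  omega

lemma supp_up_pow {j : ℕ} {x : W n} (h : Supp j x) (a : ℕ) :
    Supp (j+a) ((Up n)^[a] x) := by
  induction a with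
  | zero => exact h
  | succ a ih => rw [Function.iterate_succ_apply']; exact supp_up ih

lemma supp_down_pow {j : ℕ} {x : W n} (a : ℕ) (h : Supp (j+a) x) :
    Supp j ((Down n)^[a] x) := by
  induction a generalizing x with
  | zero => exact h
  | succ a ih =>
      rw [Function.iterate_succ_apply]
      exact ih (supp_down h)

/-- flag sum bijection -/
lemma flag_sum (F : Finset (Fin n) → Fin n → ℝ) :
    ∑ T : Finset (Fin n), ∑ y ∈ Tᶜ, F T y
      = ∑ T : Finset (Fin n), ∑ z ∈ T, F (T.erase z) z := by
  rw [Finset.sum_sigma' Finset.univ (fun T => Tᶜ) (fun T y => F T y),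
    Finset.sum_sigma' Finset.univ (fun T => T) (fun T z => F (T.erase z) z)]
  refine Finset.sum_nbij' (fun p => ⟨insert p.2 p.1, p.2⟩) (fun p => ⟨p.1.erase p.2, p.2⟩)
    ?_ ?_ ?_ ?_ ?_
  · rintro ⟨T, y⟩ hp
    simp only [Finset.mem_sigma, Finset.mem_univ, true_and, Finset.mem_compl] at hp ⊢
    exact Finset.mem_insert_self _ _
  · rintro ⟨T, z⟩ hp
    simp only [Finset.mem_sigma, Finset.mem_univ, true_and, Finset.mem_compl] at hp ⊢
    exact Finset.notMem_erase _ _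
  · rintro ⟨T, y⟩ hp
    simp only [Finset.mem_sigma, Finset.mem_univ, true_and, Finset.mem_compl] at hp
    simp [Finset.erase_insert hp]
  · rintro ⟨T, z⟩ hp
    simp only [Finset.mem_sigma, Finset.mem_univ, true_and] at hp
    simp [Finset.insert_erase hp]
  · rintro ⟨T, y⟩ hp
    simp only [Finset.mem_sigma, Finset.mem_univ, true_and, Finset.mem_compl] at hp
    simp [Finset.erase_insert hp]

lemma adjoint (x y : W n) :
    ∑ T : Finset (Fin n), Down n x T * y T = ∑ T : Finset (Fin n), x T * Up n y T := by
  have h1 : ∀ T : Finset (Fin n), Down n x T * y T = ∑ y' ∈ Tᶜ, x (insert y' T) * y T := by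
    intro T; rw [Down, Finset.sum_mul]
  have h2 : ∀ T : Finset (Fin n), x T * Up n y T = ∑ z ∈ T, x T * y (T.erase z) := by
    intro T; rw [Up, Finset.mul_sum]
  simp only [h1, h2]
  rw [flag_sum (fun T y' => x (insert y' T) * y T)]
  refine Finset.sum_congr rfl fun T _ => Finset.sum_congr rfl fun z hz => ?_
  rw [Finset.insert_erase hz]

lemma adjoint_pow (a : ℕ) (x y : W n) :
    ∑ T : Finset (Fin n), (Down n)^[a] x T * y T
      = ∑ T : Finset (Fin n), x T * (Up n)^[a] y T := by
  induction a generalizing y with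
  | zero => rfl
  | succ a ih =>
      rw [Function.iterate_succ_apply']
      rw [adjoint ((Down n)^[a] x) y, ih (Up n y), Function.iterate_succ_apply]



lemma card_compl' (T : Finset (Fin n)) : (Tᶜ : Finset (Fin n)).card = n - T.card := by
  simp [Finset.card_compl]

lemma card_le_n (T : Finset (Fin n)) : T.card ≤ n := by
  simpa using Finset.card_le_card (Finset.subset_univ T)

lemma up_addf (x y : W n) (S : Finset (Fin n)) :
    Up n (fun T => x T + y T) S = Up n x S + Up n y S := by
  simp [Up, Finset.sum_add_distrib]

lemma up_mulc (c : ℝ) (x : W n) (S : Finset (Fin n)) :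
    Up n (fun T => c * x T) S = c * Up n x S := by
  simp [Up, Finset.mul_sum]

lemma down_mulc (c : ℝ) (x : W n) (S : Finset (Fin n)) :
    Down n (fun T => c * x T) S = c * Down n x S := by
  simp [Down, Finset.mul_sum]

lemma up_pow_mulc (a : ℕ) (c : ℝ) (x : W n) :
    (Up n)^[a] (fun T => c * x T) = fun S => c * (Up n)^[a] x S := by
  induction a with
  | zero => rfl
  | succ a ih =>
      rw [Function.iterate_succ_apply', ih, Function.iterate_succ_apply']
      funext S
      exact up_mulc c _ S

lemma up_mul_linear (α : ℝ) (x : W n) (S : Finset (Fin n)) :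
    Up n (fun T => (α - 2 * (T.card : ℝ)) * x T) S
      = (α - 2 * (S.card : ℝ) + 2) * Up n x S := by
  rw [Up, Up, Finset.mul_sum]
  refine Finset.sum_congr rfl fun z hz => ?_
  rw [Finset.card_erase_of_mem hz]
  have h1 : 1 ≤ S.card := Finset.card_pos.2 ⟨z, hz⟩
  have : ((S.card - 1 : ℕ) : ℝ) = (S.card : ℝ) - 1 := by
    push_cast [h1]; ring
  rw [this]; ring

/-- single commutator, pointwise -/
lemma down_up (x : W n) (T : Finset (Fin n)) :
    Down n (Up n x) T = Up n (Down n x) T + ((n : ℝ) - 2 * T.card) * x T := by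
  have hL : Down n (Up n x) T
      = ∑ y ∈ Tᶜ, (x T + ∑ z ∈ T, x (insert y (T.erase z))) := by
    refine Finset.sum_congr rfl fun y hy => ?_
    have hyT : y ∉ T := Finset.mem_compl.1 hy
    rw [Up, Finset.sum_insert hyT, Finset.erase_insert hyT]
    congr 1
    refine Finset.sum_congr rfl fun z hz => ?_
    rw [Finset.erase_insert_of_ne (by rintro rfl; exact hyT hz)]
  have hR : Up n (Down n x) T
      = ∑ z ∈ T, (x T + ∑ y ∈ Tᶜ, x (insert y (T.erase z))) := by
    refine Finset.sum_congr rfl fun z hz => ?_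
    rw [Down, Finset.compl_erase, Finset.sum_insert (by simp [hz]),
      Finset.insert_erase hz]
  rw [hL, hR, Finset.sum_add_distrib, Finset.sum_add_distrib, Finset.sum_const,
    Finset.sum_const, Finset.sum_comm, card_compl']
  have h1 : ((n - T.card : ℕ) : ℝ) = (n : ℝ) - T.card := by
    push_cast [card_le_n T]; ring
  simp only [nsmul_eq_mul]
  rw [h1]
  ring

/-- iterated commutator, pointwise; for `a = 0` the extra term vanishes. -/
lemma down_up_pow (a : ℕ) (x : W n) (T : Finset (Fin n)) :
    Down n ((Up n)^[a] x) T
      = (Up n)^[a] (Down n x) T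
        + (a : ℝ) * ((n : ℝ) + a - 1 - 2 * T.card) * (Up n)^[a-1] x T := by
  induction a generalizing T with
  | zero => simp
  | succ a ih =>
      rw [Function.iterate_succ_apply', down_up ((Up n)^[a] x) T]
      have hUp : Up n (Down n ((Up n)^[a] x)) T
          = Up n (fun T' => (Up n)^[a] (Down n x) T'
              + (a : ℝ) * ((n : ℝ) + a - 1 - 2 * T'.card) * (Up n)^[a-1] x T') T := by
        congr 1; funext T'; exact ih T'
      rw [hUp]
      have : Up n (fun T' => (Up n)^[a] (Down n x) T'
              + (a : ℝ) * ((n : ℝ) + a - 1 - 2 * T'.card) * (Up n)^[a-1] x T') T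
          = Up n ((Up n)^[a] (Down n x)) T
            + (a : ℝ) * Up n (fun T' => (((n:ℝ) + a - 1) - 2 * T'.card) * (Up n)^[a-1] x T') T := by
        rw [← up_mulc (a : ℝ)]
        rw [← up_addf]
        congr 1; funext T'
        ring
      rw [this, up_mul_linear ((n:ℝ) + a - 1) ((Up n)^[a-1] x) T,
        ← Function.iterate_succ_apply' (Up n) a (Down n x)]
      rcases Nat.eq_zero_or_pos a with h0 | hpos
      · subst h0; push_cast; simp
      · have hsa : a - 1 + 1 = a := Nat.succ_pred_eq_of_pos hpos
        have : (Up n)^[a] x T = (Up n)^[(a-1)+1] x T := by rw [hsa]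
        rw [Function.iterate_succ_apply'] at this
        rw [show a + 1 - 1 = a from rfl, this ]
        push_cast
        ring


variable {k : ℕ}

abbrev Vtx (n k : ℕ) := {S : Finset (Fin n) // S.card = k}

def ext (k : ℕ) (φ : Vtx n k → ℝ) : W n :=
  fun T => if h : T.card = k then φ ⟨T, h⟩ else 0

lemma supp_ext (φ : Vtx n k → ℝ) : Supp k (ext k φ) := by
  intro T hT; simp [ext, hT]

lemma ext_val (φ : Vtx n k → ℝ) (S : Vtx n k) : ext k φ S.1 = φ S := by
  simp [ext, S.2]

/-- the pair `(z,y) ↦ insert y (v.1.erase z)` bijection onto neighbors. -/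
lemma pair_sum (hk : 1 ≤ k) (v : Vtx n k) (f : Finset (Fin n) → ℝ) :
    ∑ u ∈ (johnsonGraph n k).neighborFinset v, f u.1
      = ∑ p ∈ v.1 ×ˢ (v.1ᶜ : Finset (Fin n)), f (insert p.2 (v.1.erase p.1)) := by
  have key : ∀ p : Fin n × Fin n, p ∈ v.1 ×ˢ (v.1ᶜ : Finset (Fin n)) →
      (insert p.2 (v.1.erase p.1)).card = k := by
    rintro ⟨z, y⟩ hp
    rw [Finset.mem_product] at hp
    obtain ⟨hz, hy⟩ := hp
    have hy' : y ∉ v.1 := Finset.mem_compl.1 hy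
    rw [Finset.card_insert_of_notMem (fun h => hy' (Finset.erase_subset _ _ h)),
      Finset.card_erase_of_mem hz, v.2]
    omega
  refine (Finset.sum_bij (fun (p : Fin n × Fin n) (hp : p ∈ v.1 ×ˢ (v.1ᶜ : Finset (Fin n)))
      => (⟨insert p.2 (v.1.erase p.1), key p hp⟩ : Vtx n k)) ?_ ?_ ?_ ?_).symm
  · rintro ⟨z, y⟩ hp
    rw [Finset.mem_product] at hp
    obtain ⟨hz, hy⟩ := hp
    have hy' : y ∉ v.1 := Finset.mem_compl.1 hy
    rw [SimpleGraph.mem_neighborFinset]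
    change _ ≠ _ ∧ _
    constructor
    · intro h
      apply hy'
      rw [Subtype.ext_iff] at h
      rw [h]
      exact Finset.mem_insert_self _ _
    · have hint : v.1 ∩ insert y (v.1.erase z) = v.1.erase z := by
        ext a
        simp only [Finset.mem_inter, Finset.mem_insert, Finset.mem_erase]
        constructor
        · rintro ⟨hav, rfl | ha⟩
          · exact absurd hav hy'
          · exact ha
        · rintro ⟨haz, hav⟩
          exact ⟨hav, Or.inr ⟨haz, hav⟩⟩
      rw [hint, Finset.card_erase_of_mem hz, v.2]
  · rintro ⟨z₁, y₁⟩ hp₁ ⟨z₂, y₂⟩ hp₂ heq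
    rw [Finset.mem_product] at hp₁ hp₂
    obtain ⟨hz₁, hy₁⟩ := hp₁
    obtain ⟨hz₂, hy₂⟩ := hp₂
    have hy₁' : y₁ ∉ v.1 := Finset.mem_compl.1 hy₁
    have hy₂' : y₂ ∉ v.1 := Finset.mem_compl.1 hy₂
    rw [Subtype.ext_iff] at heq
    simp only at heq
    have hyy : y₁ = y₂ := by
      have h1 : y₁ ∈ insert y₂ (v.1.erase z₂) := by
        rw [← heq]; exact Finset.mem_insert_self _ _
      rcases Finset.mem_insert.1 h1 with h | h
      · exact h
      · exact absurd (Finset.erase_subset _ _ h) hy₁'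
    subst hyy
    have h2 : v.1.erase z₁ = v.1.erase z₂ := by
      have e1 : (insert y₁ (v.1.erase z₁)).erase y₁ = v.1.erase z₁ :=
        Finset.erase_insert (fun h => hy₁' (Finset.erase_subset _ _ h))
      have e2 : (insert y₁ (v.1.erase z₂)).erase y₁ = v.1.erase z₂ :=
        Finset.erase_insert (fun h => hy₁' (Finset.erase_subset _ _ h))
      rw [← e1, ← e2, heq]
    have := (Finset.erase_inj v.1 hz₁).1 h2
    simp only [Prod.mk.injEq]
    exact ⟨this, trivial⟩
  · intro u hu
    rw [SimpleGraph.mem_neighborFinset] at hu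
    change _ ≠ _ ∧ _ at hu
    obtain ⟨hne, hcard⟩ := hu
    have hvu : (v.1 \ u.1).card = 1 := by
      rw [← Finset.sdiff_inter_self_left]
      rw [Finset.card_sdiff_of_subset (Finset.inter_subset_left), v.2, hcard]
      omega
    have huv : (u.1 \ v.1).card = 1 := by
      rw [← Finset.sdiff_inter_self_left]
      rw [Finset.card_sdiff_of_subset (Finset.inter_subset_left), u.2, Finset.inter_comm, hcard]
      omega
    obtain ⟨z, hz⟩ := Finset.card_eq_one.1 hvu
    obtain ⟨y, hy⟩ := Finset.card_eq_one.1 huv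
    have hzv : z ∈ v.1 := by
      have : z ∈ v.1 \ u.1 := hz ▸ Finset.mem_singleton_self z
      exact (Finset.mem_sdiff.1 this).1
    have hyc : y ∈ (v.1ᶜ : Finset (Fin n)) := by
      have : y ∈ u.1 \ v.1 := hy ▸ Finset.mem_singleton_self y
      exact Finset.mem_compl.2 (Finset.mem_sdiff.1 this).2
    refine ⟨(z, y), Finset.mem_product.2 ⟨hzv, hyc⟩, ?_⟩
    apply Subtype.ext
    simp only
    have herase : v.1.erase z = v.1 ∩ u.1 := by
      rw [Finset.erase_eq, ← hz, Finset.sdiff_sdiff_self_left]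
    rw [herase]
    ext a
    simp only [Finset.mem_insert, Finset.mem_inter]
    constructor
    · rintro (rfl | ⟨hav, hau⟩)
      · have : a ∈ u.1 \ v.1 := hy ▸ Finset.mem_singleton_self a
        exact (Finset.mem_sdiff.1 this).1
      · exact hau
    · intro hau
      by_cases hav : a ∈ v.1
      · exact Or.inr ⟨hav, hau⟩
      · left
        have : a ∈ u.1 \ v.1 := Finset.mem_sdiff.2 ⟨hau, hav⟩
        rw [hy] at this
        exact Finset.mem_singleton.1 this
  · rintro ⟨z, y⟩ hp
    rfl

lemma up_down_eval (x : W n) (S : Finset (Fin n)) :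
    Up n (Down n x) S
      = (S.card : ℝ) * x S + ∑ z ∈ S, ∑ y ∈ Sᶜ, x (insert y (S.erase z)) := by
  have hR : Up n (Down n x) S
      = ∑ z ∈ S, (x S + ∑ y ∈ Sᶜ, x (insert y (S.erase z))) := by
    refine Finset.sum_congr rfl fun z hz => ?_
    rw [Down, Finset.compl_erase, Finset.sum_insert (by simp [hz]),
      Finset.insert_erase hz]
  rw [hR, Finset.sum_add_distrib, Finset.sum_const, nsmul_eq_mul]

lemma deg_real (hkn : k ≤ n) (v : Vtx n k) :
    (((johnsonGraph n k).degree v : ℕ) : ℝ) = (k : ℝ) * ((n : ℝ) - k) := by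
  by_cases hk : 1 ≤ k
  · have h := pair_sum hk v (fun _ => (1 : ℝ))
    rw [Finset.sum_const, Finset.sum_const, nsmul_eq_mul, nsmul_eq_mul, mul_one, mul_one,
      Finset.card_product, Finset.card_compl, v.2] at h
    rw [Fintype.card_fin] at h
    rw [SimpleGraph.degree, h, Nat.cast_mul, Nat.cast_sub hkn]
  · interval_cases k
    have : (johnsonGraph n 0).degree v = 0 := by
      rw [SimpleGraph.degree, Finset.card_eq_zero, Finset.eq_empty_iff_forall_notMem]
      intro u hu
      rw [SimpleGraph.mem_neighborFinset] at hu
      change _ ≠ _ ∧ _ at hu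
      exact hu.1 (Subtype.ext (by rw [Finset.card_eq_zero.1 v.2, Finset.card_eq_zero.1 u.2]))
    rw [this]
    simp

lemma bridge (hk : 1 ≤ k) (hkn : k ≤ n) (φ : Vtx n k → ℝ) (S : Vtx n k) :
    ((johnsonGraph n k).lapMatrix ℝ *ᵥ φ) S
      = (k : ℝ) * ((n : ℝ) - k + 1) * φ S - Up n (Down n (ext k φ)) S.1 := by
  have hud : Up n (Down n (ext k φ)) S.1
      = (k : ℝ) * φ S + ∑ u ∈ (johnsonGraph n k).neighborFinset S, φ u := by
    rw [up_down_eval, S.2, ext_val]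
    congr 1
    have h := pair_sum hk S (ext k φ)
    have h2 : ∀ u ∈ (johnsonGraph n k).neighborFinset S, ext k φ u.1 = φ u := by
      intro u _; exact ext_val φ u
    rw [Finset.sum_congr rfl h2, Finset.sum_product] at h
    exact h.symm
  have hlap : ((johnsonGraph n k).lapMatrix ℝ *ᵥ φ) S
      = ((johnsonGraph n k).degree S : ℝ) * φ S
        - ∑ u ∈ (johnsonGraph n k).neighborFinset S, φ u := by
    rw [SimpleGraph.lapMatrix, Matrix.sub_mulVec]
    simp only [Pi.sub_apply, SimpleGraph.adjMatrix_mulVec_apply]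
    congr 1
    rw [SimpleGraph.degMatrix, Matrix.mulVec_diagonal]
  rw [hlap, deg_real hkn, hud]
  ring


end JG

namespace JG
variable {n k : ℕ}

lemma eig_glob (hk : 1 ≤ k) (hkn : k ≤ n) {φ : Vtx n k → ℝ} {μ : ℝ}
    (h : (johnsonGraph n k).lapMatrix ℝ *ᵥ φ = μ • φ) :
    Up n (Down n (ext k φ)) = fun T => ((k : ℝ) * ((n : ℝ) - k + 1) - μ) * ext k φ T := by
  funext T
  by_cases hc : T.card = k
  · have hb := bridge hk hkn φ ⟨T, hc⟩
    have he : ((johnsonGraph n k).lapMatrix ℝ *ᵥ φ) ⟨T, hc⟩ = μ * φ ⟨T, hc⟩ := by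
      rw [h]; rfl
    have hext : ext k φ T = φ ⟨T, hc⟩ := by simp [ext, hc]
    rw [hext]
    rw [he] at hb
    simp only at hb
    linarith [hb]
  · have h1 : Supp k (ext k φ) := supp_ext φ
    have h2 : Supp k (Up n (Down n (ext k φ))) := by
      have : Supp (k - 1 + 1) (ext k φ) := by
        rwa [Nat.sub_add_cancel hk]
      have hD : Supp (k-1) (Down n (ext k φ)) := supp_down this
      have := supp_up hD
      rwa [Nat.sub_add_cancel hk] at this
    rw [h2 T hc, h1 T hc, mul_zero]

lemma glob_eig (hk : 1 ≤ k) (hkn : k ≤ n) {x : W n} (hs : Supp k x) {μ : ℝ}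
    (h : ∀ T, Up n (Down n x) T = ((k : ℝ) * ((n : ℝ) - k + 1) - μ) * x T) :
    (johnsonGraph n k).lapMatrix ℝ *ᵥ (fun S => x S.1) = μ • (fun S => x S.1) := by
  have hext : ext k (fun S : Vtx n k => x S.1) = x := by
    funext T
    by_cases hc : T.card = k
    · simp [ext, hc]
    · simp [ext, hc, hs T hc]
  funext S
  have hb := bridge hk hkn (fun S : Vtx n k => x S.1) S
  rw [hext] at hb
  rw [hb, h S.1]
  simp only [Pi.smul_apply, smul_eq_mul]
  ring

def chi (k : ℕ) (D : Finset (Vtx n k)) : W n :=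
  fun T => if h : T.card = k then (if (⟨T, h⟩ : Vtx n k) ∈ D then (1 : ℝ) else 0) else 0

lemma sum_chi_mul (D : Finset (Vtx n k)) (ψ : W n) :
    ∑ T : Finset (Fin n), chi k D T * ψ T = ∑ S ∈ D, ψ S.1 := by
  have hsub : D.image Subtype.val ⊆ Finset.univ := Finset.subset_univ _
  rw [← Finset.sum_subset hsub]
  · rw [Finset.sum_image (fun a _ b _ h => Subtype.ext h)]
    refine Finset.sum_congr rfl fun S hS => ?_
    have : chi k D S.1 = 1 := by
      simp only [chi]
      rw [dif_pos S.2]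
      rw [if_pos (by simpa using hS)]
    rw [this, one_mul]
  · intro T _ hT
    have : chi k D T = 0 := by
      simp only [chi]
      split_ifs with h1 h2
      · exact (hT (Finset.mem_image.2 ⟨⟨T, h1⟩, h2, rfl⟩)).elim
      · rfl
      · rfl
    rw [this, zero_mul]

lemma sum_supp_eq {x : W n} (hs : Supp k x) :
    ∑ T : Finset (Fin n), x T = ∑ S : Vtx n k, x S.1 := by
  rw [← Finset.sum_subtype (Finset.univ.filter (fun T : Finset (Fin n) => T.card = k))
      (by intro T; simp) (fun T => x T)]
  refine (Finset.sum_subset (Finset.subset_univ _) fun T _ hT => hs T (by simpa using hT)).symm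

lemma down_chi (D : Finset (Vtx n k)) (a : ℕ) (ha : a ≤ k) :
    ∀ T : Finset (Fin n), (Down n)^[a] (chi k D) T
      = if T.card = k - a then
          (a.factorial : ℝ) * ((D.filter fun S => T ⊆ S.1).card : ℝ) else 0 := by
  induction a with
  | zero =>
      intro T
      simp only [Function.iterate_zero, id_eq, Nat.sub_zero, Nat.factorial_zero,
        Nat.cast_one, one_mul]
      by_cases hc : T.card = k
      · rw [if_pos hc]
        have hfil : D.filter (fun S => T ⊆ S.1) =
            if (⟨T, hc⟩ : Vtx n k) ∈ D then {(⟨T, hc⟩ : Vtx n k)} else ∅ := by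
          ext S
          simp only [Finset.mem_filter]
          constructor
          · rintro ⟨hSD, hTS⟩
            have : T = S.1 := Finset.eq_of_subset_of_card_le hTS (by rw [S.2, hc])
            have hST : S = ⟨T, hc⟩ := Subtype.ext this.symm
            rw [hST] at hSD
            rw [if_pos hSD, hST]
            exact Finset.mem_singleton_self _
          · intro hS
            split_ifs at hS with hD
            · rw [Finset.mem_singleton] at hS
              subst hS
              exact ⟨hD, Finset.Subset.refl T⟩
            · exact absurd hS (Finset.notMem_empty S)
        rw [hfil, chi, dif_pos hc]
        split_ifs with hD <;> simp
      · rw [if_neg hc, chi, dif_neg hc]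
  | succ a ih =>
      have ha' : a ≤ k := Nat.le_of_succ_le ha
      intro T
      rw [Function.iterate_succ_apply', Down]
      by_cases hc : T.card = k - (a + 1)
      · rw [if_pos hc]
        have hkey : ∀ y ∈ (Tᶜ : Finset (Fin n)),
            (Down n)^[a] (chi k D) (insert y T)
              = (a.factorial : ℝ) * ((D.filter fun S => insert y T ⊆ S.1).card : ℝ) := by
          intro y hy
          rw [ih ha']
          rw [if_pos (by
            rw [Finset.card_insert_of_notMem (Finset.mem_compl.1 hy), hc]; omega)]
        rw [Finset.sum_congr rfl hkey, ← Finset.mul_sum]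
        have hnat : ∑ y ∈ (Tᶜ : Finset (Fin n)),
            (D.filter fun S => insert y T ⊆ S.1).card
            = (a + 1) * (D.filter fun S => T ⊆ S.1).card := by
          have h1 : ∀ y ∈ (Tᶜ : Finset (Fin n)),
              (D.filter fun S => insert y T ⊆ S.1).card
              = ∑ S ∈ D, if insert y T ⊆ S.1 then 1 else 0 := by
            intro y _; rw [Finset.card_filter]
          rw [Finset.sum_congr rfl h1, Finset.sum_comm]
          have h2 : ∀ S ∈ D, (∑ y ∈ (Tᶜ : Finset (Fin n)),
              if insert y T ⊆ S.1 then 1 else 0) = if T ⊆ S.1 then a + 1 else 0 := by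
            intro S _
            by_cases hTS : T ⊆ S.1
            · rw [if_pos hTS]
              have h3 : ∀ y ∈ (Tᶜ : Finset (Fin n)),
                  (if insert y T ⊆ S.1 then 1 else 0) = if y ∈ S.1 \ T then 1 else 0 := by
                intro y hy
                congr 1
                simp only [Finset.insert_subset_iff, Finset.mem_sdiff, eq_iff_iff]
                constructor
                · rintro ⟨h4, _⟩; exact ⟨h4, Finset.mem_compl.1 hy⟩
                · rintro ⟨h4, _⟩; exact ⟨h4, hTS⟩
              rw [Finset.sum_congr rfl h3]
              have h5 : (S.1 \ T) ⊆ (Tᶜ : Finset (Fin n)) := by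
                intro y hy
                exact Finset.mem_compl.2 (Finset.mem_sdiff.1 hy).2
              rw [Finset.sum_ite_mem, Finset.inter_eq_right.2 h5]
              rw [Finset.sum_const, smul_eq_mul, mul_one]
              rw [Finset.card_sdiff_of_subset hTS, S.2, hc]
              omega
            · rw [if_neg hTS]
              refine Finset.sum_eq_zero fun y hy => ?_
              rw [if_neg (fun h => hTS (Finset.Subset.trans (Finset.subset_insert y T) h))]
          rw [Finset.sum_congr rfl h2, ← Finset.sum_filter, Finset.sum_const, smul_eq_mul,
            mul_comm]
        have hcast : ∑ y ∈ (Tᶜ : Finset (Fin n)),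
            ((D.filter fun S => insert y T ⊆ S.1).card : ℝ)
            = ((a : ℝ) + 1) * ((D.filter fun S => T ⊆ S.1).card : ℝ) := by
          rw [← Nat.cast_sum]
          rw [hnat]
          push_cast
          ring
        rw [hcast, Nat.factorial_succ]
        push_cast
        ring
      · rw [if_neg hc]
        refine Finset.sum_eq_zero fun y hy => ?_
        rw [ih ha']
        rw [if_neg (by
          rw [Finset.card_insert_of_notMem (Finset.mem_compl.1 hy)]
          intro h
          apply hc
          omega)]

lemma up_one (T : Finset (Fin n)) : Up n (fun _ => (1 : ℝ)) T = (T.card : ℝ) := by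
  simp [Up]

lemma sum_down (x : W n) :
    ∑ T : Finset (Fin n), Down n x T = ∑ T : Finset (Fin n), (T.card : ℝ) * x T := by
  have h := adjoint x (fun _ => (1 : ℝ))
  simp only [mul_one] at h
  rw [h]
  refine Finset.sum_congr rfl fun T _ => ?_
  rw [up_one, mul_comm]

lemma down_pow_zero (a : ℕ) : (Down n)^[a] (fun _ => (0:ℝ)) = fun _ => 0 := by
  induction a with
  | zero => rfl
  | succ a ih => rw [Function.iterate_succ_apply, down_zero, ih]

lemma sum_down_pow_zero (a : ℕ) :
    ∀ (j : ℕ) (x : W n), Supp j x → ∑ T : Finset (Fin n), x T = 0 →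
      ∑ T : Finset (Fin n), (Down n)^[a] x T = 0 := by
  induction a with
  | zero => intro j x _ h; exact h
  | succ a ih =>
      intro j x hs hsum
      rw [Function.iterate_succ_apply]
      rcases Nat.eq_zero_or_pos j with h0 | hpos
      · have hd : Down n x = fun _ => (0:ℝ) := by
          funext T
          refine Finset.sum_eq_zero fun y hy => hs _ ?_
          rw [Finset.card_insert_of_notMem (Finset.mem_compl.1 hy)]
          omega
        rw [hd, down_pow_zero]
        simp
      · obtain ⟨j', rfl⟩ : ∃ j', j = j' + 1 := ⟨j - 1, by omega⟩
        refine ih j' (Down n x) (supp_down hs) ?_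
        rw [sum_down]
        have : ∀ T : Finset (Fin n), (T.card : ℝ) * x T = (j' + 1 : ℝ) * x T := by
          intro T
          by_cases hT : T.card = j' + 1
          · rw [hT]; push_cast; ring
          · rw [hs T hT, mul_zero, mul_zero]
        rw [Finset.sum_congr rfl (fun T _ => this T), ← Finset.mul_sum, hsum, mul_zero]

def lamR (n j : ℕ) : ℝ := (j : ℝ) * ((n : ℝ) + 1 - (j : ℝ))

lemma lamR_lt {i j : ℕ} (hij : i < j) (hjk : j ≤ k) (hkn : 2 * k ≤ n) :
    lamR n i < lamR n j := by
  have h1 : (i : ℝ) < j := by exact_mod_cast hij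
  have h2 : (j : ℝ) ≤ k := by exact_mod_cast hjk
  have h3 : 2 * (k : ℝ) ≤ n := by exact_mod_cast hkn
  unfold lamR
  nlinarith

lemma lamR_pos {j : ℕ} (h1 : 1 ≤ j) (hjk : j ≤ k) (hkn : 2 * k ≤ n) :
    0 < lamR n j := by
  have h1' : (1 : ℝ) ≤ j := by exact_mod_cast h1
  have h2 : (j : ℝ) ≤ k := by exact_mod_cast hjk
  have h3 : 2 * (k : ℝ) ≤ n := by exact_mod_cast hkn
  unfold lamR
  nlinarith

end JG

namespace JG

lemma sum_eigen_zero {n k : ℕ} {φ : Vtx n k → ℝ} {μ : ℝ} (hμ : 0 < μ)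
    (heig : (johnsonGraph n k).lapMatrix ℝ *ᵥ φ = μ • φ) :
    ∑ S : Vtx n k, φ S = 0 := by
  have h1 : ∑ S : Vtx n k, ((johnsonGraph n k).lapMatrix ℝ *ᵥ φ) S
      = μ * ∑ S : Vtx n k, φ S := by
    rw [heig, Finset.mul_sum]
    rfl
  have h2 : ∑ S : Vtx n k, ((johnsonGraph n k).lapMatrix ℝ *ᵥ φ) S = 0 := by
    have hz : ∀ S' : Vtx n k, ∑ S : Vtx n k, (johnsonGraph n k).lapMatrix ℝ S S' = 0 := by
      intro S'
      have hcsym : ∀ S : Vtx n k, (johnsonGraph n k).lapMatrix ℝ S S'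
          = (johnsonGraph n k).lapMatrix ℝ S' S := by
        intro S
        exact (SimpleGraph.isSymm_lapMatrix (R := ℝ) (G := johnsonGraph n k)).apply S' S
      rw [Finset.sum_congr rfl (fun S _ => hcsym S)]
      have := congrFun (SimpleGraph.lapMatrix_mulVec_const_eq_zero (R := ℝ)
        (G := johnsonGraph n k)) S'
      simpa [Matrix.mulVec, dotProduct] using this
    simp only [Matrix.mulVec, dotProduct]
    rw [Finset.sum_comm]
    refine Finset.sum_eq_zero fun S' _ => ?_
    rw [← Finset.sum_mul, hz S', zero_mul]
  rw [h2] at h1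
  exact (mul_eq_zero.1 h1.symm).resolve_left (ne_of_gt hμ)

lemma forward_dir (n k t : ℕ) (ht1 : 1 ≤ t) (htk : t ≤ k) (hkn : 2 * k ≤ n)
    (D : Finset (Vtx n k)) (lam : ℕ)
    (hdes : ∀ T : Finset (Fin n), T.card = t → (D.filter fun S => T ⊆ S.1).card = lam)
    (μ : ℝ) (hμ0 : 0 < μ) (hμt : μ ≤ lamR n t)
    (φ : Vtx n k → ℝ) (heig : (johnsonGraph n k).lapMatrix ℝ *ᵥ φ = μ • φ) :
    ∑ S ∈ D, φ S = 0 := by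
  have hk1 : 1 ≤ k := le_trans ht1 htk
  have hkn' : k ≤ n := by omega
  set φt : W n := ext k φ with hφt
  have hsupp : Supp k φt := supp_ext φ
  -- total sum of φt is zero
  have hsum0 : ∑ T : Finset (Fin n), φt T = 0 := by
    rw [sum_supp_eq hsupp]
    have : ∀ S : Vtx n k, φt S.1 = φ S := fun S => ext_val φ S
    rw [Finset.sum_congr rfl (fun S _ => this S)]
    exact sum_eigen_zero hμ0 heig
  -- eigen chain downwards
  have Hchain : ∀ a, a ≤ k - t → ∀ T, Up n (Down n ((Down n)^[a] φt)) T
      = (lamR n (k - a) - μ) * (Down n)^[a] φt T := by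
    intro a
    induction a with
    | zero =>
        intro _ T
        have := congrFun (eig_glob hk1 hkn' heig) T
        simp only [Function.iterate_zero, id_eq, Nat.sub_zero]
        rw [← hφt] at this
        rw [this]
        have : (k : ℝ) * ((n : ℝ) - k + 1) = lamR n k := by unfold lamR; ring
        rw [this]
    | succ a ih =>
        intro ha T
        have ha' : a ≤ k - t := Nat.le_of_succ_le ha
        have hx1 : (Down n)^[a+1] φt = Down n ((Down n)^[a] φt) :=
          Function.iterate_succ_apply' (Down n) a φt
        have hsupp1 : Supp (k - (a+1)) ((Down n)^[a+1] φt) := by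
          refine supp_down_pow (a+1) ?_
          have he : k - (a+1) + (a+1) = k := by omega
          rw [he]
          exact hsupp
        -- Down both sides of ih
        have hDih : Down n (Up n (Down n ((Down n)^[a] φt))) T
            = (lamR n (k - a) - μ) * Down n ((Down n)^[a] φt) T := by
          have h0 : Up n (Down n ((Down n)^[a] φt))
              = fun T' => (lamR n (k - a) - μ) * (Down n)^[a] φt T' := funext (ih ha')
          rw [h0, down_mulc]
        have hcomm := down_up (Down n ((Down n)^[a] φt)) T
        rw [hx1]
        by_cases hz : Down n ((Down n)^[a] φt) T = 0
        · rw [hz, mul_zero]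
          have : Up n (Down n (Down n ((Down n)^[a] φt))) T
              = Down n (Up n (Down n ((Down n)^[a] φt))) T
                - ((n : ℝ) - 2 * T.card) * Down n ((Down n)^[a] φt) T := by
            rw [hcomm]; ring
          rw [this, hDih, hz]
          ring
        · have hcard : T.card = k - (a+1) := by
            by_contra hcc
            have hzz := hsupp1 T hcc
            rw [hx1] at hzz
            exact hz hzz
          have : Up n (Down n (Down n ((Down n)^[a] φt))) T
              = Down n (Up n (Down n ((Down n)^[a] φt))) T
                - ((n : ℝ) - 2 * T.card) * Down n ((Down n)^[a] φt) T := by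
            rw [hcomm]; ring
          rw [this, hDih]
          have e1 : ((k - a : ℕ) : ℝ) = (k : ℝ) - a := by
            have : a ≤ k := by omega
            push_cast [this]; ring
          have e2 : ((k - (a+1) : ℕ) : ℝ) = (k : ℝ) - (a + 1) := by
            have : a + 1 ≤ k := by omega
            push_cast [this]; ring
          have e3 : (T.card : ℝ) = (k : ℝ) - (a+1) := by rw [hcard, e2]
          unfold lamR
          rw [e1, e3, e2]
          ring
  -- iterated product
  have Gprod : ∀ a, a ≤ k - t → ∀ T, (Up n)^[a] ((Down n)^[a] φt) T
      = (∏ i ∈ Finset.range a, (lamR n (k - i) - μ)) * φt T := by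
    intro a
    induction a with
    | zero => intro _ T; simp
    | succ a ih =>
        intro ha T
        have ha' : a ≤ k - t := Nat.le_of_succ_le ha
        rw [Function.iterate_succ_apply (Up n), Function.iterate_succ_apply' (Down n)]
        have h1 : Up n (Down n ((Down n)^[a] φt))
            = fun T' => (lamR n (k - a) - μ) * (Down n)^[a] φt T' := by
          funext T'; exact Hchain a ha' T'
        rw [h1, up_pow_mulc]
        show (lamR n (k - a) - μ) * (Up n)^[a] ((Down n)^[a] φt) T = _
        rw [ih ha' T, Finset.prod_range_succ]
        ring
  -- the product is positive
  have hP : 0 < ∏ i ∈ Finset.range (k - t), (lamR n (k - i) - μ) := by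
    refine Finset.prod_pos fun i hi => ?_
    rw [Finset.mem_range] at hi
    have hlt : lamR n t < lamR n (k - i) := lamR_lt (by omega) (by omega) hkn
    linarith
  set P : ℝ := ∏ i ∈ Finset.range (k - t), (lamR n (k - i) - μ) with hPdef
  -- key computation
  have hpair : ∑ T : Finset (Fin n), chi k D T * φt T = ∑ S ∈ D, φ S := by
    rw [sum_chi_mul]
    exact Finset.sum_congr rfl fun S _ => ext_val φ S
  have hmain : P * ∑ S ∈ D, φ S = 0 := by
    rw [← hpair, Finset.mul_sum]
    have h1 : ∀ T, chi k D T * (P * φt T)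
        = chi k D T * (Up n)^[k - t] ((Down n)^[k - t] φt) T := by
      intro T; rw [Gprod (k - t) le_rfl T]
    calc ∑ T : Finset (Fin n), P * (chi k D T * φt T)
        = ∑ T : Finset (Fin n), chi k D T * (Up n)^[k-t] ((Down n)^[k-t] φt) T := by
          refine Finset.sum_congr rfl fun T _ => ?_
          rw [← h1]; ring
      _ = ∑ T : Finset (Fin n), (Down n)^[k-t] (chi k D) T * (Down n)^[k-t] φt T := by
          rw [adjoint_pow]
      _ = 0 := by
          have hsuppf : Supp t ((Down n)^[k-t] φt) := by
            refine supp_down_pow (k-t) ?_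
            have he : t + (k - t) = k := by omega
            rw [he]
            exact hsupp
          have hdc := down_chi D (k - t) (by omega)
          have hkt : k - (k - t) = t := by omega
          have hterm : ∀ T : Finset (Fin n),
              (Down n)^[k-t] (chi k D) T * (Down n)^[k-t] φt T
              = ((k-t).factorial : ℝ) * (lam : ℝ) * (Down n)^[k-t] φt T := by
            intro T
            rw [hdc T, hkt]
            by_cases hc : T.card = t
            · rw [if_pos hc, hdes T hc]
            · rw [if_neg hc, hsuppf T hc]
              ring
          rw [Finset.sum_congr rfl (fun T _ => hterm T), ← Finset.mul_sum]
          rw [sum_down_pow_zero (k-t) k φt hsupp hsum0, mul_zero]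
  rcases mul_eq_zero.1 hmain with h | h
  · exact absurd h (ne_of_gt hP)
  · exact h

end JG

namespace JG

lemma down_subf {n : ℕ} (x y : W n) (T : Finset (Fin n)) :
    Down n (fun T' => x T' - y T') T = Down n x T - Down n y T := by
  simp [Down, Finset.sum_sub_distrib]

lemma up_subf {n : ℕ} (x y : W n) (T : Finset (Fin n)) :
    Up n (fun T' => x T' - y T') T = Up n x T - Up n y T := by
  simp [Up, Finset.sum_sub_distrib]

def Lop (n k : ℕ) (x : W n) : W n :=
  fun T => (k : ℝ) * ((n : ℝ) - k + 1) * x T - Up n (Down n x) T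

lemma supp_lop {n k : ℕ} (hk : 1 ≤ k) {x : W n} (hs : Supp k x) : Supp k (Lop n k x) := by
  intro T hT
  have h1 : Supp (k - 1 + 1) x := by rwa [Nat.sub_add_cancel hk]
  have h2 := supp_up (supp_down h1)
  rw [Nat.sub_add_cancel hk] at h2
  simp [Lop, hs T hT, h2 T hT]

lemma lop_sub {n k : ℕ} (x y : W n) :
    Lop n k (fun T => x T - y T) = fun T => Lop n k x T - Lop n k y T := by
  funext T
  have h1 : Down n (fun T' => x T' - y T') = fun T' => Down n x T' - Down n y T' := by
    funext T'; exact down_subf x y T'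
  simp only [Lop, h1, up_subf]
  ring

lemma lop_mulc {n k : ℕ} (c : ℝ) (x : W n) :
    Lop n k (fun T => c * x T) = fun T => c * Lop n k x T := by
  funext T
  have h1 : Down n (fun T' => c * x T') = fun T' => c * Down n x T' := by
    funext T'; exact down_mulc c x T'
  simp only [Lop, h1, up_mulc]
  ring

def Lch (n k t : ℕ) : ℕ → W n → W n
  | 0, x => x
  | m+1, x => fun T => lamR n (t - m) * Lch n k t m x T - Lop n k (Lch n k t m x) T

lemma lch_supp {n k t : ℕ} (hk : 1 ≤ k) {x : W n} (hs : Supp k x) (m : ℕ) :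
    Supp k (Lch n k t m x) := by
  induction m with
  | zero => exact hs
  | succ m ih =>
      intro T hT
      simp only [Lch, ih T hT, supp_lop hk ih T hT]
      ring

lemma lch_sub {n k t : ℕ} (x y : W n) (m : ℕ) :
    Lch n k t m (fun T => x T - y T) = fun T => Lch n k t m x T - Lch n k t m y T := by
  induction m with
  | zero => rfl
  | succ m ih =>
      funext T
      simp only [Lch, ih, lop_sub (Lch n k t m x) (Lch n k t m y)]
      ring

lemma lch_mulc {n k t : ℕ} (c : ℝ) (x : W n) (m : ℕ) :
    Lch n k t m (fun T => c * x T) = fun T => c * Lch n k t m x T := by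
  induction m with
  | zero => rfl
  | succ m ih =>
      funext T
      simp only [Lch, ih, lop_mulc c (Lch n k t m x)]
      ring

lemma lch_eigen {n k t : ℕ} {x : W n} {ν : ℝ} (h : ∀ T, Lop n k x T = ν * x T) (m : ℕ) :
    Lch n k t m x = fun T => (∏ i ∈ Finset.range m, (lamR n (t - i) - ν)) * x T := by
  induction m with
  | zero => funext T; simp [Lch]
  | succ m ih =>
      funext T
      have hlop : Lop n k (Lch n k t m x) T
          = (∏ i ∈ Finset.range m, (lamR n (t - i) - ν)) * (ν * x T) := by
        rw [ih, lop_mulc]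
        show (∏ i ∈ Finset.range m, (lamR n (t - i) - ν)) * Lop n k x T = _
        rw [h T]
      have hY := congrFun ih T
      simp only [Lch, Finset.prod_range_succ]
      rw [hlop, hY]
      ring

/-- main spectral induction -/
lemma main_ind {n k t : ℕ} (ht1 : 1 ≤ t) (htk : t ≤ k) (hkn : 2 * k ≤ n)
    (D : Finset (Vtx n k))
    (hyp : ∀ μ : ℝ, 0 < μ → μ ≤ lamR n t →
      ∀ φ : Vtx n k → ℝ, (johnsonGraph n k).lapMatrix ℝ *ᵥ φ = μ • φ → ∑ S ∈ D, φ S = 0) :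
    ∀ m, m ≤ t → ∀ x : W n, Supp k x → Lch n k t m x = (fun _ => 0) →
      ∑ S ∈ D, x S.1 = 0 := by
  have hk1 : 1 ≤ k := le_trans ht1 htk
  have hkn' : k ≤ n := by omega
  intro m
  induction m with
  | zero =>
      intro _ x _ h0
      refine Finset.sum_eq_zero fun S _ => ?_
      exact congrFun h0 S.1
  | succ m ih =>
      intro hm x hx h0
      set y : W n := Lch n k t m x with hy
      have hyeig : ∀ T, Lop n k y T = lamR n (t - m) * y T := by
        intro T
        have := congrFun h0 T
        simp only [Lch, ← hy] at this
        linarith [this]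
      have hysupp : Supp k y := lch_supp hk1 hx m
      set μ : ℝ := lamR n (t - m) with hμ
      have hμpos : 0 < μ := lamR_pos (by omega) (by omega) hkn
      have hμle : μ ≤ lamR n t := by
        rcases Nat.eq_or_lt_of_le (Nat.sub_le t m) with he | hlt
        · rw [hμ, he]
        · exact le_of_lt (lamR_lt hlt htk hkn)
      -- y gives an eigenvector
      have hey : (johnsonGraph n k).lapMatrix ℝ *ᵥ (fun S => y S.1) = μ • (fun S => y S.1) := by
        refine glob_eig hk1 hkn' hysupp fun T => ?_
        have := hyeig T
        simp only [Lop] at this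
        linarith [this]
      have hsumy : ∑ S ∈ D, y S.1 = 0 := hyp μ hμpos hμle _ hey
      -- eigen-projection coefficient
      set c : ℝ := ∏ i ∈ Finset.range m, (lamR n (t - i) - μ) with hc
      have hcpos : 0 < c := by
        refine Finset.prod_pos fun i hi => ?_
        rw [Finset.mem_range] at hi
        have h1 : lamR n (t - m) < lamR n (t - i) := lamR_lt (by omega) (by omega) hkn
        rw [hμ]
        linarith
      have hcne : c ≠ 0 := ne_of_gt hcpos
      set x' : W n := fun T => x T - c⁻¹ * y T with hx'
      have hx'supp : Supp k x' := by
        intro T hT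
        simp [hx', hx T hT, hysupp T hT]
      have hch' : Lch n k t m x' = fun _ => 0 := by
        have h1 : Lch n k t m x' = fun T => Lch n k t m x T - c⁻¹ * Lch n k t m y T := by
          rw [hx', lch_sub]
          funext T
          rw [lch_mulc]
        rw [h1]
        funext T
        have h2 : Lch n k t m y = fun T => c * y T := by
          rw [hc]
          exact lch_eigen hyeig m
        rw [h2, ← hy]
        simp only
        field_simp
        ring
      have hsum' := ih (by omega) x' hx'supp hch'
      have : ∑ S ∈ D, x' S.1 = ∑ S ∈ D, x S.1 - c⁻¹ * ∑ S ∈ D, y S.1 := by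
        rw [Finset.mul_sum, ← Finset.sum_sub_distrib]
      rw [this, hsumy, mul_zero, sub_zero] at hsum'
      exact hsum'

/-- operator identity used for the chain construction -/
lemma lop_up {n k : ℕ} {x : W n} {j a : ℕ} (hx : Supp j x) (hja : j + a = k)
    (T : Finset (Fin n)) :
    Lop n k ((Up n)^[a] x) T
      = lamR n j * (Up n)^[a] x T - (Up n)^[a+1] (Down n x) T := by
  have hdup : Down n ((Up n)^[a] x)
      = fun T' => (Up n)^[a] (Down n x) T'
          + (a : ℝ) * (((n : ℝ) + a - 1) - 2 * T'.card) * (Up n)^[a-1] x T' := by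
    funext T'; exact down_up_pow a x T'
  have hUD : Up n (Down n ((Up n)^[a] x)) T
      = Up n ((Up n)^[a] (Down n x)) T
        + (a : ℝ) * (((n : ℝ) + a - 1) - 2 * T.card + 2) * Up n ((Up n)^[a-1] x) T := by
    rw [hdup]
    have h1 : Up n (fun T' => (Up n)^[a] (Down n x) T'
          + (a : ℝ) * (((n : ℝ) + a - 1) - 2 * T'.card) * (Up n)^[a-1] x T') T
        = Up n ((Up n)^[a] (Down n x)) T
          + Up n (fun T' => (a : ℝ) * ((((n : ℝ) + a - 1) - 2 * T'.card) * (Up n)^[a-1] x T')) T := by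
      rw [← up_addf]
      congr 1
      funext T'
      ring
    rw [h1, up_mulc, up_mul_linear]
    ring
  have hstep : (a : ℝ) * (((n : ℝ) + a - 1) - 2 * T.card + 2) * Up n ((Up n)^[a-1] x) T
      = (a : ℝ) * (((n : ℝ) + a + 1) - 2 * T.card) * (Up n)^[a] x T := by
    rcases Nat.eq_zero_or_pos a with h0 | hpos
    · subst h0; simp
    · obtain ⟨b, rfl⟩ : ∃ b, a = b + 1 := ⟨a - 1, by omega⟩
      simp only [Nat.add_sub_cancel]
      rw [← Function.iterate_succ_apply' (Up n) b x]
      ring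
  rw [Lop]
  rw [hUD, hstep, ← Function.iterate_succ_apply' (Up n) a (Down n x)]
  by_cases hz : (Up n)^[a] x T = 0
  · rw [hz]
    ring
  · have hcard : T.card = k := by
      by_contra hcc
      have := supp_up_pow hx a T (by rw [hja]; exact hcc)
      exact hz this
    have e1 : (T.card : ℝ) = (k : ℝ) := by rw [hcard]
    have e2 : (j : ℝ) = (k : ℝ) - a := by
      have : (j : ℝ) + a = k := by exact_mod_cast hja
      linarith
    rw [e1]
    unfold lamR
    rw [e2]
    ring

lemma level_zero {n : ℕ} {x : W n} (hs : Supp 0 x)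
    (hsum : ∑ T : Finset (Fin n), x T = 0) : x = fun _ => 0 := by
  funext T
  by_cases hc : T.card = 0
  · have hT : T = ∅ := Finset.card_eq_zero.1 hc
    subst hT
    have : ∑ T' : Finset (Fin n), x T' = x ∅ := by
      refine Finset.sum_eq_single ∅ (fun T' _ hne => hs T' ?_) (by simp)
      exact fun hcc => hne (Finset.card_eq_zero.1 hcc)
    rw [this] at hsum
    exact hsum
  · exact hs T hc

lemma converse_dir (n k t : ℕ) (ht1 : 1 ≤ t) (htk : t ≤ k) (hkn : 2 * k ≤ n)
    (D : Finset (Vtx n k))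
    (hyp : ∀ μ : ℝ, 0 < μ → μ ≤ lamR n t →
      ∀ φ : Vtx n k → ℝ, (johnsonGraph n k).lapMatrix ℝ *ᵥ φ = μ • φ → ∑ S ∈ D, φ S = 0) :
    ∃ lam : ℕ, ∀ T : Finset (Fin n), T.card = t →
      (D.filter fun S => T ⊆ S.1).card = lam := by
  have hk1 : 1 ≤ k := le_trans ht1 htk
  have hkn' : k ≤ n := by omega
  obtain ⟨T₀, -, hT₀⟩ := Finset.exists_subset_card_eq
    (show t ≤ (Finset.univ : Finset (Fin n)).card by simp [Fintype.card_fin]; omega)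
  refine ⟨(D.filter fun S => T₀ ⊆ S.1).card, fun T hT => ?_⟩
  set f : W n := fun T' => (if T' = T then (1:ℝ) else 0) - (if T' = T₀ then (1:ℝ) else 0)
    with hf
  have hsuppf : Supp t f := by
    intro T' hT'
    have h1 : T' ≠ T := fun h => hT' (h ▸ hT)
    have h2 : T' ≠ T₀ := fun h => hT' (h ▸ hT₀)
    simp [hf, h1, h2]
  have hsumf : ∑ T' : Finset (Fin n), f T' = 0 := by
    simp [hf, Finset.sum_sub_distrib]
  set ψ : W n := (Up n)^[k-t] f with hψ
  have hsuppψ : Supp k ψ := by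
    have := supp_up_pow hsuppf (k-t)
    rwa [show t + (k-t) = k by omega] at this
  -- chain computation
  have hch : ∀ m, m ≤ t → Lch n k t m ψ = (Up n)^[k-t+m] ((Down n)^[m] f) := by
    intro m
    induction m with
    | zero => intro _; rfl
    | succ m ihm =>
        intro hm
        have hm' : m ≤ t := Nat.le_of_succ_le hm
        have hsx : Supp (t - m) ((Down n)^[m] f) := by
          refine supp_down_pow m ?_
          rwa [show t - m + m = t by omega]
        funext T
        show lamR n (t - m) * Lch n k t m ψ T - Lop n k (Lch n k t m ψ) T = _
        rw [ihm hm']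
        rw [lop_up hsx (by omega) T]
        have h1 : (Up n)^[k-t+m+1] (Down n ((Down n)^[m] f))
            = (Up n)^[k-t+(m+1)] ((Down n)^[m+1] f) := by
          rw [← Function.iterate_succ_apply' (Down n) m f]
          rw [show k-t+m+1 = k-t+(m+1) by omega]
        rw [h1]
        ring
  have hzero : Lch n k t t ψ = fun _ => 0 := by
    rw [hch t le_rfl]
    have h1 : (Down n)^[t] f = fun _ => 0 := by
      refine level_zero ?_ ?_
      · have := supp_down_pow (x := f) t (by rwa [show 0 + t = t by omega])
        exact this
      · exact sum_down_pow_zero t t f hsuppf hsumf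
    rw [h1, up_pow_zero]
  have hsumψ : ∑ S ∈ D, ψ S.1 = 0 :=
    main_ind ht1 htk hkn D hyp t le_rfl ψ hsuppψ hzero
  -- now compute the sum via adjointness
  have hpair : ∑ T' : Finset (Fin n), (Down n)^[k-t] (chi k D) T' * f T' = 0 := by
    rw [adjoint_pow, show (Up n)^[k-t] f = ψ from hψ.symm, sum_chi_mul]
    exact hsumψ
  have hdc := down_chi D (k-t) (by omega)
  have hkt : k - (k - t) = t := by omega
  have hg : ∀ T' : Finset (Fin n), (Down n)^[k-t] (chi k D) T'
      = if T'.card = t then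
          ((k-t).factorial : ℝ) * ((D.filter fun S => T' ⊆ S.1).card : ℝ) else 0 := by
    intro T'
    rw [hdc T', hkt]
  have hfin : ((k-t).factorial : ℝ) * ((D.filter fun S => T ⊆ S.1).card : ℝ)
      - ((k-t).factorial : ℝ) * ((D.filter fun S => T₀ ⊆ S.1).card : ℝ) = 0 := by
    rw [← hpair]
    rw [Finset.sum_congr rfl (fun T' _ => by rw [hg T'])]
    have hsplit : ∀ T' : Finset (Fin n),
        (if T'.card = t then
          ((k-t).factorial : ℝ) * ((D.filter fun S => T' ⊆ S.1).card : ℝ) else 0) * f T'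
        = (if T' = T then
            ((k-t).factorial : ℝ) * ((D.filter fun S => T ⊆ S.1).card : ℝ) else 0)
          - (if T' = T₀ then
            ((k-t).factorial : ℝ) * ((D.filter fun S => T₀ ⊆ S.1).card : ℝ) else 0) := by
      intro T'
      by_cases h1 : T' = T
      · subst h1
        by_cases h2 : T' = T₀
        · subst h2
          simp [hf, hT]
        · simp [hf, hT, h2]
      · by_cases h2 : T' = T₀
        · subst h2
          simp [hf, hT₀, h1]
        · by_cases h3 : T'.card = t
          · simp [hf, h1, h2]
          · simp [hf, h1, h2, h3]
    rw [Finset.sum_congr rfl (fun T' _ => hsplit T'), Finset.sum_sub_distrib]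
    rw [Finset.sum_ite_eq' Finset.univ T, Finset.sum_ite_eq' Finset.univ T₀]
    simp
  have hfac : ((k-t).factorial : ℝ) ≠ 0 := by
    exact_mod_cast Nat.factorial_ne_zero (k-t)
  have : ((D.filter fun S => T ⊆ S.1).card : ℝ)
      = ((D.filter fun S => T₀ ⊆ S.1).card : ℝ) := by
    have h2 : ((k-t).factorial : ℝ)
        * (((D.filter fun S => T ⊆ S.1).card : ℝ)
          - ((D.filter fun S => T₀ ⊆ S.1).card : ℝ)) = 0 := by
      rw [mul_sub]; exact hfin
    rcases mul_eq_zero.1 h2 with h | h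
    · exact absurd h hfac
    · linarith
  exact_mod_cast this

end JG

/-- A family `D` of `k`-element subsets of `{1,…,n}` is a combinatorial `t`-design
(every `t`-element set lies in exactly `λ` members of `D`) if and only if `D` is a
`Φ_{[t]}`-design of the Johnson graph `J(n,k)`: it averages every Laplacian
eigenvector whose eigenvalue `μ` satisfies `0 < μ ≤ t(n+1−t)`. -/
theorem t_design_iff_johnson_graphical_design
    (n k t : ℕ) (ht1 : 1 ≤ t) (htk : t ≤ k) (hkn : 2 * k ≤ n)
    (D : Finset {S : Finset (Fin n) // S.card = k}) :
    (∃ lam : ℕ, ∀ T : Finset (Fin n), T.card = t →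
        (D.filter fun S => T ⊆ S.1).card = lam) ↔
      (∀ μ : ℝ, 0 < μ → μ ≤ (t : ℝ) * ((n : ℝ) + 1 - (t : ℝ)) →
        ∀ φ : {S : Finset (Fin n) // S.card = k} → ℝ,
          (johnsonGraph n k).lapMatrix ℝ *ᵥ φ = μ • φ →
          ∑ S ∈ D, φ S = 0) := by
  constructor
  · rintro ⟨lam, hdes⟩ μ hμ0 hμt φ heig
    exact JG.forward_dir n k t ht1 htk hkn D lam hdes μ hμ0
      (by unfold JG.lamR; exact hμt) φ heig
  · intro hyp
    exact JG.converse_dir n k t ht1 htk hkn D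
      (fun μ h0 hle φ he => hyp μ h0 (by unfold JG.lamR at hle; exact hle) φ he)
end
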